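/- arXiv:1508.00124 — 9 statements merged into one kernel-verified Lean document; each statement's English description precedes it below -/
import Mathlib

section
/- For a subset S of a separable metrizable space X, the following are equivalent: (1) S ∩ U is non-meager in X for every non-empty open subset U of X; (2) S is dense in X and S is a Baire space in the subspace topology. -/
open Set Topology

/-- In a Baire space, a nonempty open set is not meagre. -/
lemma aux_nonmeager_of_baire {Y : Type*} [TopologicalSpace Y] [BaireSpace Y] {U : Set Y}
    (hU : IsOpen U) (hne : U.Nonempty) : ¬ IsMeagre U := by
  intro hm
  have hd : Dense Uᶜ := dense_of_mem_residual hm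
  have : interior U = ∅ := by rwa [interior_eq_empty_iff_dense_compl]
  rw [hU.interior_eq] at this
  exact hne.ne_empty this

/-- If every nonempty open set is non-meagre, the space is Baire. -/
lemma aux_baire_of_nonmeager {Y : Type*} [TopologicalSpace Y]
    (h : ∀ U : Set Y, IsOpen U → U.Nonempty → ¬ IsMeagre U) : BaireSpace Y := by
  constructor
  intro f ho hd
  rw [dense_iff_inter_open]
  intro U hU hUne
  by_contra hempty
  rw [Set.not_nonempty_iff_eq_empty] at hempty
  apply h U hU hUne
  rw [isMeagre_iff_countable_union_isNowhereDense]
  refine ⟨Set.range (fun n => (f n)ᶜ), ?_, Set.countable_range _, ?_⟩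
  · rintro t ⟨n, rfl⟩
    rw [IsNowhereDense, (ho n).isClosed_compl.closure_eq,
      interior_eq_empty_iff_dense_compl, compl_compl]
    exact hd n
  · intro x hx
    rw [Set.mem_sUnion]
    by_contra hc
    push_neg at hc
    have : x ∈ U ∩ ⋂ n, f n := by
      refine ⟨hx, Set.mem_iInter.2 fun n => ?_⟩
      by_contra hn
      exact hc _ ⟨n, rfl⟩ hn
    rw [hempty] at this
    exact this

/-- The image under `Subtype.val` of a nowhere dense subset of a subspace is nowhere dense. -/
lemma aux_image_nwd {X : Type*} [TopologicalSpace X] {S : Set X} {t : Set ↥S}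
    (ht : IsNowhereDense t) : IsNowhereDense (Subtype.val '' t : Set X) := by
  rw [IsNowhereDense, Set.eq_empty_iff_forall_notMem]
  intro x hx
  set O := interior (closure (Subtype.val '' t)) with hO
  have hOopen : IsOpen O := isOpen_interior
  have hOsub : O ⊆ closure (Subtype.val '' t) := interior_subset
  have hsubS : (Subtype.val '' t : Set X) ⊆ S := by
    rintro y ⟨z, _, rfl⟩; exact z.2
  have hxS : x ∈ closure S := closure_mono hsubS (hOsub hx)
  obtain ⟨y, hyO, hyS⟩ : (O ∩ S).Nonempty := by
    rcases mem_closure_iff.1 hxS O hOopen hx with ⟨y, hy1, hy2⟩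
    exact ⟨y, hy1, hy2⟩
  have hpre : (Subtype.val ⁻¹' O : Set ↥S) ⊆ closure t := by
    intro z hz
    rw [closure_subtype]
    exact hOsub hz
  have hpreo : IsOpen (Subtype.val ⁻¹' O : Set ↥S) := hOopen.preimage continuous_subtype_val
  have : (⟨y, hyS⟩ : ↥S) ∈ interior (closure t) :=
    interior_maximal hpre hpreo hyO
  rw [ht] at this
  exact this

/-- The preimage under `Subtype.val` of a nowhere dense set is nowhere dense in a dense
subspace. -/
lemma aux_preimage_nwd {X : Type*} [TopologicalSpace X] {S : Set X} (hd : Dense S) {t : Set X}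
    (ht : IsNowhereDense t) : IsNowhereDense (Subtype.val ⁻¹' t : Set ↥S) := by
  rw [IsNowhereDense, Set.eq_empty_iff_forall_notMem]
  intro x hx
  obtain ⟨V, hVo, hVsub⟩ : ∃ V : Set X, IsOpen V ∧ x ∈ Subtype.val ⁻¹' V ∧
      (Subtype.val ⁻¹' V : Set ↥S) ⊆ closure (Subtype.val ⁻¹' t) := by
    rcases isOpen_induced_iff.1 (isOpen_interior
      (s := closure (Subtype.val ⁻¹' t : Set ↥S))) with ⟨V, hVo, hV⟩
    exact ⟨V, hVo, by rw [hV]; exact hx, by rw [hV]; exact interior_subset⟩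
  obtain ⟨hxV, hVsub⟩ := hVsub
  -- V ∩ S ⊆ closure t
  have hVS : V ∩ S ⊆ closure t := by
    rintro y ⟨hyV, hyS⟩
    have : (⟨y, hyS⟩ : ↥S) ∈ closure (Subtype.val ⁻¹' t) := hVsub hyV
    rw [closure_subtype] at this
    exact closure_mono (Set.image_preimage_subset _ _) this
  have hVclos : V ⊆ closure t := by
    calc V ⊆ closure (V ∩ S) := hd.open_subset_closure_inter hVo
    _ ⊆ closure (closure t) := closure_mono hVS
    _ = closure t := closure_closure
  have : (x : X) ∈ interior (closure t) := interior_maximal hVclos hVo hxV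
  rw [ht] at this
  exact this

theorem nowhere_meager_iff_dense_baire {X : Type*} [TopologicalSpace X]
    [TopologicalSpace.MetrizableSpace X] [TopologicalSpace.SeparableSpace X] (S : Set X) :
    (∀ U : Set X, IsOpen U → U.Nonempty → ¬ IsMeagre (S ∩ U)) ↔
      (Dense S ∧ BaireSpace S) := by
  constructor
  · intro h
    have hd : Dense S := by
      rw [dense_iff_inter_open]
      intro U hU hUne
      by_contra he
      rw [Set.not_nonempty_iff_eq_empty] at he
      apply h U hU hUne
      rw [Set.inter_comm, he]
      exact IsMeagre.empty
    refine ⟨hd, aux_baire_of_nonmeager ?_⟩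
    intro V hV hVne hm
    obtain ⟨W, hWo, rfl⟩ := isOpen_induced_iff.1 hV
    -- image of V is S ∩ W
    have himg : (Subtype.val '' (Subtype.val ⁻¹' W : Set ↥S) : Set X) = S ∩ W := by
      rw [Set.image_preimage_eq_inter_range, Subtype.range_val, Set.inter_comm]
    apply h W hWo
    · obtain ⟨x, hx⟩ := hVne
      exact ⟨x, hx⟩
    · -- meagre transfer via images
      rw [isMeagre_iff_countable_union_isNowhereDense] at hm ⊢
      obtain ⟨T, hT1, hT2, hT3⟩ := hm
      refine ⟨(fun t => Subtype.val '' t) '' T, ?_, hT2.image _, ?_⟩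
      · rintro t ⟨u, hu, rfl⟩
        exact aux_image_nwd (hT1 u hu)
      · rw [← himg]
        rintro x ⟨z, hz, rfl⟩
        rcases hT3 hz with ⟨u, hu, hzu⟩
        exact ⟨Subtype.val '' u, ⟨u, hu, rfl⟩, ⟨z, hzu, rfl⟩⟩
  · rintro ⟨hd, hb⟩ U hU hUne hm
    have hUS : (U ∩ S).Nonempty := hd.inter_open_nonempty U hU hUne
    have hVne : (Subtype.val ⁻¹' U : Set ↥S).Nonempty := by
      obtain ⟨x, hxU, hxS⟩ := hUS
      exact ⟨⟨x, hxS⟩, hxU⟩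
    have hVo : IsOpen (Subtype.val ⁻¹' U : Set ↥S) := hU.preimage continuous_subtype_val
    apply aux_nonmeager_of_baire hVo hVne
    rw [isMeagre_iff_countable_union_isNowhereDense] at hm ⊢
    obtain ⟨T, hT1, hT2, hT3⟩ := hm
    refine ⟨(fun t => Subtype.val ⁻¹' t) '' T, ?_, hT2.image _, ?_⟩
    · rintro t ⟨u, hu, rfl⟩
      exact aux_preimage_nwd hd (hT1 u hu)
    · intro x hx
      rcases hT3 ⟨x.2, hx⟩ with ⟨u, hu, hxu⟩
      exact ⟨Subtype.val ⁻¹' u, ⟨u, hu, rfl⟩, hxu⟩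
end

section
/- Let X be a crowded (non-empty, perfect) Polish space and let 𝓡 be a countable collection of relations on X, where each R ∈ 𝓡 is a meager subset of X^{n_R} for some 1 ≤ n_R < ω. Then there exists a subset F of X homeomorphic to the Cantor space 2^ω such that F is R-free for every R ∈ 𝓡, i.e., for every R ∈ 𝓡 and every injective tuple x : n_R → F, the tuple x is not in R. -/
open Set Function Metric

section Avoid
variable {X A : Type*} [TopologicalSpace X]

lemma avoid_one {N : ℕ} {C : Set (Fin N → X)} (hCc : IsClosed C)
    (hC : interior C = ∅) (V : Fin N → Set X)
    (hV : ∀ j, IsOpen (V j) ∧ (V j).Nonempty) :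
    ∃ V' : Fin N → Set X, (∀ j, IsOpen (V' j) ∧ (V' j).Nonempty ∧ V' j ⊆ V j) ∧
      ∀ y : Fin N → X, (∀ j, y j ∈ V' j) → y ∉ C := by
  classical
  have hd : Dense Cᶜ := interior_eq_empty_iff_dense_compl.mp hC
  have hopen : IsOpen (univ.pi V) := isOpen_set_pi finite_univ fun j _ => (hV j).1
  have hne : (univ.pi V).Nonempty :=
    ⟨fun j => (hV j).2.some, fun j _ => (hV j).2.some_mem⟩
  obtain ⟨x, hx1, hx2⟩ := hd.inter_open_nonempty _ hopen hne
  obtain ⟨u, hu, hu2⟩ := (isOpen_pi_iff'.mp hCc.isOpen_compl) x hx2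
  refine ⟨fun j => V j ∩ u j, fun j => ⟨((hV j).1).inter (hu j).1,
    ⟨x j, hx1 j (mem_univ j), (hu j).2⟩, inter_subset_left⟩, fun y hy => ?_⟩
  exact hu2 (fun j _ => (hy j).2)

/-- A task: avoid the set `C` on the tuple of cells indexed by `q`. -/
structure MTask (X A : Type*) where
  n : ℕ
  C : Set (Fin n → X)
  q : Fin n → A

lemma avoid_list [DecidableEq A] (L : List (MTask X A)) :
    ∀ c : A → Set X, (∀ a, IsOpen (c a) ∧ (c a).Nonempty) →
    ∃ c' : A → Set X, (∀ a, IsOpen (c' a) ∧ (c' a).Nonempty ∧ c' a ⊆ c a) ∧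
      ∀ T ∈ L, Injective T.q → IsClosed T.C → interior T.C = ∅ →
        ∀ y : Fin T.n → X, (∀ j, y j ∈ c' (T.q j)) → y ∉ T.C := by
  induction L with
  | nil =>
    intro c hc
    exact ⟨c, fun a => ⟨(hc a).1, (hc a).2, subset_rfl⟩, by simp⟩
  | cons T L ih =>
    intro c hc
    obtain ⟨c₁, hc₁, hL⟩ := ih c hc
    by_cases hT : Injective T.q ∧ IsClosed T.C ∧ interior T.C = ∅
    · obtain ⟨hinj, hcl, hint⟩ := hT
      obtain ⟨V', hV', hfree⟩ := avoid_one hcl hint (fun j => c₁ (T.q j))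
        (fun j => ⟨(hc₁ _).1, (hc₁ _).2.1⟩)
      classical
      set c' : A → Set X := fun a =>
        if h : ∃ j, T.q j = a then V' h.choose else c₁ a with hc'def
      have hkey : ∀ j, c' (T.q j) = V' j := by
        intro j
        have h : ∃ j', T.q j' = T.q j := ⟨j, rfl⟩
        have : h.choose = j := hinj h.choose_spec
        simp only [hc'def, dif_pos h, this]
      have hsub1 : ∀ a, c' a ⊆ c₁ a := by
        intro a
        by_cases h : ∃ j, T.q j = a
        · simp only [hc'def, dif_pos h]
          intro x hx
          have := (hV' h.choose).2.2 hx
          rwa [h.choose_spec] at this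
        · simp only [hc'def, dif_neg h]
          exact subset_rfl
      refine ⟨c', fun a => ?_, fun T' hT' => ?_⟩
      · by_cases h : ∃ j, T.q j = a
        · refine ⟨?_, ?_, (hsub1 a).trans (hc₁ a).2.2⟩ <;>
            simp only [hc'def, dif_pos h]
          · exact (hV' h.choose).1
          · exact (hV' h.choose).2.1
        · simp only [hc'def, dif_neg h]
          exact ⟨(hc₁ a).1, (hc₁ a).2.1, (hc₁ a).2.2⟩
      · rcases List.mem_cons.mp hT' with rfl | hmem
        · intro _ _ _ y hy
          exact hfree y fun j => by rw [← hkey j]; exact hy j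
        · intro h1 h2 h3 y hy
          exact hL T' hmem h1 h2 h3 y fun j => hsub1 _ (hy j)
    · refine ⟨c₁, hc₁, fun T' hT' => ?_⟩
      rcases List.mem_cons.mp hT' with rfl | hmem
      · intro h1 h2 h3
        exact absurd ⟨h1, h2, h3⟩ hT
      · exact hL T' hmem

end Avoid

section Split
variable {X : Type*} [MetricSpace X]

/-- In a perfect metric space, any nonempty open set contains two small open
subsets with disjoint... etc. -/
lemma split_lemma (hX : Perfect (univ : Set X)) {U : Set X} (hU : IsOpen U)
    (hUne : U.Nonempty) {ε : ℝ} (hε : 0 < ε) :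
    ∃ V W : Set X, IsOpen V ∧ IsOpen W ∧ V.Nonempty ∧ W.Nonempty ∧
      closure V ⊆ U ∧ closure W ⊆ U ∧ Disjoint V W ∧
      (∀ p ∈ V, ∀ q ∈ V, dist p q ≤ ε) ∧ (∀ p ∈ W, ∀ q ∈ W, dist p q ≤ ε) := by
  obtain ⟨x, hx⟩ := hUne
  obtain ⟨y, ⟨hyU, _⟩, hyx⟩ :=
    (preperfect_iff_nhds.mp hX.acc) x (mem_univ x) U (hU.mem_nhds hx)
  obtain ⟨δ1, hδ1, hball1⟩ := Metric.isOpen_iff.mp hU x hx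
  obtain ⟨δ2, hδ2, hball2⟩ := Metric.isOpen_iff.mp hU y hyU
  have hd : 0 < dist x y := dist_pos.mpr (Ne.symm hyx)
  set r : ℝ := min (min (δ1/2) (δ2/2)) (min (ε/2) (dist x y / 3)) with hrdef
  have hr : 0 < r := by positivity
  have hr1 : r < δ1 := by
    have : r ≤ δ1/2 := le_trans (min_le_left _ _) (min_le_left _ _)
    linarith
  have hr2 : r < δ2 := by
    have : r ≤ δ2/2 := le_trans (min_le_left _ _) (min_le_right _ _)
    linarith
  have hrε : r ≤ ε/2 := le_trans (min_le_right _ _) (min_le_left _ _)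
  have hrd : r ≤ dist x y / 3 := le_trans (min_le_right _ _) (min_le_right _ _)
  refine ⟨ball x r, ball y r, isOpen_ball, isOpen_ball,
    ⟨x, mem_ball_self hr⟩, ⟨y, mem_ball_self hr⟩, ?_, ?_, ?_, ?_, ?_⟩
  · exact (closure_ball_subset_closedBall.trans
      (closedBall_subset_ball hr1)).trans hball1
  · exact (closure_ball_subset_closedBall.trans
      (closedBall_subset_ball hr2)).trans hball2
  · rw [Set.disjoint_left]
    intro z hz1 hz2
    rw [mem_ball] at hz1 hz2
    have := dist_triangle x z y
    rw [dist_comm x z] at this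
    linarith
  · intro p hp q hq
    rw [mem_ball] at hp hq
    have := dist_triangle p x q
    rw [dist_comm x q] at this
    linarith
  · intro p hp q hq
    rw [mem_ball] at hp hq
    have := dist_triangle p y q
    rw [dist_comm y q] at this
    linarith

lemma dist_le_closure {s : Set X} {b : ℝ}
    (h : ∀ p ∈ s, ∀ q ∈ s, dist p q ≤ b) :
    ∀ p ∈ closure s, ∀ q ∈ closure s, dist p q ≤ b := by
  have hsub : closure s ×ˢ closure s ⊆ {z : X × X | dist z.1 z.2 ≤ b} := by
    rw [← closure_prod_eq]
    exact closure_minimal (fun z hz => h _ hz.1 _ hz.2)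
      (isClosed_le (continuous_fst.dist continuous_snd) continuous_const)
  intro p hp q hq
  exact hsub (Set.mk_mem_prod hp hq)

end Split

/-- Dependent recursive choice. -/
lemma dep_rec_choice {α : ℕ → Sort*} (P : ∀ m, α m → Prop)
    (Rel : ∀ m, α m → α (m+1) → Prop)
    (a0 : α 0) (h0 : P 0 a0)
    (ih : ∀ m a, P m a → ∃ b, P (m+1) b ∧ Rel m a b) :
    ∃ c : ∀ m, α m, (∀ m, P m (c m)) ∧ ∀ m, Rel m (c m) (c (m+1)) := by
  let f : ∀ m, {a : α m // P m a} := fun m => Nat.rec ⟨a0, h0⟩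
    (fun m prev => ⟨(ih m prev.1 prev.2).choose, (ih m prev.1 prev.2).choose_spec.1⟩) m
  exact ⟨fun m => (f m).1, fun m => (f m).2, fun m => (ih m (f m).1 (f m).2).choose_spec.2⟩

section Step
variable {X : Type*} [MetricSpace X]

lemma step_core (hX : Perfect (univ : Set X)) (m : ℕ)
    {N : ℕ} (D : Set (Fin N → X)) (hD1 : IsClosed D) (hD2 : interior D = ∅)
    (c : (Fin m → Bool) → Set X)
    (hc : ∀ s, IsOpen (c s) ∧ (c s).Nonempty)
    (hdisj : ∀ s s', s ≠ s' → Disjoint (c s) (c s')) :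
    ∃ c' : (Fin (m+1) → Bool) → Set X,
      ((∀ t, IsOpen (c' t) ∧ (c' t).Nonempty) ∧
       (∀ t t', t ≠ t' → Disjoint (c' t) (c' t'))) ∧
      (∀ t, closure (c' t) ⊆ c (Fin.init t)) ∧
      (∀ t, ∀ p ∈ c' t, ∀ q ∈ c' t, dist p q ≤ (1/2 : ℝ)^(m+1)) ∧
      (∀ q : Fin N → (Fin (m+1) → Bool), Injective q →
        ∀ y : Fin N → X, (∀ j, y j ∈ c' (q j)) → y ∉ D) := by
  classical
  have hε : (0:ℝ) < (1/2)^(m+1) := by positivity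
  choose V W hVo hWo hVne hWne hVcl hWcl hVW hVd hWd using
    fun s : Fin m → Bool => split_lemma hX (hc s).1 (hc s).2 hε
  set c0 : (Fin (m+1) → Bool) → Set X := fun t =>
    if t (Fin.last m) then V (Fin.init t) else W (Fin.init t) with hc0
  have hc0open : ∀ t, IsOpen (c0 t) ∧ (c0 t).Nonempty := by
    intro t
    cases h : t (Fin.last m) <;> simp only [hc0, h, if_true, if_false,
      Bool.false_eq_true, cond_false, cond_true]
    · exact ⟨hWo _, hWne _⟩
    · exact ⟨hVo _, hVne _⟩
  have hc0cl : ∀ t, closure (c0 t) ⊆ c (Fin.init t) := by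
    intro t
    cases h : t (Fin.last m) <;> simp only [hc0, h, if_true, if_false,
      Bool.false_eq_true]
    · exact hWcl _
    · exact hVcl _
  have hc0d : ∀ t, ∀ p ∈ c0 t, ∀ q ∈ c0 t, dist p q ≤ (1/2 : ℝ)^(m+1) := by
    intro t
    cases h : t (Fin.last m) <;> simp only [hc0, h, if_true, if_false,
      Bool.false_eq_true]
    · exact hWd _
    · exact hVd _
  have hc0disj : ∀ t t', t ≠ t' → Disjoint (c0 t) (c0 t') := by
    intro t t' hne
    by_cases hinit : Fin.init t = Fin.init t'
    · have hlast : t (Fin.last m) ≠ t' (Fin.last m) := by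
        intro hl
        apply hne
        rw [← Fin.snoc_init_self t, ← Fin.snoc_init_self t', hinit, hl]
      cases h : t (Fin.last m) <;> cases h' : t' (Fin.last m) <;>
        simp only [hc0, h, h', if_true, if_false, Bool.false_eq_true] <;>
        first
          | (exact absurd (h.trans h'.symm) hlast)
          | (rw [hinit]; exact (hVW _).symm)
          | (rw [hinit]; exact hVW _)
    · have h1 : c0 t ⊆ c (Fin.init t) := subset_closure.trans (hc0cl t)
      have h2 : c0 t' ⊆ c (Fin.init t') := subset_closure.trans (hc0cl t')
      exact (hdisj _ _ hinit).mono h1 h2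
  -- now handle the tasks
  set L : List (MTask X (Fin (m+1) → Bool)) :=
    (Finset.univ : Finset (Fin N → (Fin (m+1) → Bool))).toList.map
      (fun q => MTask.mk N D q) with hL
  obtain ⟨c', hc', hLfree⟩ := avoid_list L c0 hc0open
  refine ⟨c', ⟨fun t => ⟨(hc' t).1, (hc' t).2.1⟩, fun t t' hne =>
      (hc0disj t t' hne).mono (hc' t).2.2 (hc' t').2.2⟩,
    fun t => (closure_mono (hc' t).2.2).trans (hc0cl t),
    fun t p hp q hq => hc0d t p ((hc' t).2.2 hp) q ((hc' t).2.2 hq),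
    fun q hq y hy => ?_⟩
  have hmem : MTask.mk N D q ∈ L := by
    rw [hL]
    exact List.mem_map.mpr ⟨q, Finset.mem_toList.mpr (Finset.mem_univ q), rfl⟩
  exact hLfree _ hmem hq hD1 hD2 y hy

lemma step_opt {ι : Type*} (hX : Perfect (univ : Set X)) (n : ι → ℕ)
    (D : ∀ i, ℕ → Set (Fin (n i) → X))
    (hD : ∀ i k, IsClosed (D i k) ∧ interior (D i k) = ∅)
    (m : ℕ) (o : Option (ι × ℕ))
    (c : (Fin m → Bool) → Set X)
    (hc : ∀ s, IsOpen (c s) ∧ (c s).Nonempty)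
    (hdisj : ∀ s s', s ≠ s' → Disjoint (c s) (c s')) :
    ∃ c' : (Fin (m+1) → Bool) → Set X,
      ((∀ t, IsOpen (c' t) ∧ (c' t).Nonempty) ∧
       (∀ t t', t ≠ t' → Disjoint (c' t) (c' t'))) ∧
      (∀ t, closure (c' t) ⊆ c (Fin.init t)) ∧
      (∀ t, ∀ p ∈ c' t, ∀ q ∈ c' t, dist p q ≤ (1/2 : ℝ)^(m+1)) ∧
      (∀ i k, o = some (i, k) → ∀ q : Fin (n i) → (Fin (m+1) → Bool), Injective q →
        ∀ y : Fin (n i) → X, (∀ j, y j ∈ c' (q j)) → y ∉ D i k) := by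
  rcases o with _ | ⟨i, k⟩
  · obtain ⟨c', h1, h2, h3, _⟩ := step_core hX m (∅ : Set (Fin 1 → X))
      isClosed_empty interior_empty c hc hdisj
    exact ⟨c', h1, h2, h3, fun i k h => by simp at h⟩
  · obtain ⟨c', h1, h2, h3, h4⟩ := step_core hX m (D i k)
      (hD i k).1 (hD i k).2 c hc hdisj
    refine ⟨c', h1, h2, h3, fun i' k' h => ?_⟩
    obtain ⟨rfl, rfl⟩ : i = i' ∧ k = k' := by simpa using h
    exact h4

end Step




theorem kuratowski_free_cantor {X : Type*} [TopologicalSpace X] [PolishSpace X] [Nonempty X]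
    (hX : Perfect (Set.univ : Set X))
    {ι : Type*} [Countable ι] (n : ι → ℕ) (hn : ∀ i, 1 ≤ n i)
    (R : ∀ i, Set (Fin (n i) → X)) (hR : ∀ i, IsMeagre (R i)) :
    ∃ F : Set X, Nonempty (F ≃ₜ (ℕ → Bool)) ∧
      ∀ i, ∀ x : Fin (n i) → X, Function.Injective x → (∀ k, x k ∈ F) → x ∉ R i := by
  letI := TopologicalSpace.upgradeIsCompletelyMetrizable X
  classical
  -- decompose each relation into closed nowhere dense pieces
  have hdecomp : ∀ i, ∃ D : ℕ → Set (Fin (n i) → X),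
      (∀ k, IsClosed (D k) ∧ interior (D k) = ∅) ∧ R i ⊆ ⋃ k, D k := by
    intro i
    obtain ⟨S, hS1, hS2, hS3⟩ := isMeagre_iff_countable_union_isNowhereDense.mp (hR i)
    obtain ⟨f, hf⟩ := (hS2.insert ∅).exists_eq_range (insert_nonempty _ _)
    refine ⟨fun k => closure (f k), fun k => ⟨isClosed_closure, ?_⟩, ?_⟩
    · have hmem : f k ∈ insert ∅ S := by rw [hf]; exact mem_range_self k
      rcases mem_insert_iff.mp hmem with h | h
      · show interior (closure (f k)) = ∅
        rw [h, closure_empty, interior_empty]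
      · show interior (closure (f k)) = ∅
        have := hS1 _ h
        rwa [IsNowhereDense] at this
    · intro x hx
      obtain ⟨t, htS, hxt⟩ := hS3 hx
      have hmem : t ∈ insert ∅ S := mem_insert_of_mem _ htS
      rw [hf] at hmem
      obtain ⟨k, hk⟩ := hmem
      refine mem_iUnion.mpr ⟨k, ?_⟩
      show x ∈ closure (f k)
      rw [hk]
      exact subset_closure hxt
  choose D hD hRD using hdecomp
  -- enumeration of tasks hitting everything infinitely often
  obtain ⟨f, hf⟩ := exists_surjective_nat (Option (ι × ℕ))
  set e : ℕ → Option (ι × ℕ) := fun m => f (Nat.unpair m).1 with he_def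
  have he : ∀ (a : Option (ι × ℕ)) (M : ℕ), ∃ m, M ≤ m ∧ e m = a := by
    intro a M
    obtain ⟨k, hk⟩ := hf a
    exact ⟨Nat.pair k M, Nat.right_le_pair k M, by simp [he_def, Nat.unpair_pair, hk]⟩
  -- build the scheme by dependent recursive choice
  obtain ⟨c, hQ, hRel⟩ := dep_rec_choice
    (P := fun m (c : (Fin m → Bool) → Set X) =>
      (∀ s, IsOpen (c s) ∧ (c s).Nonempty) ∧ (∀ s s', s ≠ s' → Disjoint (c s) (c s')))
    (Rel := fun m c c' =>
      (∀ t, closure (c' t) ⊆ c (Fin.init t)) ∧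
      (∀ t, ∀ p ∈ c' t, ∀ q ∈ c' t, dist p q ≤ (1/2:ℝ)^(m+1)) ∧
      (∀ i k, e m = some (i,k) → ∀ q : Fin (n i) → (Fin (m+1) → Bool), Injective q →
        ∀ y : Fin (n i) → X, (∀ j, y j ∈ c' (q j)) → y ∉ D i k))
    (fun _ => univ)
    (⟨fun _ => ⟨isOpen_univ, univ_nonempty⟩,
      fun s s' hss => absurd (funext fun j => Fin.elim0 j) hss⟩)
    (fun m c hc => by
      obtain ⟨c', h1, h2, h3, h4⟩ := step_opt hX n D hD m (e m) c hc.1 hc.2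
      exact ⟨c', h1, h2, h3, h4⟩)
  -- restrictions
  set res : (ℕ → Bool) → ∀ m, Fin m → Bool := fun σ m j => σ j with hres
  have hresinit : ∀ σ m, Fin.init (res σ (m+1)) = res σ m := by
    intro σ m
    funext j
    simp [hres, Fin.init]
  have hmono : ∀ σ m, c (m+1) (res σ (m+1)) ⊆ c m (res σ m) := by
    intro σ m
    have h := (hRel m).1 (res σ (m+1))
    rw [hresinit] at h
    exact subset_closure.trans h
  have hmono' : ∀ σ m m', m ≤ m' → c m' (res σ m') ⊆ c m (res σ m) := by
    intro σ m m' h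
    induction h with
    | refl => exact subset_rfl
    | @step k h ih => exact (hmono σ k).trans ih
  -- points and limits
  have hpt : ∀ m (s : Fin m → Bool), ∃ x, x ∈ c m s := fun m s => ((hQ m).1 s).2
  choose pt hptm using hpt
  set u : (ℕ → Bool) → ℕ → X := fun σ m => pt m (res σ m) with hu
  have humem : ∀ σ m, u σ m ∈ c m (res σ m) := fun σ m => hptm m (res σ m)
  have humem' : ∀ σ m m', m ≤ m' → u σ m' ∈ c m (res σ m) :=
    fun σ m m' h => hmono' σ m m' h (humem σ m')
  have hcauchy : ∀ σ, CauchySeq (u σ) := by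
    intro σ
    rw [Metric.cauchySeq_iff']
    intro ε hε
    obtain ⟨M, hM⟩ := exists_pow_lt_of_lt_one hε (by norm_num : (1/2:ℝ) < 1)
    refine ⟨M+1, fun m hm => ?_⟩
    have h1 := humem' σ (M+1) m hm
    have h2 := humem σ (M+1)
    calc dist (u σ m) (u σ (M+1)) ≤ (1/2:ℝ)^(M+1) := (hRel M).2.1 _ _ h1 _ h2
      _ ≤ (1/2:ℝ)^M :=
        pow_le_pow_of_le_one (by norm_num) (by norm_num) (Nat.le_succ M)
      _ < ε := hM
  have hlim : ∀ σ, ∃ y, Filter.Tendsto (u σ) Filter.atTop (nhds y) :=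
    fun σ => cauchySeq_tendsto_of_complete (hcauchy σ)
  choose g hg using hlim
  have hgmem : ∀ σ m, g σ ∈ c m (res σ m) := by
    intro σ m
    have h1 : g σ ∈ closure (c (m+1) (res σ (m+1))) := by
      apply mem_closure_of_tendsto (hg σ)
      filter_upwards [Filter.eventually_ge_atTop (m+1)] with l hl
      exact humem' σ (m+1) l hl
    have h := (hRel m).1 (res σ (m+1))
    rw [hresinit] at h
    exact h h1
  have hginj : Injective g := by
    intro σ σ' h
    by_contra hne
    obtain ⟨l, hl⟩ := Function.ne_iff.mp hne
    have hres_ne : res σ (l+1) ≠ res σ' (l+1) := by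
      intro hr
      exact hl (congrFun hr ⟨l, Nat.lt_succ_self l⟩)
    have hdisj := (hQ (l+1)).2 _ _ hres_ne
    have hmem2 := hgmem σ' (l+1)
    rw [← h] at hmem2
    exact (Set.disjoint_left.mp hdisj (hgmem σ (l+1))) hmem2
  have hgcont : Continuous g := by
    rw [continuous_iff_continuousAt]
    intro σ
    rw [ContinuousAt, Metric.tendsto_nhds]
    intro ε hε
    obtain ⟨M, hM⟩ := exists_pow_lt_of_lt_one hε (by norm_num : (1/2:ℝ) < 1)
    have hMlt : (1/2:ℝ)^(M+1) < ε :=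
      lt_of_le_of_lt (pow_le_pow_of_le_one (by norm_num) (by norm_num) (Nat.le_succ M)) hM
    have hVopen : IsOpen {σ' : ℕ → Bool | ∀ j : Fin (M+1), σ' j = σ j} := by
      have heq : {σ' : ℕ → Bool | ∀ j : Fin (M+1), σ' j = σ j} =
          ⋂ j : Fin (M+1), (fun σ' : ℕ → Bool => σ' j) ⁻¹' {σ j} := by
        ext σ'
        simp [Set.mem_iInter]
      rw [heq]
      exact isOpen_iInter_of_finite fun j =>
        (continuous_apply (j : ℕ)).isOpen_preimage _ (isOpen_discrete _)
    filter_upwards [hVopen.mem_nhds (fun j => rfl)] with σ' hσ'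
    have hreq : res σ' (M+1) = res σ (M+1) := funext fun j => hσ' j
    have h1 : g σ' ∈ closure (c (M+1) (res σ (M+1))) := by
      rw [← hreq]
      exact subset_closure (hgmem σ' (M+1))
    have h2 : g σ ∈ closure (c (M+1) (res σ (M+1))) := subset_closure (hgmem σ (M+1))
    have hb := dist_le_closure ((hRel M).2.1 (res σ (M+1))) _ h1 _ h2
    exact lt_of_le_of_lt hb hMlt
  refine ⟨range g, ?_, ?_⟩
  · exact ⟨(Continuous.homeoOfEquivCompactToT2 (f := Equiv.ofInjective g hginj)
      (hgcont.subtype_mk _)).symm⟩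
  · intro i x hxinj hxF hxR
    choose σ hσ using fun k => mem_range.mp (hxF k)
    obtain ⟨k0, hk0⟩ := mem_iUnion.mp (hRD i hxR)
    have hσinj : Injective σ := fun a b hab => hxinj (by rw [← hσ a, ← hσ b, hab])
    have hpair : ∀ p : Fin (n i) × Fin (n i), ∃ l, p.1 ≠ p.2 → σ p.1 l ≠ σ p.2 l := by
      intro p
      by_cases hp : p.1 = p.2
      · exact ⟨0, fun h => absurd hp h⟩
      · obtain ⟨l, hl⟩ := Function.ne_iff.mp (fun hs : σ p.1 = σ p.2 => hp (hσinj hs))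
        exact ⟨l, fun _ => hl⟩
    choose Lv hLv using hpair
    set M0 := (Finset.univ.sup Lv) + 1 with hM0
    obtain ⟨m, hmM, hem⟩ := he (some (i, k0)) M0
    have hqinj : Injective (fun j => res (σ j) (m+1)) := by
      intro a b hab
      by_contra hne
      have hl := hLv (a, b) hne
      have h1 : Lv (a,b) ≤ Finset.univ.sup Lv := Finset.le_sup (Finset.mem_univ _)
      have h2 : Lv (a,b) < m+1 := by omega
      exact hl (congrFun hab ⟨Lv (a,b), h2⟩)
    exact (hRel m).2.2 i k0 hem _ hqinj x
      (fun j => by rw [← hσ j]; exact hgmem (σ j) (m+1)) hk0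
end

section
/- For a subset S of 2^I, where I is a countably infinite set, S is meager if and only if there exist a finite-to-one function φ : I → ω and z ∈ 2^I such that for every x ∈ S, the set {j ∈ ω : x agrees with z on φ⁻¹(j)} is finite. -/
open Set

-- cylinder lemma
lemma cyl_isOpen {I : Type*} (J : Finset I) (w : I → Bool) :
    IsOpen {x : I → Bool | ∀ i ∈ J, x i = w i} := by
  have : {x : I → Bool | ∀ i ∈ J, x i = w i} = ⋂ i ∈ J, {x : I → Bool | x i = w i} := by
    ext x; simp
  rw [this]
  refine isOpen_biInter_finset fun i _ => ?_
  have : {x : I → Bool | x i = w i} = (fun x : I → Bool => x i) ⁻¹' {w i} := rfl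
  rw [this]
  exact (isOpen_discrete {w i}).preimage (continuous_apply i)

lemma cylinder_subset {I : Type*} {U : Set (I → Bool)} (hU : IsOpen U) {x : I → Bool}
    (hx : x ∈ U) : ∃ J : Finset I, {y : I → Bool | ∀ i ∈ J, y i = x i} ⊆ U := by
  obtain ⟨J, u, hu, hsub⟩ := isOpen_pi_iff.mp hU x hx
  refine ⟨J, fun y hy => hsub fun i hi => ?_⟩
  rw [hy i hi]; exact (hu i hi).2

lemma avoid_cyl {I : Type*} [DecidableEq I] {F : Set (I → Bool)} (hFc : IsClosed F)
    (hFi : interior F = ∅) (J : Finset I) (w : I → Bool) :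
    ∃ y : I → Bool, (∀ i ∈ J, y i = w i) ∧
      ∃ J' : Finset I, J ⊆ J' ∧ {x : I → Bool | ∀ i ∈ J', x i = y i} ⊆ Fᶜ := by
  have hdense : Dense Fᶜ := interior_eq_empty_iff_dense_compl.mp hFi
  have hne : ({x : I → Bool | ∀ i ∈ J, x i = w i}).Nonempty := ⟨w, fun i _ => rfl⟩
  obtain ⟨y, hy1, hy2⟩ := hdense.inter_open_nonempty _ (cyl_isOpen J w) hne
  obtain ⟨J', hJ'⟩ := cylinder_subset (hFc.isOpen_compl) hy2
  refine ⟨y, hy1, J ∪ J', Finset.subset_union_left, fun x hx => hJ' fun i hi => ?_⟩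
  exact hx i (Finset.mem_union_right _ hi)

lemma key_ind {I : Type*} [DecidableEq I] (e : I ≃ ℕ) {F : Set (I → Bool)}
    (hFc : IsClosed F) (hFi : interior F = ∅) (m : ℕ) (L : List (I → Bool)) :
    ∀ (k : ℕ) (w : I → Bool), m ≤ k →
    ∃ k', k ≤ k' ∧ ∃ w' : I → Bool, (∀ i, m ≤ e i → e i < k → w' i = w i) ∧
      ∀ σ ∈ L, ∀ x : I → Bool, (∀ i, e i < m → x i = σ i) →
        (∀ i, m ≤ e i → e i < k' → x i = w' i) → x ∉ F := by
  induction L with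
  | nil =>
      intro k w hmk
      exact ⟨k, le_refl k, w, fun i _ _ => rfl, by simp⟩
  | cons σ L ih =>
      intro k w hmk
      set w₁ : I → Bool := fun i => if e i < m then σ i else w i with hw₁
      set J : Finset I := (Finset.range k).image e.symm with hJ
      have hmemJ : ∀ i : I, i ∈ J ↔ e i < k := by
        intro i
        simp only [hJ, Finset.mem_image, Finset.mem_range]
        constructor
        · rintro ⟨a, ha, rfl⟩; simpa using ha
        · intro h; exact ⟨e i, h, by simp⟩
      obtain ⟨y, hyJ, J', hJJ', hJ'F⟩ := avoid_cyl hFc hFi J w₁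
      set k₁ : ℕ := max k ((J'.sup e) + 1) with hk₁
      have hkk₁ : k ≤ k₁ := le_max_left _ _
      have hJ'k₁ : ∀ i ∈ J', e i < k₁ := by
        intro i hi
        calc e i ≤ J'.sup e := Finset.le_sup hi
        _ < (J'.sup e) + 1 := Nat.lt_succ_self _
        _ ≤ k₁ := le_max_right _ _
      obtain ⟨k', hk₁k', w', hw'y, hw'L⟩ := ih k₁ y (hmk.trans hkk₁)
      refine ⟨k', hkk₁.trans hk₁k', w', ?_, ?_⟩
      · intro i hmi hik
        have hiJ : i ∈ J := (hmemJ i).mpr hik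
        have : w' i = y i := hw'y i hmi (lt_of_lt_of_le hik hkk₁)
        rw [this, hyJ i hiJ, hw₁]
        simp [Nat.not_lt_of_le hmi]
      · intro τ hτ x hxσ hxw'
        rcases List.mem_cons.mp hτ with h | h
        · subst h
          intro hxF
          refine hJ'F (fun i hi => ?_) hxF
          by_cases him : e i < m
          · have hiJ : i ∈ J := (hmemJ i).mpr (lt_of_lt_of_le him hmk)
            rw [hxσ i him, hyJ i hiJ]
            simp [hw₁, him]
          · push_neg at him
            have hik₁ : e i < k₁ := hJ'k₁ i hi
            rw [hxw' i him (lt_of_lt_of_le hik₁ hk₁k'), hw'y i him hik₁]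
        · exact hw'L τ h x hxσ hxw'

lemma stage {I : Type*} [DecidableEq I] (e : I ≃ ℕ) {F : Set (I → Bool)}
    (hFc : IsClosed F) (hFi : interior F = ∅) (m : ℕ) :
    ∃ k', m < k' ∧ ∃ z : I → Bool,
      ∀ x : I → Bool, (∀ i, m ≤ e i → e i < k' → x i = z i) → x ∉ F := by
  classical
  set L : List (I → Bool) :=
    (Finset.univ : Finset (Fin m → Bool)).toList.map
      (fun f i => if h : e i < m then f ⟨e i, h⟩ else false) with hL
  obtain ⟨k', hk', w', _, hw'⟩ := key_ind e hFc hFi m L (m + 1) (fun _ => false)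
    (Nat.le_succ m)
  refine ⟨k', lt_of_lt_of_le (Nat.lt_succ_self m) hk', w', fun x hx => ?_⟩
  set σ : I → Bool := fun i => if h : e i < m then x i else false with hσ
  have hσL : σ ∈ L := by
    rw [hL]
    apply List.mem_map.mpr
    refine ⟨fun j => x (e.symm j), by simp [Finset.mem_toList], ?_⟩
    funext i
    by_cases h : e i < m <;> simp [hσ, h]
  exact hw' σ hσL x (fun i h => by simp [hσ, h]) hx

lemma interior_union_empty {X : Type*} [TopologicalSpace X] {s t : Set X}
    (hs : IsClosed s) (h1 : interior s = ∅) (h2 : interior t = ∅) :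
    interior (s ∪ t) = ∅ := by
  rw [interior_eq_empty_iff_dense_compl] at h1 h2 ⊢
  rw [compl_union]
  exact h1.inter_of_isOpen_left h2 hs.isOpen_compl

lemma forward_dir {I : Type} [Countable I] [Infinite I] (e : I ≃ ℕ)
    (S : Set (I → Bool)) (h : IsMeagre S) :
    ∃ φ : I → ℕ, (∀ j : ℕ, (φ ⁻¹' {j}).Finite) ∧ ∃ z : I → Bool,
      ∀ x ∈ S, {j : ℕ | ∀ i : I, φ i = j → x i = z i}.Finite := by
  classical
  obtain ⟨𝒮, h𝒮nd, h𝒮c, h𝒮sub⟩ := isMeagre_iff_countable_union_isNowhereDense.mp h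
  obtain ⟨f, hf⟩ := (h𝒮c.insert ∅).exists_eq_range (insert_nonempty _ _)
  have hfnd : ∀ n, IsNowhereDense (f n) := by
    intro n
    have : f n ∈ insert ∅ 𝒮 := hf ▸ mem_range_self n
    rcases this with h' | h'
    · rw [h']; exact isNowhereDense_empty
    · exact h𝒮nd _ h'
  have hSsub : S ⊆ ⋃ n, f n := by
    intro x hx
    obtain ⟨t, ht, hxt⟩ := h𝒮sub hx
    have : t ∈ range f := hf ▸ mem_insert_of_mem _ ht
    obtain ⟨n, rfl⟩ := this
    exact mem_iUnion.mpr ⟨n, hxt⟩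
  set G : ℕ → Set (I → Bool) := fun n => ⋃ k ∈ Finset.range (n + 1), closure (f k)
    with hG
  have hGc : ∀ n, IsClosed (G n) := fun n =>
    (Finset.range (n + 1)).finite_toSet.isClosed_biUnion fun k _ => isClosed_closure
  have hGi : ∀ n, interior (G n) = ∅ := by
    intro n
    induction n with
    | zero =>
        have : G 0 = closure (f 0) := by simp [hG]
        rw [this]
        exact hfnd 0
    | succ n ih =>
        have : G (n + 1) = G n ∪ closure (f (n + 1)) := by
          simp only [hG]
          rw [Finset.range_add_one, Finset.set_biUnion_insert, union_comm]
        rw [this]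
        exact interior_union_empty (hGc n) ih (hfnd (n + 1))
  have hGmono : ∀ {n j : ℕ}, n ≤ j → G n ⊆ G j := by
    intro n j hnj
    apply iUnion₂_mono'
    intro k hk
    exact ⟨k, by simp only [Finset.mem_range] at hk ⊢; omega, subset_rfl⟩
  have H : ∀ j m : ℕ, ∃ k', m < k' ∧ ∃ z : I → Bool,
      ∀ x : I → Bool, (∀ i, m ≤ e i → e i < k' → x i = z i) → x ∉ G j :=
    fun j m => stage e (hGc j) (hGi j) m
  choose K hK Z hZ using H
  set M : ℕ → ℕ := fun n => Nat.rec 0 (fun j mj => K j mj) n with hM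
  have hMsucc : ∀ j, M (j + 1) = K j (M j) := fun j => rfl
  have hMstrict : StrictMono M := strictMono_nat_of_lt_succ fun j => by
    rw [hMsucc]; exact hK j (M j)
  have hMex : ∀ i : I, ∃ j, e i < M (j + 1) := fun i =>
    ⟨e i, lt_of_lt_of_le (Nat.lt_succ_self _) (hMstrict.le_apply)⟩
  set φ : I → ℕ := fun i => Nat.find (hMex i) with hφ
  have hφspec : ∀ i, e i < M (φ i + 1) := fun i => Nat.find_spec (hMex i)
  have hφuniq : ∀ (i : I) (j : ℕ), M j ≤ e i → e i < M (j + 1) → φ i = j := by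
    intro i j h1 h2
    have hle : φ i ≤ j := Nat.find_le h2
    rcases lt_or_eq_of_le hle with hlt | heq
    · exfalso
      have h3 : φ i + 1 ≤ j := hlt
      have h4 : M (φ i + 1) ≤ M j := hMstrict.monotone h3
      have h5 := hφspec i
      omega
    · exact heq
  set z : I → Bool := fun i => Z (φ i) (M (φ i)) i with hz
  refine ⟨φ, ?_, z, ?_⟩
  · intro j
    apply Set.Finite.subset ((finite_Iio (M (j + 1))).preimage e.injective.injOn)
    intro i hi
    simp only [mem_preimage, mem_singleton_iff] at hi
    simp only [mem_preimage, mem_Iio]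
    rw [← hi]
    exact hφspec i
  · intro x hx
    obtain ⟨n, hn⟩ := mem_iUnion.mp (hSsub hx)
    apply Set.Finite.subset (finite_Iio n)
    intro j hj
    simp only [mem_setOf_eq] at hj
    simp only [mem_Iio]
    by_contra hnj
    push_neg at hnj
    have hxGn : x ∈ G n := by
      simp only [hG]
      exact mem_biUnion (Finset.self_mem_range_succ n) (subset_closure hn)
    have hxGj : x ∈ G j := hGmono hnj hxGn
    refine hZ j (M j) x (fun i h1 h2 => ?_) hxGj
    rw [← hMsucc] at h2
    have hij : φ i = j := hφuniq i j h1 h2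
    have := hj i hij
    rw [this, hz]
    simp [hij]

lemma backward_dir {I : Type} (S : Set (I → Bool)) (φ : I → ℕ)
    (hφ : ∀ j : ℕ, (φ ⁻¹' {j}).Finite) (z : I → Bool)
    (hS : ∀ x ∈ S, {j : ℕ | ∀ i : I, φ i = j → x i = z i}.Finite) :
    IsMeagre S := by
  classical
  set C : ℕ → Set (I → Bool) :=
    fun n => {x | ∀ j, n ≤ j → ∃ i, φ i = j ∧ x i ≠ z i} with hC
  have hsub : S ⊆ ⋃ n, C n := by
    intro x hx
    obtain ⟨n, hn⟩ := (hS x hx).bddAbove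
    refine mem_iUnion.mpr ⟨n + 1, fun j hj => ?_⟩
    have hnotin : j ∉ {j : ℕ | ∀ i : I, φ i = j → x i = z i} := by
      intro hmem
      have := hn hmem
      omega
    simp only [mem_setOf_eq] at hnotin
    push_neg at hnotin
    exact hnotin
  have hCc : ∀ n, IsClosed (C n) := by
    intro n
    have : C n = ⋂ j, ⋂ (_ : n ≤ j), {x : I → Bool | ∃ i, φ i = j ∧ x i ≠ z i} := by
      ext x; simp [hC]
    rw [this]
    refine isClosed_iInter fun j => isClosed_iInter fun _ => ?_
    have : {x : I → Bool | ∃ i, φ i = j ∧ x i ≠ z i} =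
        ⋃ i ∈ φ ⁻¹' {j}, {x : I → Bool | x i ≠ z i} := by
      ext x
      simp only [mem_setOf_eq, mem_iUnion, mem_preimage, mem_singleton_iff, exists_prop]
    rw [this]
    refine (hφ j).isClosed_biUnion fun i _ => ?_
    have : {x : I → Bool | x i ≠ z i} = (fun x : I → Bool => x i) ⁻¹' {z i}ᶜ := rfl
    rw [this]
    exact (isClosed_discrete _).preimage (continuous_apply i)
  have hCi : ∀ n, interior (C n) = ∅ := by
    intro n
    rw [eq_empty_iff_forall_notMem]
    intro x hx
    obtain ⟨J, hJ⟩ := cylinder_subset isOpen_interior hx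
    set j : ℕ := max n (J.sup φ + 1) with hj
    have hjn : n ≤ j := le_max_left _ _
    have hjJ : ∀ i ∈ J, φ i ≠ j := by
      intro i hi
      have : φ i ≤ J.sup φ := Finset.le_sup hi
      omega
    set y : I → Bool := fun i => if φ i = j then z i else x i with hy
    have hyC : y ∈ C n := interior_subset (hJ (fun i hi => by simp [hy, hjJ i hi]))
    obtain ⟨i, hi1, hi2⟩ := hyC j hjn
    exact hi2 (by simp [hy, hi1])
  have hCm : ∀ n, IsMeagre (C n) := by
    intro n
    rw [isMeagre_iff_countable_union_isNowhereDense]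
    exact ⟨{C n}, by simp [(hCc n).isNowhereDense_iff, hCi n],
      countable_singleton _, by simp⟩
  exact (isMeagre_iUnion hCm).mono hsub

theorem meager_iff_finite_agreement {I : Type} [Countable I] [Infinite I]
    (S : Set (I → Bool)) :
    IsMeagre S ↔ ∃ φ : I → ℕ, (∀ j : ℕ, (φ ⁻¹' {j}).Finite) ∧ ∃ z : I → Bool,
      ∀ x ∈ S, {j : ℕ | ∀ i : I, φ i = j → x i = z i}.Finite := by
  obtain ⟨d⟩ := nonempty_denumerable I
  constructor
  · exact forward_dir (Denumerable.eqv I) S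
  · rintro ⟨φ, hφ, z, hz⟩
    exact backward_dir S φ hφ z hz
end

section
/- (Talagrand) A filter 𝓕 on a countably infinite set I (containing all cofinite sets) is meager as a subset of 2^I if and only if there exists a finite-to-one function φ : I → ω such that for every x ∈ 𝓕, the set {j ∈ ω : x ∩ φ⁻¹(j) = ∅} is finite. -/
/-- A filter on a set `I` (in the combinatorial sense): a family of non-empty subsets of `I`
closed under finite intersections and supersets, containing all cofinite sets. -/
def IsFilterOn {I : Type*} (F : Set (Set I)) : Prop :=
  (∀ s ∈ F, s.Nonempty) ∧ (∀ s ∈ F, ∀ t ∈ F, s ∩ t ∈ F) ∧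
    (∀ s ∈ F, ∀ t : Set I, s ⊆ t → t ∈ F) ∧ (∀ s : Set I, sᶜ.Finite → s ∈ F)

/-- Characteristic function of a subset, as an element of the Cantor space `I → Bool`. -/
noncomputable def chi {I : Type*} (s : Set I) : I → Bool :=
  fun i => @decide (i ∈ s) (Classical.propDecidable _)

lemma chi_eq_true {I : Type*} (s : Set I) (i : I) : chi s i = true ↔ i ∈ s := by
  simp [chi]

lemma chi_chi {I : Type*} (f : I → Bool) : chi {i | f i = true} = f := by
  funext i
  cases h : f i <;> simp [chi, h]

/-- cylinders are open -/
lemma cyl_open {I : Type*} (t : Finset I) (b : I → Bool) :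
    IsOpen {z : I → Bool | ∀ i ∈ t, z i = b i} := by
  have : {z : I → Bool | ∀ i ∈ t, z i = b i} = (↑t : Set I).pi (fun i => {b i}) := by
    ext z; simp [Set.mem_pi]
  rw [this]
  exact isOpen_set_pi t.finite_toSet (fun i _ => isOpen_discrete _)

lemma nwd_union {X : Type*} [TopologicalSpace X] {s t : Set X}
    (hs : IsNowhereDense s) (ht : IsNowhereDense t) : IsNowhereDense (s ∪ t) := by
  unfold IsNowhereDense at *
  rw [closure_union, interior_union_isClosed_of_interior_empty isClosed_closure ht]; exact hs

/-- The easy direction: a finite-to-one φ witnessing smallness makes the filter meager. -/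
lemma easy_dir {I : Type} (F : Set (Set I))
    (φ : I → ℕ) (hfin : ∀ j : ℕ, (φ ⁻¹' {j}).Finite)
    (hmeet : ∀ x ∈ F, {j : ℕ | x ∩ φ ⁻¹' {j} = ∅}.Finite) :
    IsMeagre (chi '' F) := by
  set A : ℕ → Set (I → Bool) :=
    fun n => {z | ∀ j, n ≤ j → ∃ i, φ i = j ∧ z i = true} with hA
  have hcov : chi '' F ⊆ ⋃ n, A n := by
    rintro - ⟨x, hx, rfl⟩
    obtain ⟨n, hn⟩ := (hmeet x hx).bddAbove
    refine Set.mem_iUnion.2 ⟨n + 1, fun j hj => ?_⟩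
    have hjB : x ∩ φ ⁻¹' {j} ≠ ∅ := by
      intro h
      exact absurd (hn h) (by omega)
    obtain ⟨i, hi1, hi2⟩ := Set.nonempty_iff_ne_empty.2 hjB
    exact ⟨i, hi2, (chi_eq_true x i).2 hi1⟩
  have hint : ∀ n, interior (A n) = ∅ := by
    intro n
    rw [Set.eq_empty_iff_forall_notMem]
    intro z hz
    rw [mem_interior] at hz
    obtain ⟨U, hUA, hU, hzU⟩ := hz
    obtain ⟨t, u, hu, hpi⟩ := isOpen_pi_iff.1 hU z hzU
    have hub : ∀ i ∈ t, φ i ≤ (t.image φ).sup id :=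
      fun i hi => Finset.le_sup (f := id) (Finset.mem_image_of_mem φ hi)
    set j : ℕ := (t.image φ).sup id + n + 1 with hj
    have hjn : n ≤ j := by omega
    have hjt : ∀ i ∈ t, φ i ≠ j := by
      intro i hi h; have := hub i hi; omega
    set y : I → Bool := fun i => if φ i = j then false else z i with hy
    have hyt : y ∈ (↑t : Set I).pi u := by
      intro i hi
      have hyz : y i = z i := by simp [hy, hjt i hi]
      rw [hyz]; exact (hu i hi).2
    have hyA : y ∈ A n := hUA (hpi hyt)
    obtain ⟨i, hij, hitrue⟩ := hyA j hjn
    simp [hy, hij] at hitrue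
  have hclosed : ∀ n, IsClosed (A n) := by
    intro n
    have : A n = ⋂ j ∈ {j : ℕ | n ≤ j}, ⋃ i ∈ φ ⁻¹' {j}, {z : I → Bool | z i = true} := by
      ext z
      simp only [hA, Set.mem_setOf_eq, Set.mem_iInter, Set.mem_iUnion, Set.mem_preimage,
        Set.mem_singleton_iff]
      exact ⟨fun h j hj => by obtain ⟨i, h1, h2⟩ := h j hj; exact ⟨i, h1, h2⟩,
        fun h j hj => by obtain ⟨i, h1, h2⟩ := h j hj; exact ⟨i, h1, h2⟩⟩
    rw [this]
    refine isClosed_biInter fun j hj => (hfin j).isClosed_biUnion fun i hi => ?_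
    have : {z : I → Bool | z i = true} = (fun z : I → Bool => z i) ⁻¹' {true} := rfl
    rw [this]
    exact IsClosed.preimage (continuous_apply i) (isClosed_discrete {true})
  refine isMeagre_iff_countable_union_isNowhereDense.2
    ⟨Set.range A, ?_, Set.countable_range A, ?_⟩
  · rintro - ⟨n, rfl⟩
    exact (hclosed n).isNowhereDense_iff.2 (hint n)
  · simpa [Set.sUnion_range] using hcov

/-- Key extension lemma: for a closed set with empty interior and a finite set `s` of
coordinates, there is a finite `t ⊇ s` such that any pattern `a` can be modified only on
`t \ s` so that the resulting cylinder on `t` misses `K`. -/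
lemma key_ext {I : Type} {K : Set (I → Bool)} (hK : IsClosed K)
    (hnwd : interior K = ∅) (s : Finset I) :
    ∃ t : Finset I, s ⊆ t ∧ ∀ a : I → Bool, ∃ b : I → Bool,
      (∀ i, i ∈ s ∨ i ∉ t → b i = a i) ∧ ∀ z : I → Bool, (∀ i ∈ t, z i = b i) → z ∉ K := by
  classical
  -- per-pattern claim
  have per : ∀ a : I → Bool, ∃ (t' : Finset I) (y : I → Bool),
      (∀ i ∈ s, y i = a i) ∧ ∀ z : I → Bool, (∀ i ∈ t', z i = y i) → z ∉ K := by
    intro a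
    have hCopen : IsOpen {z : I → Bool | ∀ i ∈ s, z i = a i} := cyl_open s a
    have hCa : a ∈ {z : I → Bool | ∀ i ∈ s, z i = a i} := fun i _ => rfl
    have hne : ({z : I → Bool | ∀ i ∈ s, z i = a i} \ K).Nonempty := by
      rw [Set.diff_nonempty]
      intro hsub
      have h2 : {z : I → Bool | ∀ i ∈ s, z i = a i} ⊆ interior K :=
        hCopen.subset_interior_iff.2 hsub
      rw [hnwd] at h2
      exact h2 hCa
    obtain ⟨y, hyC, hyK⟩ := hne
    have hopen : IsOpen ({z : I → Bool | ∀ i ∈ s, z i = a i} \ K) := hCopen.sdiff hK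
    obtain ⟨t', u, hu, hpi⟩ := isOpen_pi_iff.1 hopen y ⟨hyC, hyK⟩
    refine ⟨t', y, fun i hi => hyC i hi, fun z hz => ?_⟩
    have hzp : z ∈ (↑t' : Set I).pi u := fun i hi => by rw [hz i hi]; exact (hu i hi).2
    exact (hpi hzp).2
  choose T Y hY1 hY2 using per
  -- extension of a pattern on `s` to all of `I`
  let ext : (s → Bool) → (I → Bool) := fun p i => if h : i ∈ s then p ⟨i, h⟩ else false
  let E : (s → Bool) → Finset I := fun p => T (ext p)
  refine ⟨s ∪ (Finset.univ : Finset (s → Bool)).biUnion E, Finset.subset_union_left,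
    fun a => ?_⟩
  set p₀ : s → Bool := fun q => a q.1 with hp₀
  have hTsub : E p₀ ⊆ s ∪ (Finset.univ : Finset (s → Bool)).biUnion E :=
    (Finset.subset_biUnion_of_mem E (Finset.mem_univ p₀)).trans Finset.subset_union_right
  refine ⟨fun i => if i ∈ s then a i else if i ∈ E p₀ then Y (ext p₀) i else a i,
    fun i hi => ?_, fun z hz => ?_⟩
  · rcases hi with hi | hi
    · simp [hi]
    · have his : i ∉ s := fun h => hi (Finset.mem_union_left _ h)
      have hiT : i ∉ E p₀ := fun h => hi (hTsub h)
      simp [his, hiT]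
  · refine hY2 (ext p₀) z (fun i hi => ?_)
    have hzb := hz i (hTsub hi)
    rw [hzb]
    by_cases his : i ∈ s
    · have h1 := hY1 (ext p₀) i his
      have h2 : ext p₀ i = a i := by simp [ext, his, hp₀]
      simp [his, h1, h2]
    · simp [his, show i ∈ E p₀ from hi]

lemma hard_dir {I : Type} [Countable I] [Infinite I]
    (F : Set (Set I)) (hF : IsFilterOn F) (hm : IsMeagre (chi '' F)) :
    ∃ φ : I → ℕ, (∀ j : ℕ, (φ ⁻¹' {j}).Finite) ∧
      ∀ x ∈ F, {j : ℕ | x ∩ φ ⁻¹' {j} = ∅}.Finite := by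
  classical
  obtain ⟨e⟩ : Nonempty (ℕ ≃ I) := nonempty_equiv_of_countable
  obtain ⟨S, hS, hSc, hScov⟩ := isMeagre_iff_countable_union_isNowhereDense.1 hm
  have huniv : Set.univ ∈ F := hF.2.2.2 _ (by simp)
  have hSne : S.Nonempty := by
    obtain ⟨t, ht, -⟩ := hScov ⟨Set.univ, huniv, rfl⟩
    exact ⟨t, ht⟩
  obtain ⟨f, hfS⟩ := Set.Countable.exists_eq_range hSc hSne
  -- an increasing sequence of closed nowhere dense sets covering `chi '' F`
  set K : ℕ → Set (I → Bool) := fun n => closure (⋃ m ∈ Finset.range (n + 1), f m) with hK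
  have hKclosed : ∀ n, IsClosed (K n) := fun n => isClosed_closure
  have hfnwd : ∀ m, IsNowhereDense (f m) := by
    intro m
    exact hS _ (hfS ▸ Set.mem_range_self m)
  have hUnwd : ∀ n, IsNowhereDense (⋃ m ∈ Finset.range (n + 1), f m) := by
    intro n
    induction n with
    | zero => simpa using hfnwd 0
    | succ n ih =>
      rw [show Finset.range (n + 2) = insert (n + 1) (Finset.range (n + 1)) from
        Finset.range_add_one, Finset.set_biUnion_insert]
      exact nwd_union (hfnwd (n + 1)) ih
  have hKint : ∀ n, interior (K n) = ∅ := fun n =>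
    (isClosed_closure.isNowhereDense_iff).1 (hUnwd n).closure
  have hKmono : ∀ n k, n ≤ k → K n ⊆ K k := by
    intro n k h
    apply closure_mono
    apply Set.biUnion_subset_biUnion_left
    intro m hm
    have hm' : m < n + 1 := Finset.mem_range.1 hm
    exact Finset.mem_range.2 (by omega)
  have hKcov : chi '' F ⊆ ⋃ n, K n := by
    intro z hz
    obtain ⟨t, htS, hzt⟩ := hScov hz
    rw [hfS] at htS
    obtain ⟨n, rfl⟩ := htS
    exact Set.mem_iUnion.2 ⟨n, subset_closure
      (Set.mem_biUnion (Finset.self_mem_range_succ n) hzt)⟩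
  -- the recursive construction of finite sets
  have step : ∀ (k : ℕ) (s : Finset I), ∃ t : Finset I, (s ∪ {e k}) ⊆ t ∧
      ∀ a : I → Bool, ∃ b : I → Bool,
        (∀ i, i ∈ s ∪ {e k} ∨ i ∉ t → b i = a i) ∧
        ∀ z : I → Bool, (∀ i ∈ t, z i = b i) → z ∉ K k :=
    fun k s => key_ext (hKclosed k) (hKint k) (s ∪ {e k})
  choose St hSt1 hSt2 using step
  obtain ⟨g, hg0, hgsucc⟩ : ∃ g : ℕ → Finset I, g 0 = ∅ ∧ ∀ k, g (k + 1) = St k (g k) :=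
    ⟨fun k => Nat.rec ∅ (fun k gk => St k gk) k, rfl, fun _ => rfl⟩
  have hgsub : ∀ k, g k ∪ {e k} ⊆ g (k + 1) := by
    intro k; rw [hgsucc k]; exact hSt1 k (g k)
  have hgmono : ∀ {k m : ℕ}, k ≤ m → g k ⊆ g m := by
    intro k m h
    induction h with
    | refl => exact subset_rfl
    | step h ih => exact ih.trans (Finset.subset_union_left.trans (hgsub _))
  have hek : ∀ k, e k ∈ g (k + 1) := fun k => hgsub k (by simp)
  have hex : ∀ i : I, ∃ k, i ∈ g (k + 1) := fun i => ⟨e.symm i, by simpa using hek (e.symm i)⟩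
  set φ : I → ℕ := fun i => Nat.find (hex i) with hφ
  have hφmem : ∀ i, i ∈ g (φ i + 1) := fun i => Nat.find_spec (hex i)
  have hφle : ∀ {i k}, i ∈ g (k + 1) → φ i ≤ k := fun h => Nat.find_le h
  have hφnot : ∀ i, i ∉ g (φ i) := by
    intro i hi
    rcases hk : φ i with _ | m
    · rw [hk, hg0] at hi; simp at hi
    · have hlt : m < φ i := by omega
      have := Nat.find_min (hex i) hlt
      rw [hk] at hi
      exact this hi
  have hfin : ∀ j : ℕ, (φ ⁻¹' {j}).Finite := by
    intro j
    refine Set.Finite.subset (g (j + 1)).finite_toSet (fun i hi => ?_)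
    rw [Set.mem_preimage, Set.mem_singleton_iff] at hi
    rw [← hi]
    exact hφmem i
  refine ⟨φ, hfin, fun x hx => ?_⟩
  by_contra hA'
  have hA : {j : ℕ | x ∩ φ ⁻¹' {j} = ∅}.Infinite := hA'
  set A := {j : ℕ | x ∩ φ ⁻¹' {j} = ∅} with hAdef
  choose b hb1 hb2 using hSt2
  obtain ⟨c, hc0, hcsucc⟩ : ∃ c : ℕ → I → Bool, c 0 = chi x ∧
      ∀ k, c (k + 1) = if k ∈ A then b k (g k) (c k) else c k :=
    ⟨fun k => Nat.rec (chi x) (fun k ck => if k ∈ A then b k (g k) ck else ck) k,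
      rfl, fun _ => rfl⟩
  have inv1 : ∀ k i, φ i ≠ k → c (k + 1) i = c k i := by
    intro k i hne
    rw [hcsucc k]
    split_ifs with h
    · apply hb1
      by_cases hik : i ∈ g (k + 1)
      · left
        by_cases hik2 : i ∈ g k
        · exact Finset.mem_union_left _ hik2
        · exfalso
          have h1 : φ i ≤ k := hφle hik
          have h2 : ¬ φ i < k := by
            intro hlt
            exact hik2 (hgmono (by omega : φ i + 1 ≤ k) (hφmem i))
          omega
      · right
        rw [← hgsucc k] at *
        exact hik
    · rfl
  have inv2 : ∀ i k, φ i < k → c k i = c (φ i + 1) i := by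
    intro i k h
    induction k with
    | zero => omega
    | succ k ih =>
      rcases Nat.lt_succ_iff_lt_or_eq.1 h with h' | h'
      · rw [inv1 k i (by omega), ih h']
      · rw [h']
  have hyg : ∀ k, ∀ i ∈ g (k + 1), c (φ i + 1) i = c (k + 1) i := by
    intro k i hi
    have h1 : φ i ≤ k := hφle hi
    exact (inv2 i (k + 1) (by omega)).symm
  have hyx : ∀ i, chi x i = true → c (φ i + 1) i = true := by
    intro i hxi
    have hxi' : i ∈ x := (chi_eq_true x i).1 hxi
    have hφA : φ i ∉ A := by
      intro hmem
      have hmm : i ∈ x ∩ φ ⁻¹' {φ i} := ⟨hxi', rfl⟩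
      rw [hAdef, Set.mem_setOf_eq] at hmem
      rw [hmem] at hmm
      exact hmm
    have hstab : ∀ m, m ≤ φ i + 1 → c m i = chi x i := by
      intro m hm
      induction m with
      | zero => rw [hc0]
      | succ m ih =>
        by_cases hmeq : φ i = m
        · rw [hcsucc m, if_neg (hmeq ▸ hφA)]
          exact ih (by omega)
        · rw [inv1 m i hmeq]
          exact ih (by omega)
    rw [hstab _ le_rfl]
    exact hxi
  set y : Set I := {i | c (φ i + 1) i = true} with hy
  have hxy : x ⊆ y := fun i hi => hyx i ((chi_eq_true x i).2 hi)
  have hyF : y ∈ F := hF.2.2.1 x hx y hxy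
  have hchiy : chi y = fun i => c (φ i + 1) i := chi_chi _
  obtain ⟨n, hn⟩ := Set.mem_iUnion.1 (hKcov ⟨y, hyF, rfl⟩)
  obtain ⟨k, hkA, hkn⟩ := hA.exists_gt n
  have hnotK : chi y ∉ K k := by
    rw [hchiy]
    refine hb2 k (g k) (c k) _ (fun i hi => ?_)
    have hig : i ∈ g (k + 1) := by rw [hgsucc k]; exact hi
    rw [hyg k i hig, hcsucc k, if_pos hkA]
  exact hnotK (hKmono n k (le_of_lt hkn) hn)

theorem talagrand_meager_filter {I : Type} [Countable I] [Infinite I]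
    (F : Set (Set I)) (hF : IsFilterOn F) :
    IsMeagre (chi '' F) ↔ ∃ φ : I → ℕ, (∀ j : ℕ, (φ ⁻¹' {j}).Finite) ∧
      ∀ x ∈ F, {j : ℕ | x ∩ φ ⁻¹' {j} = ∅}.Finite := by
  constructor
  · exact hard_dir F hF
  · rintro ⟨φ, hfin, hmeet⟩
    exact easy_dir F φ hfin hmeet
end

section
/- Let 𝓡 be a countable collection of meager relations on 2^ω. Then there exist nowhere meager subsets E_α of 2^ω for α < 𝔠 such that for every R ∈ 𝓡 with arity n_R and all pairwise distinct ordinals α_0, …, α_{n_R−1} < 𝔠, every tuple x ∈ ∏_{k<n_R} E_{α_k} satisfies x ∉ R. -/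
/-- A subset of a space is nowhere meager if its intersection with every non-empty open set
is non-meager. -/
def NowhereMeager {X : Type*} [TopologicalSpace X] (S : Set X) : Prop :=
  ∀ U : Set X, IsOpen U → U.Nonempty → ¬ IsMeagre (S ∩ U)

/-!
We prove the theorem via an "ultrafilter compliance scheme".  Writing `X = ℕ → Bool` for the
Cantor set, we first replace the countable family of meager relations by a countable "master"
family `T r` of dense open subsets of finite powers of `X` (complements of the closed nowhere
dense pieces of the relations).  We then recursively construct block boundaries
`n 0 < n 1 < ⋯` together with "compliance functions" `γ k` assigning to every point-prefix and
every tag-prefix a content for the block `[n k, n (k+1))`, in such a way that any tuple of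
points which comply (each with its own tag) at a common block `k` lies in every master set of
index `≤ k`, provided the tag-prefixes are pairwise distinct.  This is possible because at each
block only finitely many prefix/tag configurations exist, and dense open sets allow a joint
finite refinement.

For a fixed nonprincipal ultrafilter `𝒰` on `ℕ`, the set `E z` attached to a tag `z ∈ X`
consists of all points complying with tag `z` at 𝒰-many blocks.  Tuples from sets with
pairwise distinct tags then comply simultaneously at a common large block (𝒰 is a filter), so
they avoid all the given relations.  Each `E z` is nowhere meager: given a nonempty open set
and countably many dense open sets, we build *two* points of the open set inside the
intersection, complying on complementary sets of blocks (one point complies while the other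
dodges the next dense open set, and vice versa); since the two compliance sets cover a cofinite
set, one of them is 𝒰-large, so one of the two points lies in `E z`.
-/

open Set Filter

namespace Maintech

abbrev X : Type := ℕ → Bool

/-- Basis lemma for the Cantor space itself. -/
lemma basis_single {U : Set X} (hU : IsOpen U) {y : X} (hy : y ∈ U) :
    ∃ N : ℕ, ∀ y' : X, (∀ j < N, y' j = y j) → y' ∈ U := by
  rcases isOpen_pi_iff.1 hU y hy with ⟨I, u, hu, hsub⟩
  rcases I.bddAbove with ⟨N, hN⟩
  refine ⟨N + 1, fun y' hy' => hsub ?_⟩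
  intro j hj
  have hjN : j < N + 1 := Nat.lt_succ_of_le (hN hj)
  rw [hy' j hjN]
  exact (hu j hj).2

/-- Basis lemma for finite products of the Cantor space. -/
lemma basis_pi {m : ℕ} {U : Set (Fin m → X)} (hU : IsOpen U) {y : Fin m → X} (hy : y ∈ U) :
    ∃ N : ℕ, ∀ y' : Fin m → X, (∀ i, ∀ j < N, y' i j = y i j) → y' ∈ U := by
  rcases isOpen_pi_iff.1 hU y hy with ⟨I, u, hu, hsub⟩
  -- for each i ∈ I, get a bound from the single-space basis lemma
  have h : ∀ i : Fin m, ∃ N : ℕ, ∀ y' : X, (∀ j < N, y' j = y i j) → (i ∈ I → y' ∈ u i) := by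
    intro i
    by_cases hi : i ∈ I
    · rcases basis_single (hu i hi).1 (hu i hi).2 with ⟨N, hN⟩
      exact ⟨N, fun y' h _ => hN y' h⟩
    · exact ⟨0, fun y' _ hi' => absurd hi' hi⟩
  choose N hN using h
  rcases (Set.finite_range N).bddAbove with ⟨M, hM⟩
  refine ⟨M, fun y' hy' => hsub ?_⟩
  intro i hi
  refine hN i (y' i) (fun j hj => hy' i j (lt_of_lt_of_le hj (hM ⟨i, rfl⟩))) hi

/-- The cylinder determined by a point and a level. -/
def cyl (w : X) (N : ℕ) : Set X := {x | ∀ j < N, x j = w j}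

lemma cyl_isOpen (w : X) (N : ℕ) : IsOpen (cyl w N) := by
  have : cyl w N = ⋂ j ∈ Finset.range N, {x : X | x j = w j} := by
    ext x; simp [cyl]
  rw [this]
  refine isOpen_biInter_finset fun j _ => ?_
  have h2 : {x : X | x j = w j} = (fun x : X => x j) ⁻¹' {w j} := rfl
  rw [h2]
  exact IsOpen.preimage (continuous_apply j) (isOpen_discrete _)

lemma self_mem_cyl (w : X) (N : ℕ) : w ∈ cyl w N := fun _ _ => rfl

/-- The box determined by a tuple of points and a level. -/
def box {m : ℕ} (c : Fin m → X) (N : ℕ) : Set (Fin m → X) := {y | ∀ i, ∀ j < N, y i j = c i j}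

lemma box_isOpen {m : ℕ} (c : Fin m → X) (N : ℕ) : IsOpen (box c N) := by
  have : box c N = ⋂ i, (fun y : Fin m → X => y i) ⁻¹' (cyl (c i) N) := by
    ext y; simp [box, cyl]
  rw [this]
  exact isOpen_iInter_of_finite fun i => (cyl_isOpen _ _).preimage (continuous_apply i)

lemma self_mem_box {m : ℕ} (c : Fin m → X) (N : ℕ) : c ∈ box c N := fun _ _ _ => rfl

/-- Extension step into a dense open subset of a finite product. -/
lemma dense_step {m : ℕ} {G : Set (Fin m → X)} (hGo : IsOpen G) (hGd : Dense G)
    (c : Fin m → X) (N : ℕ) :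
    ∃ (c' : Fin m → X) (N' : ℕ), N ≤ N' ∧ (∀ i, ∀ j < N, c' i j = c i j) ∧
      box c' N' ⊆ G := by
  obtain ⟨y, hyG, hybox⟩ := hGd.exists_mem_open (box_isOpen c N) ⟨c, self_mem_box c N⟩
  rcases basis_pi hGo hyG with ⟨M, hM⟩
  refine ⟨y, max N M, le_max_left _ _, fun i j hj => hybox i j hj, ?_⟩
  intro y' hy'
  exact hM y' fun i j hj => hy' i j (lt_of_lt_of_le hj (le_max_right _ _))

/-- Extension step into a dense open subset of the Cantor space. -/
lemma dense_step_single {D : Set X} (hDo : IsOpen D) (hDd : Dense D) (w : X) (N : ℕ) :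
    ∃ (w' : X) (N' : ℕ), N ≤ N' ∧ (∀ j < N, w' j = w j) ∧
      (∀ x : X, (∀ j < N', x j = w' j) → x ∈ D) := by
  obtain ⟨y, hyD, hycyl⟩ := hDd.exists_mem_open (cyl_isOpen w N) ⟨w, self_mem_cyl w N⟩
  rcases basis_single hDo hyD with ⟨M, hM⟩
  exact ⟨y, max N M, le_max_left _ _, fun j hj => hycyl j hj,
    fun x hx => hM x fun j hj => hx j (lt_of_lt_of_le hj (le_max_right _ _))⟩

/-- From a residual set extract an `ℕ`-indexed family of dense open sets. -/
lemma residual_seq {Y : Type*} [TopologicalSpace Y] {s : Set Y} (hs : s ∈ residual Y) :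
    ∃ D : ℕ → Set Y, (∀ m, IsOpen (D m)) ∧ (∀ m, Dense (D m)) ∧ (⋂ m, D m) ⊆ s := by
  rcases mem_residual_iff.1 hs with ⟨S, hSo, hSd, hScnt, hSsub⟩
  have hcnt : (insert univ S : Set (Set Y)).Countable := hScnt.insert _
  have hne : (insert univ S : Set (Set Y)).Nonempty := ⟨univ, mem_insert _ _⟩
  rcases hcnt.exists_eq_range hne with ⟨D, hD⟩
  refine ⟨D, ?_, ?_, ?_⟩
  · intro m
    have : D m ∈ insert univ S := by rw [hD]; exact ⟨m, rfl⟩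
    rcases this with h | h
    · rw [h]; exact isOpen_univ
    · exact hSo _ h
  · intro m
    have : D m ∈ insert univ S := by rw [hD]; exact ⟨m, rfl⟩
    rcases this with h | h
    · rw [h]; exact dense_univ
    · exact hSd _ h
  · refine subset_trans ?_ hSsub
    intro x hx t ht
    have : t ∈ insert univ S := mem_insert_of_mem _ ht
    rw [hD] at this
    rcases this with ⟨m, rfl⟩
    exact mem_iInter.1 hx m

/-- Iterated refinement handling a finite list of requirements. Each requirement consists of
an arity `m`, a dense open subset of the `m`-th power, and an injective assignment of slots to
the coordinates. -/
lemma refine {S : Type} [DecidableEq S]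
    (reqs : List (Σ m : ℕ, Set (Fin m → X) × (Fin m → S)))
    (hreqs : ∀ q ∈ reqs, (IsOpen q.2.1 ∧ Dense q.2.1) ∧ Function.Injective q.2.2)
    (g₀ : S → X) (ℓ₀ : ℕ) :
    ∃ (g : S → X) (ℓ : ℕ), ℓ₀ ≤ ℓ ∧ (∀ s, ∀ j < ℓ₀, g s j = g₀ s j) ∧
      ∀ q ∈ reqs, ∀ y : Fin q.1 → X, (∀ i, ∀ j < ℓ, y i j = g (q.2.2 i) j) → y ∈ q.2.1 := by
  classical
  induction reqs with
  | nil => exact ⟨g₀, ℓ₀, le_rfl, fun _ _ _ => rfl, fun q hq => absurd hq List.not_mem_nil⟩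
  | cons q rest ih =>
    obtain ⟨g₁, ℓ₁, hℓ₁, hagree₁, havoid₁⟩ :=
      ih (fun q' hq' => hreqs q' (List.mem_cons_of_mem _ hq'))
    obtain ⟨⟨hGo, hGd⟩, hinj⟩ := hreqs q List.mem_cons_self
    obtain ⟨c', N', hN', hagree', hsub'⟩ := dense_step hGo hGd (fun i => g₁ (q.2.2 i)) ℓ₁
    set g₂ : S → X := fun s => if h : ∃ i, q.2.2 i = s then c' h.choose else g₁ s with hg₂
    have hval : ∀ i, g₂ (q.2.2 i) = c' i := by
      intro i
      have h : ∃ i', q.2.2 i' = q.2.2 i := ⟨i, rfl⟩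
      have : h.choose = i := hinj h.choose_spec
      simp only [hg₂, dif_pos h, this]
    have hlow : ∀ s, ∀ j < ℓ₁, g₂ s j = g₁ s j := by
      intro s j hj
      by_cases h : ∃ i, q.2.2 i = s
      · simp only [hg₂, dif_pos h]
        have := hagree' h.choose j hj
        rwa [h.choose_spec] at this
      · simp only [hg₂, dif_neg h]
    refine ⟨g₂, N', le_trans hℓ₁ hN', ?_, ?_⟩
    · intro s j hj
      rw [hlow s j (lt_of_lt_of_le hj hℓ₁)]
      exact hagree₁ s j hj
    · intro q' hq' y hy
      rcases List.mem_cons.1 hq' with rfl | hq'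
    -- head requirement
      · refine hsub' ?_
        intro i j hj
        rw [hy i j hj, hval i]
    -- tail requirement
      · refine havoid₁ q' hq' y ?_
        intro i j hj
        rw [hy i j (lt_of_lt_of_le hj hN'), hlow _ j hj]

/-- One step of the construction of the compliance scheme. -/
lemma step_exists (T : ℕ → Σ m : ℕ, Set (Fin m → X))
    (hT : ∀ r, IsOpen (T r).2 ∧ Dense (T r).2) (k nk : ℕ) :
    ∃ p : (X → X → X) × ℕ,
      nk < p.2 ∧
      (∀ σ z, ∀ j < nk, p.1 σ z j = σ j) ∧
      (∀ σ z σ' z', (∀ j < nk, σ j = σ' j) → (∀ j < k, z j = z' j) → p.1 σ z = p.1 σ' z') ∧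
      (∀ r ≤ k, ∀ s : Fin (T r).1 → X × X,
        (∀ a b, a ≠ b → ∃ j < k, (s a).2 j ≠ (s b).2 j) →
        ∀ y : Fin (T r).1 → X, (∀ i, ∀ j < p.2, y i j = p.1 (s i).1 (s i).2 j) →
          y ∈ (T r).2) := by
  classical
  set S : Type := (Fin nk → Bool) × (Fin k → Bool) with hS
  set tr1 : X → Fin nk → Bool := fun x j => x j with htr1
  set tr2 : X → Fin k → Bool := fun x j => x j with htr2
  set g₀ : S → X := fun s j => if h : j < nk then s.1 ⟨j, h⟩ else false with hg₀
  set pred : ∀ m : ℕ, (Fin m → S) → Prop :=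
    fun m sh => ∀ a b : Fin m, a ≠ b → (sh a).2 ≠ (sh b).2 with hpred
  set tuples : ∀ m : ℕ, List (Fin m → S) :=
    fun m => (Finset.univ : Finset (Fin m → S)).toList.filter (fun sh => decide (pred m sh))
    with htuples
  set reqs : List (Σ m : ℕ, Set (Fin m → X) × (Fin m → S)) :=
    (List.range (k+1)).flatMap
      (fun r => (tuples (T r).1).map (fun sh => ⟨(T r).1, ((T r).2, sh)⟩)) with hreqsdef
  have hreqs : ∀ q ∈ reqs, (IsOpen q.2.1 ∧ Dense q.2.1) ∧ Function.Injective q.2.2 := by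
    intro q hq
    rw [hreqsdef, List.mem_flatMap] at hq
    obtain ⟨r, _, hq⟩ := hq
    rw [List.mem_map] at hq
    obtain ⟨sh, hsh, rfl⟩ := hq
    have hpsh : pred (T r).1 sh := by
      have := (List.mem_filter.1 hsh).2
      exact of_decide_eq_true this
    refine ⟨⟨(hT r).1, (hT r).2⟩, ?_⟩
    intro a b hab
    by_contra hne
    exact hpsh a b hne (congrArg Prod.snd hab)
  obtain ⟨g, ℓ, hℓ, hagree, havoid⟩ := refine reqs hreqs g₀ nk
  refine ⟨⟨fun σ z => g (tr1 σ, tr2 z), max ℓ (nk + 1)⟩, ?_, ?_, ?_, ?_⟩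
  · exact lt_of_lt_of_le (Nat.lt_succ_self nk) (le_max_right _ _)
  · intro σ z j hj
    show g (tr1 σ, tr2 z) j = σ j
    rw [hagree (tr1 σ, tr2 z) j hj]
    simp only [hg₀, dif_pos hj]
    rfl
  · intro σ z σ' z' h1 h2
    have e1 : tr1 σ = tr1 σ' := funext fun j => h1 j j.2
    have e2 : tr2 z = tr2 z' := funext fun j => h2 j j.2
    show g (tr1 σ, tr2 z) = g (tr1 σ', tr2 z')
    rw [e1, e2]
  · intro r hr s hdist y hy
    set sh : Fin (T r).1 → S := fun i => (tr1 (s i).1, tr2 (s i).2) with hshdef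
    have hmem : (⟨(T r).1, ((T r).2, sh)⟩ : Σ m : ℕ, Set (Fin m → X) × (Fin m → S)) ∈ reqs := by
      rw [hreqsdef, List.mem_flatMap]
      refine ⟨r, List.mem_range.2 (Nat.lt_succ_of_le hr), ?_⟩
      rw [List.mem_map]
      refine ⟨sh, ?_, rfl⟩
      rw [htuples, List.mem_filter]
      refine ⟨Finset.mem_toList.2 (Finset.mem_univ _), decide_eq_true ?_⟩
      intro a b hab
      obtain ⟨j, hj, hne⟩ := hdist a b hab
      intro hcontra
      exact hne (congrFun (congrArg Prod.snd (congrArg sh rfl)) ⟨j, hj⟩ ▸ (by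
        have := congrFun hcontra ⟨j, hj⟩
        exact this))
    have := havoid _ hmem y ?_
    · exact this
    · intro i j hj
      exact hy i j (lt_of_lt_of_le hj (le_max_left _ _))

section Scheme

variable (T : ℕ → Σ m : ℕ, Set (Fin m → X)) (hT : ∀ r, IsOpen (T r).2 ∧ Dense (T r).2)

noncomputable def stepData (k nk : ℕ) : (X → X → X) × ℕ :=
  Classical.choose (step_exists T hT k nk)

/-- The block boundaries of the compliance scheme. -/
noncomputable def nAt : ℕ → ℕ :=
  fun k => Nat.rec 0 (fun k ih => (stepData T hT k ih).2) k

/-- The compliance functions of the scheme. -/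
noncomputable def gAt (k : ℕ) : X → X → X := (stepData T hT k (nAt T hT k)).1

lemma nAt_zero : nAt T hT 0 = 0 := rfl

lemma nAt_succ (k : ℕ) : nAt T hT (k + 1) = (stepData T hT k (nAt T hT k)).2 := rfl

lemma scheme_spec (k : ℕ) :
    nAt T hT k < nAt T hT (k + 1) ∧
    (∀ σ z, ∀ j < nAt T hT k, gAt T hT k σ z j = σ j) ∧
    (∀ σ z σ' z', (∀ j < nAt T hT k, σ j = σ' j) → (∀ j < k, z j = z' j) →
      gAt T hT k σ z = gAt T hT k σ' z') ∧
    (∀ r ≤ k, ∀ s : Fin (T r).1 → X × X,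
      (∀ a b, a ≠ b → ∃ j < k, (s a).2 j ≠ (s b).2 j) →
      ∀ y : Fin (T r).1 → X, (∀ i, ∀ j < nAt T hT (k + 1), y i j = gAt T hT k (s i).1 (s i).2 j) →
        y ∈ (T r).2) :=
  Classical.choose_spec (step_exists T hT k (nAt T hT k))

lemma nAt_strictMono : StrictMono (nAt T hT) :=
  strictMono_nat_of_lt_succ fun k => (scheme_spec T hT k).1

lemma nAt_mono : Monotone (nAt T hT) := (nAt_strictMono T hT).monotone

lemma le_nAt (k : ℕ) : k ≤ nAt T hT k := (nAt_strictMono T hT).le_apply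

/-- `x` complies with the scheme for the tag `z` at block `k`. -/
def complies (z x : X) (k : ℕ) : Prop :=
  ∀ j, nAt T hT k ≤ j → j < nAt T hT (k + 1) → x j = gAt T hT k x z j

/-- The nowhere meager set attached to the tag `z`. -/
def Ez (z : X) : Set X :=
  {x | {k | complies T hT z x k} ∈ (Filter.hyperfilter ℕ : Filter ℕ)}

/-- Iterated compliance: starting from `x`, comply on blocks `b, b+1, ..., b+c-1`. -/
noncomputable def complyIter (z : X) (b : ℕ) : ℕ → X → X
  | 0, x => x
  | (c+1), x => gAt T hT (b + c) (complyIter z b c x) z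

lemma complyIter_agree (z : X) (b : ℕ) (x : X) :
    ∀ c c', c' ≤ c → ∀ j, j < nAt T hT (b + c') → complyIter T hT z b c x j = complyIter T hT z b c' x j := by
  intro c
  induction c with
  | zero => intro c' hc' j _; rw [Nat.le_zero.1 hc']
  | succ c ih =>
    intro c' hc' j hj
    rcases Nat.lt_or_ge c' (c+1) with h | h
    · have hc'c : c' ≤ c := Nat.lt_succ_iff.1 h
      have h1 : complyIter T hT z b (c+1) x j = complyIter T hT z b c x j := by
        show gAt T hT (b + c) (complyIter T hT z b c x) z j = _
        refine (scheme_spec T hT (b+c)).2.1 _ z j ?_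
        exact lt_of_lt_of_le hj (nAt_mono T hT (Nat.add_le_add_left hc'c b))
      rw [h1]
      exact ih c' hc'c j hj
    · have : c' = c + 1 := le_antisymm hc' h
      rw [this]

/-- The result of `complyIter` complies at each block it has handled, and so does any point
agreeing with it up to the final level. -/
lemma complyIter_complies (z : X) (b c : ℕ) (x x' : X)
    (hagree : ∀ j, j < nAt T hT (b + c) → x' j = complyIter T hT z b c x j)
    (t : ℕ) (ht : t < c) : complies T hT z x' (b + t) := by
  intro j hj1 hj2
  have htc : t + 1 ≤ c := Nat.succ_le_of_lt ht
  have hj2' : j < nAt T hT (b + (t + 1)) := hj2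
  have hlevel : nAt T hT (b + (t + 1)) ≤ nAt T hT (b + c) :=
    nAt_mono T hT (Nat.add_le_add_left htc b)
  have hx'j : x' j = complyIter T hT z b (t + 1) x j := by
    rw [hagree j (lt_of_lt_of_le hj2' hlevel)]
    exact complyIter_agree T hT z b x c (t + 1) htc j hj2'
  have hσ : ∀ j', j' < nAt T hT (b + t) → complyIter T hT z b t x j' = x' j' := by
    intro j' hj'
    have h1 : j' < nAt T hT (b + (t + 1)) :=
      lt_of_lt_of_le hj' (nAt_mono T hT (Nat.add_le_add_left (Nat.le_succ t) b))
    have h2 : x' j' = complyIter T hT z b c x j' := hagree j' (lt_of_lt_of_le h1 hlevel)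
    have h3 : complyIter T hT z b c x j' = complyIter T hT z b t x j' :=
      complyIter_agree T hT z b x c t (le_of_lt ht) j' hj'
    rw [h2, h3]
  have heq : gAt T hT (b + t) (complyIter T hT z b t x) z = gAt T hT (b + t) x' z :=
    (scheme_spec T hT (b + t)).2.2.1 _ z _ z hσ (fun _ _ => rfl)
  have hx'j2 : x' j = gAt T hT (b + t) (complyIter T hT z b t x) z j := hx'j
  rw [hx'j2]
  exact congrFun heq j

/-- One step of the fusion construction: extend the pair `(p, q)` so that both enter the dense
open set `D`, while between them they comply with the scheme on every block of the new range. -/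
lemma fusion_step (z : X) {D : Set X} (hDo : IsOpen D) (hDd : Dense D) (b : ℕ) (p q : X) :
    ∃ (b' : ℕ) (p' q' : X), b < b' ∧
      (∀ j < nAt T hT b, p' j = p j) ∧ (∀ j < nAt T hT b, q' j = q j) ∧
      (∀ x : X, (∀ j < nAt T hT b', x j = p' j) → x ∈ D) ∧
      (∀ x : X, (∀ j < nAt T hT b', x j = q' j) → x ∈ D) ∧
      (∀ t, b ≤ t → t < b' →
        (∀ x', (∀ j < nAt T hT b', x' j = p' j) → complies T hT z x' t) ∨
        (∀ x', (∀ j < nAt T hT b', x' j = q' j) → complies T hT z x' t)) := by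
  obtain ⟨p₁, L₁, hL₁, hp₁agree, hp₁sub⟩ := dense_step_single hDo hDd p (nAt T hT b)
  set b₁ : ℕ := max L₁ (b + 1) with hb₁def
  have hbb₁ : b < b₁ := lt_of_lt_of_le (Nat.lt_succ_self b) (le_max_right _ _)
  have hL₁b₁ : L₁ ≤ nAt T hT b₁ := le_trans (le_max_left _ _) (le_nAt T hT b₁)
  have hnb₁ : nAt T hT b ≤ nAt T hT b₁ := nAt_mono T hT (le_of_lt hbb₁)
  set q₁ : X := complyIter T hT z b (b₁ - b) q with hq₁def
  obtain ⟨q₂, L₂, hL₂, hq₂agree, hq₂sub⟩ := dense_step_single hDo hDd q₁ (nAt T hT b₁)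
  set b₂ : ℕ := max L₂ (b₁ + 1) with hb₂def
  have hb₁b₂ : b₁ < b₂ := lt_of_lt_of_le (Nat.lt_succ_self b₁) (le_max_right _ _)
  have hL₂b₂ : L₂ ≤ nAt T hT b₂ := le_trans (le_max_left _ _) (le_nAt T hT b₂)
  have hnb₂ : nAt T hT b₁ ≤ nAt T hT b₂ := nAt_mono T hT (le_of_lt hb₁b₂)
  set p₂ : X := complyIter T hT z b₁ (b₂ - b₁) p₁ with hp₂def
  have hp₂agree : ∀ j < nAt T hT b₁, p₂ j = p₁ j := by
    intro j hj
    have := complyIter_agree T hT z b₁ p₁ (b₂ - b₁) 0 (Nat.zero_le _) j (by simpa using hj)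
    simpa [complyIter] using this
  have hq₁agree : ∀ j < nAt T hT b, q₁ j = q j := by
    intro j hj
    have := complyIter_agree T hT z b q (b₁ - b) 0 (Nat.zero_le _) j (by simpa using hj)
    simpa [complyIter] using this
  refine ⟨b₂, p₂, q₂, lt_trans hbb₁ hb₁b₂, ?_, ?_, ?_, ?_, ?_⟩
  · intro j hj
    rw [hp₂agree j (lt_of_lt_of_le hj hnb₁), hp₁agree j hj]
  · intro j hj
    rw [hq₂agree j (lt_of_lt_of_le hj hnb₁), hq₁agree j hj]
  · intro x hx
    refine hp₁sub x ?_
    intro j hj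
    have hj' : j < nAt T hT b₁ := lt_of_lt_of_le hj hL₁b₁
    rw [hx j (lt_of_lt_of_le hj' hnb₂), hp₂agree j hj']
  · intro x hx
    refine hq₂sub x ?_
    intro j hj
    exact hx j (lt_of_lt_of_le hj hL₂b₂)
  · intro t hbt htb₂
    rcases Nat.lt_or_ge t b₁ with ht | ht
    -- `q`-side complies on blocks `[b, b₁)`
    · right
      intro x' hx'
      have hagree : ∀ j, j < nAt T hT (b + (b₁ - b)) → x' j = q₁ j := by
        intro j hj
        rw [Nat.add_sub_cancel' (le_of_lt hbb₁)] at hj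
        rw [hx' j (lt_of_lt_of_le hj hnb₂), hq₂agree j hj]
      have := complyIter_complies T hT z b (b₁ - b) q x' hagree (t - b)
        (by omega)
      have harith : b + (t - b) = t := by omega
      rwa [harith] at this
    -- `p`-side complies on blocks `[b₁, b₂)`
    · left
      intro x' hx'
      have hagree : ∀ j, j < nAt T hT (b₁ + (b₂ - b₁)) → x' j = p₂ j := by
        intro j hj
        rw [Nat.add_sub_cancel' (le_of_lt hb₁b₂)] at hj
        exact hx' j hj
      have := complyIter_complies T hT z b₁ (b₂ - b₁) p₁ x' hagree (t - b₁)
        (by omega)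
      have harith : b₁ + (t - b₁) = t := by omega
      rwa [harith] at this

/-- The sets `Ez` are nowhere meager. -/
lemma Ez_not_meagre (z : X) {U : Set X} (hU : IsOpen U) (hUne : U.Nonempty) :
    ¬ IsMeagre (Ez T hT z ∩ U) := by
  intro hMeag
  obtain ⟨D, hDo, hDd, hDsub⟩ := residual_seq hMeag
  obtain ⟨u₀, hu₀⟩ := hUne
  obtain ⟨N₀, hN₀⟩ := basis_single hU hu₀
  set b₀ : ℕ := N₀ with hb₀def
  -- the recursive fusion
  have step : ∀ (m b : ℕ) (p q : X), ∃ w : ℕ × X × X, b < w.1 ∧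
      (∀ j < nAt T hT b, w.2.1 j = p j) ∧ (∀ j < nAt T hT b, w.2.2 j = q j) ∧
      (∀ x : X, (∀ j < nAt T hT w.1, x j = w.2.1 j) → x ∈ D m) ∧
      (∀ x : X, (∀ j < nAt T hT w.1, x j = w.2.2 j) → x ∈ D m) ∧
      (∀ t, b ≤ t → t < w.1 →
        (∀ x', (∀ j < nAt T hT w.1, x' j = w.2.1 j) → complies T hT z x' t) ∨
        (∀ x', (∀ j < nAt T hT w.1, x' j = w.2.2 j) → complies T hT z x' t)) := by
    intro m b p q
    obtain ⟨b', p', q', h1, h2, h3, h4, h5, h6⟩ := fusion_step T hT z (hDo m) (hDd m) b p q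
    exact ⟨(b', p', q'), h1, h2, h3, h4, h5, h6⟩
  set st : ℕ → ℕ × X × X :=
    fun m => Nat.rec (b₀, u₀, u₀) (fun m ih => Classical.choose (step m ih.1 ih.2.1 ih.2.2)) m
    with hstdef
  have hst0 : st 0 = (b₀, u₀, u₀) := rfl
  have hstS : ∀ m, st (m + 1) = Classical.choose (step m (st m).1 (st m).2.1 (st m).2.2) := by
    intro m; rfl
  have hspec : ∀ m, (st m).1 < (st (m+1)).1 ∧
      (∀ j < nAt T hT (st m).1, (st (m+1)).2.1 j = (st m).2.1 j) ∧
      (∀ j < nAt T hT (st m).1, (st (m+1)).2.2 j = (st m).2.2 j) ∧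
      (∀ x : X, (∀ j < nAt T hT (st (m+1)).1, x j = (st (m+1)).2.1 j) → x ∈ D m) ∧
      (∀ x : X, (∀ j < nAt T hT (st (m+1)).1, x j = (st (m+1)).2.2 j) → x ∈ D m) ∧
      (∀ t, (st m).1 ≤ t → t < (st (m+1)).1 →
        (∀ x', (∀ j < nAt T hT (st (m+1)).1, x' j = (st (m+1)).2.1 j) → complies T hT z x' t) ∨
        (∀ x', (∀ j < nAt T hT (st (m+1)).1, x' j = (st (m+1)).2.2 j) → complies T hT z x' t)) := by
    intro m
    rw [hstS m]
    exact Classical.choose_spec (step m (st m).1 (st m).2.1 (st m).2.2)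
  have hbmono : ∀ m m', m ≤ m' → (st m).1 ≤ (st m').1 := by
    intro m m' h
    induction m' with
    | zero => rw [Nat.le_zero.1 h]
    | succ m'' ih =>
      rcases Nat.lt_or_ge m (m''+1) with h' | h'
      · exact le_trans (ih (Nat.lt_succ_iff.1 h')) (le_of_lt (hspec m'').1)
      · rw [le_antisymm h h']
  have hblow : ∀ m, b₀ + m ≤ (st m).1 := by
    intro m
    induction m with
    | zero => exact le_of_eq rfl
    | succ m ih => calc b₀ + (m+1) = (b₀ + m) + 1 := rfl
                    _ ≤ (st m).1 + 1 := Nat.add_le_add_right ih 1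
                    _ ≤ (st (m+1)).1 := (hspec m).1
  -- stabilization of the approximations
  have hstabP : ∀ m m', m ≤ m' → ∀ j < nAt T hT (st m).1, (st m').2.1 j = (st m).2.1 j := by
    intro m m' h
    induction m' with
    | zero => rw [Nat.le_zero.1 h]; intro j _; rfl
    | succ m'' ih =>
      rcases Nat.lt_or_ge m (m''+1) with h' | h'
      · intro j hj
        have h2 : j < nAt T hT (st m'').1 :=
          lt_of_lt_of_le hj (nAt_mono T hT (hbmono m m'' (Nat.lt_succ_iff.1 h')))
        rw [(hspec m'').2.1 j h2]
        exact ih (Nat.lt_succ_iff.1 h') j hj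
      · rw [le_antisymm h h']; intro j _; rfl
  have hstabQ : ∀ m m', m ≤ m' → ∀ j < nAt T hT (st m).1, (st m').2.2 j = (st m).2.2 j := by
    intro m m' h
    induction m' with
    | zero => rw [Nat.le_zero.1 h]; intro j _; rfl
    | succ m'' ih =>
      rcases Nat.lt_or_ge m (m''+1) with h' | h'
      · intro j hj
        have h2 : j < nAt T hT (st m'').1 :=
          lt_of_lt_of_le hj (nAt_mono T hT (hbmono m m'' (Nat.lt_succ_iff.1 h')))
        rw [(hspec m'').2.2.1 j h2]
        exact ih (Nat.lt_succ_iff.1 h') j hj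
      · rw [le_antisymm h h']; intro j _; rfl
  -- the limit points
  set x₁ : X := fun j => (st (j+1)).2.1 j with hx₁def
  set x₂ : X := fun j => (st (j+1)).2.2 j with hx₂def
  have hjlt : ∀ j : ℕ, j < nAt T hT (st (j+1)).1 := by
    intro j
    have h1 : j + 1 ≤ (st (j+1)).1 := le_trans (by omega) (hblow (j+1))
    exact lt_of_lt_of_le (Nat.lt_succ_self j) (le_trans h1 (le_nAt T hT _))
  have hx₁agree : ∀ m, ∀ j < nAt T hT (st m).1, x₁ j = (st m).2.1 j := by
    intro m j hj
    show (st (j+1)).2.1 j = (st m).2.1 j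
    rcases le_or_gt m (j+1) with h | h
    · exact hstabP m (j+1) h j hj
    · exact (hstabP (j+1) m (le_of_lt h) j (hjlt j)).symm
  have hx₂agree : ∀ m, ∀ j < nAt T hT (st m).1, x₂ j = (st m).2.2 j := by
    intro m j hj
    show (st (j+1)).2.2 j = (st m).2.2 j
    rcases le_or_gt m (j+1) with h | h
    · exact hstabQ m (j+1) h j hj
    · exact (hstabQ (j+1) m (le_of_lt h) j (hjlt j)).symm
  -- the limit points belong to U and to every D m
  have hx₁U : x₁ ∈ U := by
    refine hN₀ x₁ ?_
    intro j hj
    have h1 : j < nAt T hT (st 0).1 := lt_of_lt_of_le hj (le_nAt T hT b₀)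
    rw [hx₁agree 0 j h1]
    rfl
  have hx₂U : x₂ ∈ U := by
    refine hN₀ x₂ ?_
    intro j hj
    have h1 : j < nAt T hT (st 0).1 := lt_of_lt_of_le hj (le_nAt T hT b₀)
    rw [hx₂agree 0 j h1]
    rfl
  have hx₁D : ∀ m, x₁ ∈ D m := by
    intro m
    exact (hspec m).2.2.2.1 x₁ (fun j hj => hx₁agree (m+1) j hj)
  have hx₂D : ∀ m, x₂ ∈ D m := by
    intro m
    exact (hspec m).2.2.2.2.1 x₂ (fun j hj => hx₂agree (m+1) j hj)
  -- the compliance sets of the two limit points cover a cofinite set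
  have hcover : ∀ t, b₀ ≤ t → complies T hT z x₁ t ∨ complies T hT z x₂ t := by
    intro t ht
    -- find the stage m with (st m).1 ≤ t < (st (m+1)).1
    have hex : ∃ m, (st m).1 ≤ t ∧ t < (st (m+1)).1 := by
      by_contra hcon
      push_neg at hcon
      have hall : ∀ m, (st m).1 ≤ t := by
        intro m
        induction m with
        | zero => exact ht
        | succ m ih => exact hcon m ih
      have := hall (t+1)
      have h2 := hblow (t+1)
      omega
    obtain ⟨m, hm1, hm2⟩ := hex
    rcases (hspec m).2.2.2.2.2 t hm1 hm2 with h | h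
    · exact Or.inl (h x₁ (fun j hj => hx₁agree (m+1) j hj))
    · exact Or.inr (h x₂ (fun j hj => hx₂agree (m+1) j hj))
  -- one of the two limit points lies in `Ez`
  have hone : x₁ ∈ Ez T hT z ∨ x₂ ∈ Ez T hT z := by
    by_contra hcon
    push_neg at hcon
    obtain ⟨h1, h2⟩ := hcon
    have h1' : {k | complies T hT z x₁ k}ᶜ ∈ (Filter.hyperfilter ℕ : Ultrafilter ℕ) :=
      Ultrafilter.compl_mem_iff_notMem.2 h1
    have h2' : {k | complies T hT z x₂ k}ᶜ ∈ (Filter.hyperfilter ℕ : Ultrafilter ℕ) :=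
      Ultrafilter.compl_mem_iff_notMem.2 h2
    have h3 : ({k | complies T hT z x₁ k}ᶜ ∩ {k | complies T hT z x₂ k}ᶜ) ∈
        (Filter.hyperfilter ℕ : Ultrafilter ℕ) := Filter.inter_mem h1' h2'
    have h4 : ({k | complies T hT z x₁ k}ᶜ ∩ {k | complies T hT z x₂ k}ᶜ) ⊆ {t | t < b₀} := by
      intro t ⟨ht1, ht2⟩
      by_contra h5
      simp only [Set.mem_setOf_eq, not_lt] at h5
      rcases hcover t h5 with h | h
      · exact ht1 h
      · exact ht2 h
    have h6 : {t : ℕ | t < b₀} ∈ (Filter.hyperfilter ℕ : Ultrafilter ℕ) :=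
      Filter.mem_of_superset h3 h4
    exact (Filter.notMem_hyperfilter_of_finite (Set.finite_lt_nat b₀)) h6
  have hsub2 : x₁ ∈ (⋂ m, D m) → x₁ ∉ Ez T hT z ∩ U := fun h => hDsub h
  have hsub3 : x₂ ∈ (⋂ m, D m) → x₂ ∉ Ez T hT z ∩ U := fun h => hDsub h
  rcases hone with h | h
  · exact hsub2 (Set.mem_iInter.2 hx₁D) ⟨h, hx₁U⟩
  · exact hsub3 (Set.mem_iInter.2 hx₂D) ⟨h, hx₂U⟩

/-- Tuples whose entries come from `Ez`-sets with pairwise distinct tags belong to every set of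
the master family. -/
lemma Ez_free (r : ℕ) (z : Fin (T r).1 → X) (hz : ∀ a b, a ≠ b → z a ≠ z b)
    (y : Fin (T r).1 → X) (hy : ∀ i, y i ∈ Ez T hT (z i)) : y ∈ (T r).2 := by
  classical
  set 𝒰 : Ultrafilter ℕ := Filter.hyperfilter ℕ with h𝒰
  have hK : (⋂ i, {k | complies T hT (z i) (y i) k}) ∈ 𝒰 := Filter.iInter_mem.2 fun i => hy i
  have hpair : ∀ a b : Fin (T r).1,
      {k : ℕ | a ≠ b → ∃ j < k, z a j ≠ z b j} ∈ 𝒰 := by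
    intro a b
    by_cases hab : a = b
    · have : {k : ℕ | a ≠ b → ∃ j < k, z a j ≠ z b j} = Set.univ := by
        ext k; simp [hab]
      rw [this]; exact Filter.univ_mem
    · obtain ⟨j, hj⟩ := Function.ne_iff.1 (hz a b hab)
      have hsub : {k : ℕ | j < k} ⊆ {k : ℕ | a ≠ b → ∃ j' < k, z a j' ≠ z b j'} :=
        fun k hk _ => ⟨j, hk, hj⟩
      refine Filter.mem_of_superset ?_ hsub
      refine Filter.hyperfilter_le_cofinite ?_
      have : {k : ℕ | j < k}ᶜ = {k : ℕ | k ≤ j} := by ext k; simp [not_lt]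
      rw [Filter.mem_cofinite, this]
      exact Set.finite_le_nat j
  have hpairs : (⋂ a, ⋂ b, {k : ℕ | a ≠ b → ∃ j < (k:ℕ), z a j ≠ z b j}) ∈ 𝒰 :=
    Filter.iInter_mem.2 fun a => Filter.iInter_mem.2 fun b => hpair a b
  have hr : {k : ℕ | r ≤ k} ∈ 𝒰 := by
    refine Filter.hyperfilter_le_cofinite ?_
    have : {k : ℕ | r ≤ k}ᶜ = {k : ℕ | k < r} := by ext k; simp [not_le]
    rw [Filter.mem_cofinite, this]
    exact Set.finite_lt_nat r
  have hall := Filter.inter_mem (Filter.inter_mem hK hpairs) hr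
  obtain ⟨k, ⟨hkK, hkpairs⟩, hkr⟩ := Filter.nonempty_of_mem hall
  refine (scheme_spec T hT k).2.2.2 r hkr (fun i => (y i, z i)) ?_ y ?_
  · intro a b hab
    have := (Set.mem_iInter.1 (Set.mem_iInter.1 hkpairs a) b) hab
    exact this
  · intro i j hj
    rcases Nat.lt_or_ge j (nAt T hT k) with h | h
    · exact ((scheme_spec T hT k).2.1 (y i) (z i) j h).symm
    · exact (Set.mem_iInter.1 hkK i) j h hj

end Scheme

/-- Transport of (non-)membership along an equality of (arity, relation) pairs. -/
lemma sigma_mem {p q : Σ m : ℕ, Set (Fin m → X)} (h : p = q) (x : Fin q.1 → X)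
    (hx : (fun j => x (Fin.cast (congrArg Sigma.fst h) j)) ∈ p.2) : x ∈ q.2 := by
  subst h
  simpa using hx

/-- Construction of the master family of dense open sets from a countable family of meager
relations. -/
lemma exists_master {ι : Type*} [Countable ι] (n : ι → ℕ)
    (R : ∀ i, Set (Fin (n i) → X)) (hR : ∀ i, IsMeagre (R i)) :
    ∃ T : ℕ → Σ m : ℕ, Set (Fin m → X),
      (∀ r, IsOpen (T r).2 ∧ Dense (T r).2) ∧
      ∀ i (x : Fin (n i) → X), x ∈ R i →
        ∃ r, ∃ h : (T r).1 = n i, (fun p => x (Fin.cast h p)) ∉ (T r).2 := by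
  classical
  have h0 : ∀ i, ∃ D : ℕ → Set (Fin (n i) → X),
      (∀ m, IsOpen (D m)) ∧ (∀ m, Dense (D m)) ∧ (⋂ m, D m) ⊆ (R i)ᶜ := by
    intro i
    exact residual_seq (hR i)
  choose D hDo hDd hDsub using h0
  obtain ⟨f, hf⟩ := exists_surjective_nat (Option ((i : ι) × ℕ))
  set T : ℕ → Σ m : ℕ, Set (Fin m → X) :=
    fun r => (f r).elim ⟨1, Set.univ⟩ (fun p => ⟨n p.1, D p.1 p.2⟩) with hTdef
  have hTval : ∀ r (p : (i : ι) × ℕ), f r = some p → T r = ⟨n p.1, D p.1 p.2⟩ := by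
    intro r p hp
    rw [hTdef]
    show (f r).elim _ _ = _
    rw [hp]
    rfl
  have hTnone : ∀ r, f r = none → T r = ⟨1, Set.univ⟩ := by
    intro r hp
    rw [hTdef]
    show (f r).elim _ _ = _
    rw [hp]
    rfl
  refine ⟨T, ?_, ?_⟩
  · intro r
    rcases hfr : f r with _ | p
    · rw [hTnone r hfr]
      exact ⟨isOpen_univ, dense_univ⟩
    · rw [hTval r p hfr]
      exact ⟨hDo p.1 p.2, hDd p.1 p.2⟩
  · intro i x hx
    have h1 : x ∉ ⋂ m, D i m := fun h => hDsub i h hx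
    have h2 : ∃ m, x ∉ D i m := by
      by_contra h
      push_neg at h
      exact h1 (Set.mem_iInter.2 h)
    obtain ⟨m, hm⟩ := h2
    obtain ⟨r, hr⟩ := hf (some ⟨i, m⟩)
    have hTr : T r = ⟨n i, D i m⟩ := hTval r ⟨i, m⟩ hr
    refine ⟨r, congrArg Sigma.fst hTr, ?_⟩
    intro hmem
    exact hm (sigma_mem hTr x hmem)


end Maintech

set_option linter.unusedVariables false in
theorem maintech {ι : Type*} [Countable ι] (n : ι → ℕ) (hn : ∀ i, 1 ≤ n i)
    (R : ∀ i, Set (Fin (n i) → (ℕ → Bool))) (hR : ∀ i, IsMeagre (R i)) :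
    ∃ (A : Type) (E : A → Set (ℕ → Bool)), Cardinal.mk A = Cardinal.continuum ∧
      (∀ a : A, NowhereMeager (E a)) ∧
      ∀ i (a : Fin (n i) → A), Function.Injective a →
        ∀ x : Fin (n i) → (ℕ → Bool), (∀ k, x k ∈ E (a k)) → x ∉ R i := by
  classical
  obtain ⟨T, hT, hcov⟩ := Maintech.exists_master n R hR
  refine ⟨(ℕ → Bool), fun z => Maintech.Ez T hT z, ?_, ?_, ?_⟩
  · rw [← Cardinal.two_power_aleph0, ← Cardinal.mk_bool, ← Cardinal.mk_nat,
      Cardinal.power_def]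
  · intro a U hUo hUne
    exact Maintech.Ez_not_meagre T hT a hUo hUne
  · intro i a ha x hx hxR
    obtain ⟨r, h, hnot⟩ := hcov i x hxR
    refine hnot (Maintech.Ez_free T hT r (fun p => a (Fin.cast h p)) ?_
      (fun p => x (Fin.cast h p)) ?_)
    · intro p q hpq hcontra
      exact hpq (Fin.cast_injective h (ha hcontra))
    · intro p
      exact hx (Fin.cast h p)
end

section
/- Let X be a crowded Polish space and 𝓖 a non-empty collection of dense G_δ subsets of X with |𝓖| < 𝔡. If ⋂𝓖 is dense in X, then ⋂𝓖 is non-meager in X. -/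
/-- The dominating number `𝔡`. -/
noncomputable def dNumber : Cardinal :=
  sInf { c | ∃ D : Set (ℕ → ℕ), Cardinal.mk D = c ∧
    ∀ g : ℕ → ℕ, ∃ f ∈ D, ∀ᶠ m in Filter.atTop, g m ≤ f m }


lemma dNumber_not_dominating (D : Set (ℕ → ℕ)) (h : Cardinal.mk D < dNumber) :
    ∃ g : ℕ → ℕ, ∀ f ∈ D, ∃ᶠ m in Filter.atTop, f m < g m := by
  by_contra hc
  push_neg at hc
  have : dNumber ≤ Cardinal.mk D := by
    apply csInf_le (OrderBot.bddBelow _)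
    refine ⟨D, rfl, fun g => ?_⟩
    obtain ⟨f, hfD, hf⟩ := hc g
    exact ⟨f, hfD, by simpa [Filter.not_frequently, not_lt] using hf⟩
  exact absurd h (not_lt.mpr this)

lemma iterate_le_iterate_cnt {g : ℕ → ℕ} (hg : ∀ k, k ≤ g k) (hmono : Monotone g) :
    ∀ (a b x : ℕ), a ≤ b → g^[a] x ≤ g^[b] x := by
  intro a b x hab
  induction b with
  | zero => simp_all
  | succ b ih =>
    rcases Nat.lt_or_ge a (b + 1) with h | h
    · calc g^[a] x ≤ g^[b] x := ih (Nat.lt_succ_iff.mp h)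
        _ ≤ g^[b + 1] x := by rw [Function.iterate_succ_apply']; exact hg _
    · have : a = b + 1 := le_antisymm hab h
      simp [this]

lemma exists_escaping {ι : Type} (γ : ι → ℕ → ℕ) (hcard : Cardinal.mk ι < dNumber) :
    ∃ h : ℕ → ℕ, Monotone h ∧ (∀ m, m ≤ h m) ∧
      ∀ i n, ∃ m, n ≤ m ∧ γ i (h m) < h (m + 1) := by
  classical
  set gs : ι → ℕ → ℕ := fun i k => (Finset.range (k + 1)).sup (γ i) + k + 1 with hgs
  have hgs_mono : ∀ i, Monotone (gs i) := by
    intro i a b hab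
    have : (Finset.range (a + 1)).sup (γ i) ≤ (Finset.range (b + 1)).sup (γ i) :=
      Finset.sup_mono (Finset.range_subset_range.mpr (by omega))
    simp only [hgs]; omega
  have hgs_le : ∀ i k, k ≤ gs i k := fun i k => by simp only [hgs]; omega
  have hγ_lt : ∀ i k, γ i k < gs i k := by
    intro i k
    have : γ i k ≤ (Finset.range (k + 1)).sup (γ i) := Finset.le_sup (by simp)
    simp only [hgs]; omega
  set gg : ι → ℕ → ℕ := fun i n => (gs i)^[n + 1] n with hgg
  obtain ⟨h₀, hh₀⟩ := dNumber_not_dominating (Set.range gg)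
      (lt_of_le_of_lt Cardinal.mk_range_le hcard)
  set h : ℕ → ℕ := fun m => max m ((Finset.range (m + 1)).sup h₀) with hh
  have hmono : Monotone h := by
    intro a b hab
    simp only [hh]
    exact max_le_max hab (Finset.sup_mono (Finset.range_subset_range.mpr (by omega)))
  have hge : ∀ m, m ≤ h m := fun m => le_max_left _ _
  have hh₀le : ∀ m, h₀ m ≤ h m := fun m => le_max_of_le_right (Finset.le_sup (by simp))
  refine ⟨h, hmono, hge, ?_⟩
  intro i n
  by_contra hcon
  push_neg at hcon
  have hstep : ∀ m, n ≤ m → h (m + 1) ≤ gs i (h m) :=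
    fun m hm => (hcon m hm).trans (le_of_lt (hγ_lt i (h m)))
  have hiter : ∀ k, h (n + k) ≤ (gs i)^[k] (h n) := by
    intro k
    induction k with
    | zero => simp
    | succ k ih =>
      calc h (n + (k + 1)) = h ((n + k) + 1) := by ring_nf
        _ ≤ gs i (h (n + k)) := hstep (n + k) (by omega)
        _ ≤ gs i ((gs i)^[k] (h n)) := hgs_mono i ih
        _ = (gs i)^[k + 1] (h n) := (Function.iterate_succ_apply' _ _ _).symm
  obtain ⟨N, hN1, hN2⟩ := Filter.frequently_atTop.mp (hh₀ (gg i) ⟨i, rfl⟩) (max n (h n))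
  have h1 : h N ≤ (gs i)^[N - n] (h n) := by
    have := hiter (N - n)
    rwa [Nat.add_sub_cancel' (le_trans (le_max_left _ _) hN1)] at this
  have h2 : (gs i)^[N - n] (h n) ≤ (gs i)^[N - n] N :=
    (hgs_mono i).iterate _ (le_trans (le_max_right _ _) hN1)
  have h3 : (gs i)^[N - n] N ≤ (gs i)^[N + 1] N :=
    iterate_le_iterate_cnt (hgs_le i) (hgs_mono i) _ _ _ (by omega)
  have : h N < h N := lt_of_le_of_lt (h1.trans (h2.trans h3)) (lt_of_lt_of_le hN2 (hh₀le N))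
  exact absurd this (lt_irrefl _)


lemma finite_short_lists (n m : ℕ) :
    {l : List ℕ | l.length ≤ n ∧ ∀ x ∈ l, x ≤ m}.Finite := by
  induction n with
  | zero =>
    apply Set.Finite.subset (Set.finite_singleton ([] : List ℕ))
    rintro l ⟨hl, -⟩
    simp [List.length_eq_zero_iff.mp (Nat.le_zero.mp hl)]
  | succ n ih =>
    apply Set.Finite.subset
      ((Set.finite_singleton ([] : List ℕ)).union
        (((Set.finite_Iic m).prod ih).image (fun p => p.1 :: p.2)))
    rintro l ⟨hl, he⟩
    cases l with
    | nil => exact Or.inl rfl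
    | cons a t =>
      refine Or.inr ⟨(a, t), ⟨he a (by simp), ?_, fun x hx => he x (by simp [hx])⟩, rfl⟩
      simpa using Nat.lt_succ_iff.mp (lt_of_lt_of_le (by simp) hl)

lemma exists_step {X : Type} [MetricSpace X] {Q : Set X} (hQ : Dense Q)
    {F : Set X} (hFc : IsClosed F) (hFi : interior F = ∅)
    (p : X) (ρ : ℝ) (hρ : 0 < ρ) (j : ℕ) :
    ∃ z : X × ℝ, z.1 ∈ Q ∧ 0 < z.2 ∧
      dist z.1 p + z.2 < (2 : ℝ)⁻¹ ^ (j + 1) * ρ ∧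
      Metric.closedBall z.1 z.2 ∩ F = ∅ := by
  set δ : ℝ := (2 : ℝ)⁻¹ ^ (j + 1) * ρ / 2 with hδ
  have hδpos : 0 < δ := by positivity
  have hne : ((Metric.ball p δ) \ F).Nonempty := by
    by_contra h
    have hsub : Metric.ball p δ ⊆ F := by
      intro x hx
      by_contra hxF
      exact h ⟨x, hx, hxF⟩
    have h2 : Metric.ball p δ ⊆ interior F := interior_maximal hsub Metric.isOpen_ball
    rw [hFi] at h2
    exact h2 (Metric.mem_ball_self hδpos)
  obtain ⟨q, hqQ, hqb⟩ := hQ.exists_mem_open (Metric.isOpen_ball.sdiff hFc) hne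
  obtain ⟨ε, hε, hεsub⟩ := Metric.isOpen_iff.mp hFc.isOpen_compl q hqb.2
  refine ⟨(q, min (ε / 2) (δ / 2)), hqQ, by positivity, ?_, ?_⟩
  · have h1 : dist q p < δ := hqb.1
    have h2 : min (ε / 2) (δ / 2) ≤ δ / 2 := min_le_right _ _
    have : (2 : ℝ)⁻¹ ^ (j + 1) * ρ = 2 * δ := by rw [hδ]; ring
    rw [this]; linarith
  · rw [Set.eq_empty_iff_forall_notMem]
    rintro x ⟨hx1, hx2⟩
    have : x ∈ Metric.ball q ε := by
      have : dist x q ≤ min (ε / 2) (δ / 2) := hx1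
      have h2 : min (ε / 2) (δ / 2) ≤ ε / 2 := min_le_left _ _
      exact Metric.mem_ball.mpr (by linarith)
    exact hεsub this hx2

noncomputable def buildScheme {X : Type} [MetricSpace X] {Q : Set X} (hQ : Dense Q)
    {F : ℕ → Set X} (hFc : ∀ n, IsClosed (F n)) (hFi : ∀ n, interior (F n) = ∅)
    (q0 : X) (hq0 : q0 ∈ Q) : List ℕ → {z : X × ℝ // z.1 ∈ Q ∧ 0 < z.2}
  | [] => ⟨(q0, 1), hq0, one_pos⟩
  | (j :: s) =>
    let prev := buildScheme hQ hFc hFi q0 hq0 s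
    let spec := exists_step hQ (hFc s.length) (hFi s.length) prev.1.1 prev.1.2 prev.2.2 j
    ⟨spec.choose, spec.choose_spec.1, spec.choose_spec.2.1⟩

lemma buildScheme_spec {X : Type} [MetricSpace X] {Q : Set X} (hQ : Dense Q)
    {F : ℕ → Set X} (hFc : ∀ n, IsClosed (F n)) (hFi : ∀ n, interior (F n) = ∅)
    (q0 : X) (hq0 : q0 ∈ Q) (j : ℕ) (s : List ℕ) :
    dist (buildScheme hQ hFc hFi q0 hq0 (j :: s)).1.1 (buildScheme hQ hFc hFi q0 hq0 s).1.1
        + (buildScheme hQ hFc hFi q0 hq0 (j :: s)).1.2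
      < (2 : ℝ)⁻¹ ^ (j + 1) * (buildScheme hQ hFc hFi q0 hq0 s).1.2 ∧
    Metric.closedBall (buildScheme hQ hFc hFi q0 hq0 (j :: s)).1.1
        (buildScheme hQ hFc hFi q0 hq0 (j :: s)).1.2 ∩ F s.length = ∅ := by
  have h := (exists_step hQ (hFc s.length) (hFi s.length)
    (buildScheme hQ hFc hFi q0 hq0 s).1.1 (buildScheme hQ hFc hFi q0 hq0 s).1.2
    (buildScheme hQ hFc hFi q0 hq0 s).2.2 j).choose_spec
  exact ⟨h.2.2.1, h.2.2.2⟩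

lemma buildScheme_nil {X : Type} [MetricSpace X] {Q : Set X} (hQ : Dense Q)
    {F : ℕ → Set X} (hFc : ∀ n, IsClosed (F n)) (hFi : ∀ n, interior (F n) = ∅)
    (q0 : X) (hq0 : q0 ∈ Q) : (buildScheme hQ hFc hFi q0 hq0 []).1 = (q0, 1) := rfl


theorem inter_denseGdelta_nonmeager {X : Type} [TopologicalSpace X] [PolishSpace X]
    [Nonempty X] (hX : Perfect (Set.univ : Set X))
    (G : Set (Set X)) (hne : G.Nonempty) (hcard : Cardinal.mk G < dNumber)
    (hG : ∀ s ∈ G, Dense s ∧ IsGδ s) (hdense : Dense (⋂₀ G)) :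
    ¬ IsMeagre (⋂₀ G) := by
  intro hm
  letI := TopologicalSpace.upgradeIsCompletelyMetrizable X
  -- meager decomposition into closed sets with empty interior
  obtain ⟨S, hS_nwd, hS_ct, hS_cover⟩ := isMeagre_iff_countable_union_isNowhereDense.mp hm
  obtain ⟨e, he⟩ := Set.Countable.exists_eq_range (hS_ct.insert ∅) (Set.insert_nonempty _ _)
  set Fn : ℕ → Set X := fun n => closure (e n) with hFn
  have hFc : ∀ n, IsClosed (Fn n) := fun n => isClosed_closure
  have hFi : ∀ n, interior (Fn n) = ∅ := by
    intro n
    have hmem : e n ∈ insert ∅ S := he ▸ Set.mem_range_self n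
    rcases hmem with h | h
    · simp only [hFn, h, closure_empty, interior_empty]
    · exact hS_nwd _ h
  -- countable dense subset of ⋂₀ G
  obtain ⟨Q, hQsub, hQct, hQdense⟩ := hdense.exists_countable_dense_subset
  obtain ⟨q0, hq0⟩ : Q.Nonempty := hQdense.nonempty
  -- decreasing open approximations of each member of G
  have hU : ∀ g : ↥G, ∃ U : ℕ → Set X, (∀ n, IsOpen (U n)) ∧ (∀ n, (g : Set X) ⊆ U n) ∧
      Antitone U ∧ (⋂ n, U n) ⊆ (g : Set X) := by
    rintro ⟨g, hg⟩
    obtain ⟨T, hTo, hTc, hTeq⟩ := (hG g hg).2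
    obtain ⟨V, hV⟩ := Set.Countable.exists_eq_range (hTc.insert Set.univ) (Set.insert_nonempty _ _)
    have hVmem : ∀ i, V i ∈ insert Set.univ T := fun i => hV ▸ Set.mem_range_self i
    refine ⟨fun n => ⋂ i ∈ Finset.range (n + 1), V i, ?_, ?_, ?_, ?_⟩
    · intro n
      apply isOpen_biInter_finset
      intro i _
      rcases hVmem i with h | h
      · rw [h]; exact isOpen_univ
      · exact hTo _ h
    · intro n
      apply Set.subset_iInter₂
      intro i _
      show g ⊆ V i
      rcases hVmem i with h | h
      · rw [h]; exact Set.subset_univ _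
      · rw [hTeq]; exact Set.sInter_subset_of_mem h
    · intro a b hab x hx
      simp only [Set.mem_iInter] at *
      intro i hi
      exact hx i (by simp only [Finset.mem_range] at *; omega)
    · intro x hx
      simp only [Set.mem_iInter] at hx
      show x ∈ g
      rw [hTeq]
      intro t ht
      have : t ∈ Set.range V := hV ▸ Set.mem_insert_of_mem _ ht
      obtain ⟨i, rfl⟩ := this
      exact hx i i (Finset.self_mem_range_succ i)
  choose U hUo hUs hUa hUi using hU
  -- the scheme
  set c : List ℕ → X := fun s => (buildScheme hQdense hFc hFi q0 hq0 s).1.1 with hc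
  set r : List ℕ → ℝ := fun s => (buildScheme hQdense hFc hFi q0 hq0 s).1.2 with hr
  have hcQ : ∀ s, c s ∈ Q := fun s => (buildScheme hQdense hFc hFi q0 hq0 s).2.1
  have hrpos : ∀ s, 0 < r s := fun s => (buildScheme hQdense hFc hFi q0 hq0 s).2.2
  have hstep : ∀ (j : ℕ) (s : List ℕ),
      dist (c (j :: s)) (c s) + r (j :: s) < (2 : ℝ)⁻¹ ^ (j + 1) * r s ∧
      Metric.closedBall (c (j :: s)) (r (j :: s)) ∩ Fn s.length = ∅ :=
    fun j s => buildScheme_spec hQdense hFc hFi q0 hq0 j s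
  have hrnil : r [] = 1 := rfl
  -- choose indices entering the open sets
  have hj : ∀ (g : ↥G) (s : List ℕ), ∃ j : ℕ,
      Metric.ball (c s) ((2 : ℝ)⁻¹ ^ (j + 1) * r s) ⊆ U g s.length := by
    intro g s
    have hcg : c s ∈ (g : Set X) := hQsub (hcQ s) _ g.2
    have hcU : c s ∈ U g s.length := hUs g s.length hcg
    obtain ⟨ε, hε, hεsub⟩ := Metric.isOpen_iff.mp (hUo g s.length) _ hcU
    obtain ⟨n, hn⟩ := exists_pow_lt_of_lt_one (div_pos hε (hrpos s)) (by norm_num : (2:ℝ)⁻¹ < 1)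
    refine ⟨n, Set.Subset.trans (Metric.ball_subset_ball ?_) hεsub⟩
    have h1 : (2 : ℝ)⁻¹ ^ (n + 1) ≤ (2 : ℝ)⁻¹ ^ n :=
      pow_le_pow_of_le_one (by norm_num) (by norm_num) (by omega)
    have h2 : (2 : ℝ)⁻¹ ^ n * r s < ε := (lt_div_iff₀ (hrpos s)).mp hn
    nlinarith [hrpos s]
  choose jf hjf using hj
  -- the bounding functions
  set gf : ↥G → ℕ → ℕ := fun g m => sSup (jf g '' {l : List ℕ | l.length ≤ m ∧ ∀ x ∈ l, x ≤ m})
    with hgf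
  have hgf_le : ∀ (g : ↥G) (m : ℕ) (l : List ℕ), l.length ≤ m → (∀ x ∈ l, x ≤ m) →
      jf g l ≤ gf g m := by
    intro g m l h1 h2
    exact le_csSup ((finite_short_lists m m).image _).bddAbove ⟨l, ⟨h1, h2⟩, rfl⟩
  obtain ⟨h, hhmono, hhge, hhkey⟩ := exists_escaping gf hcard
  set f : ℕ → ℕ := fun m => h (m + 1) with hf
  -- the branch
  set node : ℕ → List ℕ := fun m => Nat.rec [] (fun k s => f k :: s) m with hnode
  have hnode_succ : ∀ m, node (m + 1) = f m :: node m := fun m => rfl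
  have hnode_len : ∀ m, (node m).length = m := by
    intro m
    induction m with
    | zero => rfl
    | succ m ih => rw [hnode_succ]; simp [ih]
  have hnode_mem : ∀ m x, x ∈ node m → ∃ i, i < m ∧ x = f i := by
    intro m
    induction m with
    | zero => intro x hx; simp [hnode] at hx
    | succ m ih =>
      intro x hx
      rw [hnode_succ] at hx
      rcases List.mem_cons.mp hx with h' | h'
      · exact ⟨m, by omega, h'⟩
      · obtain ⟨i, hi, hx⟩ := ih x h'
        exact ⟨i, by omega, hx⟩
  set y : ℕ → X := fun m => c (node m) with hy
  set ρ : ℕ → ℝ := fun m => r (node m) with hρ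
  have hρ0 : ρ 0 = 1 := hrnil
  have hpow_le_one : ∀ k : ℕ, (2 : ℝ)⁻¹ ^ (k + 1) ≤ 1 := by
    intro k
    apply pow_le_one₀ <;> norm_num
  have hρ_half : ∀ m, ρ (m + 1) ≤ 2⁻¹ * ρ m := by
    intro m
    have h1 := (hstep (f m) (node m)).1
    have h2 : (2 : ℝ)⁻¹ ^ (f m + 1) ≤ 2⁻¹ := by
      calc (2 : ℝ)⁻¹ ^ (f m + 1) ≤ (2:ℝ)⁻¹ ^ (0 + 1) :=
            pow_le_pow_of_le_one (by norm_num) (by norm_num) (by omega)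
        _ = 2⁻¹ := by norm_num
    have h3 : dist (c (f m :: node m)) (c (node m)) ≥ 0 := dist_nonneg
    have h4 : (2 : ℝ)⁻¹ ^ (f m + 1) * r (node m) ≤ 2⁻¹ * r (node m) :=
      mul_le_mul_of_nonneg_right h2 (le_of_lt (hrpos _))
    simp only [hρ, hy, hnode_succ]
    linarith
  have hρ_geo : ∀ m, ρ m ≤ (2 : ℝ)⁻¹ ^ m := by
    intro m
    induction m with
    | zero => simp [hρ0]
    | succ m ih =>
      calc ρ (m + 1) ≤ 2⁻¹ * ρ m := hρ_half m
        _ ≤ 2⁻¹ * (2 : ℝ)⁻¹ ^ m := by nlinarith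
        _ = (2 : ℝ)⁻¹ ^ (m + 1) := by ring
  have hdist_succ : ∀ m, dist (y (m + 1)) (y m) + ρ (m + 1) < (2 : ℝ)⁻¹ ^ (f m + 1) * ρ m := by
    intro m
    have := (hstep (f m) (node m)).1
    simpa only [hρ, hy, hnode_succ] using this
  have hcauchy : CauchySeq y := by
    apply cauchySeq_of_le_geometric (2 : ℝ)⁻¹ 1 (by norm_num)
    intro n
    have h1 := hdist_succ n
    have h2 := hρ_geo n
    have h3 := hrpos (node (n + 1))
    have h4 : (2 : ℝ)⁻¹ ^ (f n + 1) * ρ n ≤ 1 * ρ n := by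
      have := hpow_le_one (f n)
      nlinarith [hrpos (node n)]
    rw [dist_comm]
    have : ρ (n + 1) > 0 := hrpos _
    calc dist (y (n + 1)) (y n) ≤ ρ n := by nlinarith
      _ ≤ (2:ℝ)⁻¹ ^ n := h2
      _ = 1 * (2:ℝ)⁻¹ ^ n := by ring
  obtain ⟨x, hx⟩ := cauchySeq_tendsto_of_complete hcauchy
  -- telescoping
  have htel : ∀ m p, m ≤ p → dist (y p) (y m) + ρ p ≤ ρ m := by
    intro m p hmp
    induction p with
    | zero =>
      have : m = 0 := Nat.le_zero.mp hmp
      subst this; simp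
    | succ p ih =>
      rcases Nat.lt_or_ge m (p + 1) with h' | h'
      · have ih' := ih (Nat.lt_succ_iff.mp h')
        have h1 := hdist_succ p
        have h2 : (2 : ℝ)⁻¹ ^ (f p + 1) * ρ p ≤ 1 * ρ p := by
          have := hpow_le_one (f p)
          nlinarith [hrpos (node p)]
        have h3 := dist_triangle (y (p + 1)) (y p) (y m)
        linarith
      · have : m = p + 1 := le_antisymm hmp h'
        subst this; simp
  have hx_cb : ∀ m, dist x (y m) ≤ ρ m := by
    intro m
    have hlim : Filter.Tendsto (fun p => dist (y p) (y m)) Filter.atTop (nhds (dist x (y m))) :=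
      (hx.dist tendsto_const_nhds)
    apply le_of_tendsto hlim
    filter_upwards [Filter.eventually_ge_atTop m] with p hp
    have := htel m p hp
    have := hrpos (node p)
    simp only [hρ] at *
    linarith
  have hx_b : ∀ m, dist x (y m) < (2 : ℝ)⁻¹ ^ (f m + 1) * ρ m := by
    intro m
    have h1 := hx_cb (m + 1)
    have h2 := hdist_succ m
    have h3 := dist_triangle x (y (m + 1)) (y m)
    linarith
  -- x avoids all the Fn
  have hx_notF : ∀ n, x ∉ Fn n := by
    intro n hxF
    have hdisj := (hstep (f n) (node n)).2
    rw [hnode_len] at hdisj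
    have hxcb : x ∈ Metric.closedBall (c (f n :: node n)) (r (f n :: node n)) := by
      have := hx_cb (n + 1)
      simp only [hy, hρ, hnode_succ] at this
      exact Metric.mem_closedBall.mpr this
    exact Set.eq_empty_iff_forall_notMem.mp hdisj x ⟨hxcb, hxF⟩
  -- x belongs to every element of G
  have hx_G : ∀ g : ↥G, x ∈ (g : Set X) := by
    intro g
    apply hUi g
    apply Set.mem_iInter.mpr
    intro n
    obtain ⟨m, hnm, hlt⟩ := hhkey g n
    have hmem_S : (node m).length ≤ h m ∧ ∀ z ∈ node m, z ≤ h m := by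
      constructor
      · rw [hnode_len]; exact hhge m |>.trans (le_refl _) |> fun _ => (hhge m)
      · intro z hz
        obtain ⟨i, hi, rfl⟩ := hnode_mem m z hz
        exact hhmono (by omega : i + 1 ≤ m)
    have hjf_le : jf g (node m) ≤ gf g (h m) := hgf_le g (h m) (node m) hmem_S.1 hmem_S.2
    have hjf_lt : jf g (node m) < f m := lt_of_le_of_lt hjf_le hlt
    have hball : x ∈ Metric.ball (y m) ((2 : ℝ)⁻¹ ^ (jf g (node m) + 1) * ρ m) := by
      apply Metric.mem_ball.mpr
      have h1 := hx_b m
      have h2 : (2 : ℝ)⁻¹ ^ (f m + 1) ≤ (2 : ℝ)⁻¹ ^ (jf g (node m) + 1) :=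
        pow_le_pow_of_le_one (by norm_num) (by norm_num) (by omega)
      have h3 := hrpos (node m)
      simp only [hρ] at *
      nlinarith
    have hxU : x ∈ U g m := by
      have := hjf g (node m)
      rw [hnode_len] at this
      exact this hball
    exact hUa g hnm hxU
  have hx_inter : x ∈ ⋂₀ G := by
    intro s hs
    exact hx_G ⟨s, hs⟩
  obtain ⟨t, htS, hxt⟩ := hS_cover hx_inter
  have : t ∈ Set.range e := he ▸ Set.mem_insert_of_mem _ htS
  obtain ⟨n, rfl⟩ := this
  exact hx_notF n (subset_closure hxt)
end

section
/- There exists a maximal independent family on ω that is meager (indeed nowhere dense) as a subset of 2^ω. -/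
/-- An independent family on `ω`, where subsets of `ω` are identified with elements of the
Cantor space `ℕ → Bool`: every finite Boolean combination of (distinct) members is infinite. -/
def IndepFamily (A : Set (ℕ → Bool)) : Prop :=
  ∀ F : Finset (ℕ → Bool), ↑F ⊆ A → F.Nonempty → ∀ ν : (ℕ → Bool) → Bool,
    {m : ℕ | ∀ x ∈ F, x m = ν x}.Infinite

open Classical

/-- A countable independent family: `Xf n` is the set of (codes of) finite sets containing `n`. -/
noncomputable def Xf (n : ℕ) : ℕ → Bool :=
  fun k => decide (n ∈ ((Encodable.decode (α := Finset ℕ) k).getD ∅))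

lemma Xf_encode (n : ℕ) (s : Finset ℕ) :
    Xf n (Encodable.encode s) = decide (n ∈ s) := by
  simp [Xf, Encodable.encodek]

lemma Xf_inj : Function.Injective Xf := by
  intro n m h
  have h1 := congrFun h (Encodable.encode ({n} : Finset ℕ))
  rw [Xf_encode, Xf_encode] at h1
  simp only [Finset.mem_singleton] at h1
  have hmn : m = n := by simpa using h1.symm
  exact hmn.symm

/-- Index recovery for `Xf`. -/
noncomputable def idxf (x : ℕ → Bool) : ℕ :=
  if h : ∃ n, Xf n = x then h.choose else 0

lemma idxf_spec {x : ℕ → Bool} (hx : x ∈ Set.range Xf) : Xf (idxf x) = x := by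
  obtain ⟨n, rfl⟩ := hx
  rw [idxf, dif_pos ⟨n, rfl⟩]
  exact (⟨n, rfl⟩ : ∃ m, Xf m = Xf n).choose_spec

lemma indep_range_Xf : IndepFamily (Set.range Xf) := by
  intro F hF hFne ν
  set Pos : Finset ℕ := (F.filter (fun x => ν x = true)).image idxf with hPos
  set I : Finset ℕ := F.image idxf with hI
  have key : ∀ t ∉ I, ∀ x ∈ F, x (Encodable.encode (insert t Pos)) = ν x := by
    intro t ht x hxF
    have hxr : x ∈ Set.range Xf := hF hxF
    have hx : Xf (idxf x) = x := idxf_spec hxr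
    have hval : Xf (idxf x) (Encodable.encode (insert t Pos)) =
        decide (idxf x ∈ insert t Pos) := Xf_encode _ _
    rw [hx] at hval
    rw [hval]
    by_cases hν : ν x = true
    · have : idxf x ∈ Pos := Finset.mem_image_of_mem idxf (Finset.mem_filter.2 ⟨hxF, hν⟩)
      simp [Finset.mem_insert, this, hν]
    · have hνf : ν x = false := by simpa using hν
      have h1 : idxf x ≠ t := by
        intro he
        exact ht (he ▸ Finset.mem_image_of_mem idxf hxF)
      have h2 : idxf x ∉ Pos := by
        intro hmem
        obtain ⟨x', hx', he⟩ := Finset.mem_image.1 hmem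
        obtain ⟨hx'F, hx'ν⟩ := Finset.mem_filter.1 hx'
        have : x' = x := by
          rw [← idxf_spec (hF hx'F), ← hx, he]
        rw [this] at hx'ν
        rw [hx'ν] at hνf
        exact absurd hνf (by simp)
      simp [Finset.mem_insert, h1, h2, hνf]
  have hinf : ((I : Set ℕ)ᶜ).Infinite := (I.finite_toSet).infinite_compl
  have hsub : (fun t => Encodable.encode (insert t Pos)) '' ((I : Set ℕ)ᶜ) ⊆
      {m : ℕ | ∀ x ∈ F, x m = ν x} := by
    rintro _ ⟨t, ht, rfl⟩
    exact key t ht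
  have hPosI : (Pos : Set ℕ) ⊆ (I : Set ℕ) := by
    intro a ha
    simp only [hPos, Finset.coe_image, Set.mem_image] at ha
    obtain ⟨x, hx, rfl⟩ := ha
    exact Finset.mem_coe.2 (Finset.mem_image_of_mem idxf (Finset.mem_filter.1 hx).1)
  have hinj : Set.InjOn (fun t => Encodable.encode (insert t Pos)) ((I : Set ℕ)ᶜ) := by
    intro t ht t' ht' he
    have := Encodable.encode_injective he
    have htP : t ∉ Pos := fun h => ht (hPosI h)
    have ht'P : t' ∉ Pos := fun h => ht' (hPosI h)
    have : t ∈ insert t' Pos := this ▸ Finset.mem_insert_self t Pos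
    rcases Finset.mem_insert.1 this with h | h
    · exact h
    · exact absurd h htP
  exact ((hinf.image hinj).mono hsub)

lemma exists_maximal_indep :
    ∃ B : Set (ℕ → Bool), Set.range Xf ⊆ B ∧ IndepFamily B ∧
      ∀ C, B ⊆ C → IndepFamily C → C = B := by
  obtain ⟨m, hsub, hmax⟩ := zorn_subset_nonempty {C : Set (ℕ → Bool) | IndepFamily C}
    (fun c hc hchain hne => by
      refine ⟨⋃₀ c, ?_, fun s hs => Set.subset_sUnion_of_mem hs⟩
      intro F hF hFne ν
      have hdir : DirectedOn (fun i j => (id i : Set (ℕ → Bool)) ⊆ id j) c :=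
        hchain.directedOn
      have hF' : (F : Set (ℕ → Bool)) ⊆ ⋃ i ∈ c, i := by
        rwa [← Set.sUnion_eq_biUnion]
      obtain ⟨C, hCc, hFC⟩ := hdir.exists_mem_subset_of_finset_subset_biUnion hne hF'
      exact hc hCc F hFC hFne ν)
    (Set.range Xf) indep_range_Xf
  exact ⟨m, hsub, hmax.1, fun C hBC hC => hmax.eq_of_ge hC hBC⟩

/-- Push a set into the odd-coordinates-true closed nowhere dense set. -/
def Phi (X : ℕ → Bool) : ℕ → Bool :=
  fun m => if m % 2 = 1 then true else X (m / 2)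

lemma Phi_even (X : ℕ → Bool) (n : ℕ) : Phi X (2 * n) = X n := by
  simp [Phi, Nat.mul_mod_right, Nat.mul_div_cancel_left _ (by norm_num : (0:ℕ) < 2)]

lemma Phi_odd (X : ℕ → Bool) (n : ℕ) : Phi X (2 * n + 1) = true := by
  have h : (2 * n + 1) % 2 = 1 := by omega
  simp [Phi, h]

lemma Phi_false_even {X : ℕ → Bool} {m : ℕ} (h : Phi X m = false) : m = 2 * (m / 2) := by
  by_contra hm
  have h2 : m % 2 = 1 := by omega
  simp [Phi, h2] at h

/-- Pull back via even coordinates. -/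
def Psi (z : ℕ → Bool) : ℕ → Bool := fun n => z (2 * n)

lemma Psi_Phi (X : ℕ → Bool) : Psi (Phi X) = X := by
  funext n; exact Phi_even X n

lemma Phi_inj : Function.Injective Phi := by
  intro X Y h
  rw [← Psi_Phi X, ← Psi_Phi Y, h]

theorem exists_meager_maximal_independent :
    ∃ A : Set (ℕ → Bool), IndepFamily A ∧
      (∀ B : Set (ℕ → Bool), A ⊆ B → IndepFamily B → B = A) ∧
      IsNowhereDense A ∧ IsMeagre A := by
  obtain ⟨B, hB0, hBindep, hBmax⟩ := exists_maximal_indep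
  have hBinf : B.Infinite :=
    ((Set.infinite_range_of_injective Xf_inj).mono hB0)
  have hsubP : Phi '' B ⊆ {z : ℕ → Bool | ∀ n, z (2 * n + 1) = true} := by
    rintro _ ⟨X, _, rfl⟩ n
    exact Phi_odd X n
  have hPc : IsClosed {z : ℕ → Bool | ∀ n, z (2 * n + 1) = true} := by
    have heq : {z : ℕ → Bool | ∀ n, z (2 * n + 1) = true} =
        ⋂ n, (fun z : ℕ → Bool => z (2 * n + 1)) ⁻¹' {true} := by
      ext z; simp [Set.mem_iInter]
    rw [heq]
    exact isClosed_iInter fun n => (isClosed_singleton.preimage (continuous_apply _))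
  have hPint : interior {z : ℕ → Bool | ∀ n, z (2 * n + 1) = true} = ∅ := by
    rw [interior_eq_empty_iff_dense_compl]
    intro z
    have htend : Filter.Tendsto (fun k => Function.update z (2 * k + 1) false)
        Filter.atTop (nhds z) := by
      rw [tendsto_pi_nhds]
      intro m
      apply Filter.Tendsto.congr' _ tendsto_const_nhds
      filter_upwards [Filter.eventually_ge_atTop m] with k hk
      rw [Function.update_of_ne (show m ≠ 2 * k + 1 by omega)]
    refine mem_closure_of_tendsto htend (Filter.Eventually.of_forall fun k => ?_)
    intro hmem
    have := hmem k
    rw [Function.update_self] at this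
    exact absurd this (by simp)
  have hnd : IsNowhereDense (Phi '' B) := by
    rw [IsNowhereDense, Set.eq_empty_iff_forall_notMem]
    intro z hz
    have h1 : z ∈ interior {z : ℕ → Bool | ∀ n, z (2 * n + 1) = true} :=
      interior_mono (closure_minimal hsubP hPc) hz
    rw [hPint] at h1
    exact h1
  refine ⟨Phi '' B, ?_, ?_, ?_, ?_⟩
  · -- independence of A
    intro F hF hFne ν
    have hF' : (F.image Psi : Set (ℕ → Bool)) ⊆ B := by
      intro X hX
      obtain ⟨x, hxF, rfl⟩ := Finset.mem_image.1 (Finset.mem_coe.1 hX)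
      obtain ⟨Y, hY, rfl⟩ := hF hxF
      rwa [Psi_Phi]
    have hne' : (F.image Psi).Nonempty := hFne.image Psi
    have hinf := hBindep (F.image Psi) hF' hne' (ν ∘ Phi)
    have hsub : (fun n => 2 * n) '' {n : ℕ | ∀ X ∈ F.image Psi, X n = (ν ∘ Phi) X} ⊆
        {m : ℕ | ∀ x ∈ F, x m = ν x} := by
      rintro _ ⟨n, hn, rfl⟩
      intro x hxF
      obtain ⟨Y, hY, rfl⟩ := hF hxF
      have hmem : Psi (Phi Y) ∈ F.image Psi := Finset.mem_image_of_mem Psi hxF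
      have h2 : Y n = ν (Phi Y) := by
        have := hn _ hmem
        rw [Psi_Phi] at this
        simpa using this
      show Phi Y (2 * n) = ν (Phi Y)
      rw [Phi_even]; exact h2
    exact (hinf.image (fun a _ b _ h => by omega)).mono hsub
  · -- maximality
    intro C hAC hC
    refine Set.Subset.antisymm ?_ hAC
    intro y hyC
    set Xy := Psi y with hXydef
    have hXyB : Xy ∈ B := by
      by_contra hXyB
      have hyA : y ∉ Phi '' B := by
        rintro ⟨Z, hZ, rfl⟩
        exact hXyB (by rw [hXydef, Psi_Phi]; exact hZ)
      have hind : IndepFamily (insert Xy B) := by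
        intro G hG hGne μ
        by_cases hXyG : Xy ∈ G
        · set G' := G.erase Xy with hG'def
          have hG'B : (G' : Set (ℕ → Bool)) ⊆ B := by
            intro X hX
            have hXne : X ≠ Xy := Finset.ne_of_mem_erase hX
            rcases hG (Finset.mem_coe.2 (Finset.mem_of_mem_erase hX)) with h | h
            · exact absurd h hXne
            · exact h
          obtain ⟨b, hbB, hbG'⟩ : ∃ b ∈ B, b ∉ G' := by
            obtain ⟨b, hb⟩ := (hBinf.diff G'.finite_toSet).nonempty
            exact ⟨b, hb.1, fun h => hb.2 (Finset.mem_coe.2 h)⟩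
          have hPhib_ne_y : Phi b ≠ y := by
            intro h
            exact hyA ⟨b, hbB, h⟩
          set i := μ Xy with hidef
          set nu2 : (ℕ → Bool) → Bool :=
            fun x => if x = y then i else if x = Phi b then false else μ (Psi x) with hnu2
          set F : Finset (ℕ → Bool) := insert y (insert (Phi b) (G'.image Phi)) with hFdef
          have hFC : (F : Set (ℕ → Bool)) ⊆ C := by
            intro x hx
            rcases Finset.mem_insert.1 (Finset.mem_coe.1 hx) with rfl | hx
            · exact hyC
            rcases Finset.mem_insert.1 hx with rfl | hx
            · exact hAC ⟨b, hbB, rfl⟩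
            obtain ⟨X, hXG', rfl⟩ := Finset.mem_image.1 hx
            exact hAC ⟨X, hG'B hXG', rfl⟩
          have hT := hC F hFC ⟨y, Finset.mem_insert_self _ _⟩ nu2
          have hPhibF : Phi b ∈ F := Finset.mem_insert.2 (Or.inr (Finset.mem_insert_self _ _))
          have heven : ∀ m ∈ {m : ℕ | ∀ x ∈ F, x m = nu2 x}, m = 2 * (m / 2) := by
            intro m hm
            have hb := hm (Phi b) hPhibF
            have : nu2 (Phi b) = false := by
              rw [hnu2]; simp [hPhib_ne_y]
            rw [this] at hb
            exact Phi_false_even hb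
          have hsub2 : (fun m => m / 2) '' {m : ℕ | ∀ x ∈ F, x m = nu2 x} ⊆
              {n : ℕ | ∀ X ∈ G, X n = μ X} := by
            rintro _ ⟨m, hm, rfl⟩
            have hme := heven m hm
            intro X hXG
            by_cases hX : X = Xy
            · have hy := hm y (Finset.mem_insert_self _ _)
              have hνy : nu2 y = i := by rw [hnu2]; simp
              rw [hνy] at hy
              rw [hX]
              show y (2 * (m / 2)) = μ Xy
              rw [← hme, hy]
            · have hXG'' : X ∈ G' := Finset.mem_erase.2 ⟨hX, hXG⟩
              have hPhiXF : Phi X ∈ F := Finset.mem_insert.2 (Or.inr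
                (Finset.mem_insert.2 (Or.inr (Finset.mem_image_of_mem Phi hXG''))))
              have hx := hm (Phi X) hPhiXF
              have hne1 : Phi X ≠ y := by
                intro h
                exact hyA ⟨X, hG'B hXG'', h⟩
              have hne2 : Phi X ≠ Phi b := by
                intro h
                exact hbG' (Phi_inj h ▸ hXG'')
              have hνx : nu2 (Phi X) = μ X := by
                rw [hnu2]; simp only [if_neg hne1, if_neg hne2, Psi_Phi]
              rw [hνx] at hx
              rw [← Phi_even X (m / 2), ← hme]
              exact hx
          have hinj2 : Set.InjOn (fun m => m / 2) {m : ℕ | ∀ x ∈ F, x m = nu2 x} := by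
            intro m hm m' hm' h
            have h' : m / 2 = m' / 2 := h
            have h1 := heven m hm
            have h2 := heven m' hm'
            omega
          exact ((hT.image hinj2).mono hsub2)
        · have hGB : (G : Set (ℕ → Bool)) ⊆ B := by
            intro X hX
            rcases hG hX with h | h
            · exact absurd (h ▸ Finset.mem_coe.1 hX) hXyG
            · exact h
          exact hBindep G hGB hGne μ
      have heq := hBmax (insert Xy B) (Set.subset_insert _ _) hind
      exact hXyB (heq ▸ Set.mem_insert Xy B)
    have hyPhi : y = Phi Xy := by
      by_contra hne
      have hF2 : (({Phi Xy, y} : Finset (ℕ → Bool)) : Set (ℕ → Bool)) ⊆ C := by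
        intro x hx
        rcases Finset.mem_insert.1 (Finset.mem_coe.1 hx) with rfl | hx
        · exact hAC ⟨Xy, hXyB, rfl⟩
        · rw [Finset.mem_singleton.1 hx]; exact hyC
      have hT2 := hC {Phi Xy, y} hF2 ⟨y, by simp⟩
        (fun x => if x = y then true else false)
      obtain ⟨m, hm⟩ := hT2.nonempty
      have h1 : Phi Xy m = false := by
        have := hm (Phi Xy) (by simp)
        simpa [if_neg (Ne.symm (Ne.symm (fun h => hne h.symm)))] using this
      have h2 : y m = true := by
        have := hm y (by simp)
        simpa using this
      have hme := Phi_false_even h1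
      have h3 : Xy (m / 2) = false := by
        rw [← Phi_even Xy (m / 2), ← hme]; exact h1
      have h4 : y (2 * (m / 2)) = false := h3
      rw [← hme, h2] at h4
      exact absurd h4 (by simp)
    exact hyPhi ▸ ⟨Xy, hXyB, rfl⟩
  · exact hnd
  · rw [isMeagre_iff_countable_union_isNowhereDense]
    exact ⟨{Phi '' B}, fun t ht => by rw [Set.mem_singleton_iff] at ht; rw [ht]; exact hnd,
      Set.countable_singleton _, Set.subset_sUnion_of_mem rfl⟩
end

section
/- For each 1 ≤ n < ω and ν : n → 2, the relation R_ν = { x ∈ (2^ω)^n : ⋂_{k<n} x(k)^{ν(k)} is finite } is a meager subset of (2^ω)^n, where for z ∈ 2^ω, z^1 denotes {i : z(i) = 1} and z^0 denotes its complement. -/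
open Set Filter

theorem Rnu_meager (n : ℕ) (hn : 1 ≤ n) (ν : Fin n → Bool) :
    IsMeagre {x : Fin n → (ℕ → Bool) | {m : ℕ | ∀ k : Fin n, x k m = ν k}.Finite} := by
  set D : ℕ → Set (Fin n → (ℕ → Bool)) :=
    fun N => {x | ∃ m ≥ N, ∀ k : Fin n, x k m = ν k} with hD
  have hopen : ∀ N, IsOpen (D N) := by
    intro N
    have : D N = ⋃ m ∈ Ici N, ⋂ k : Fin n, {x : Fin n → (ℕ → Bool) | x k m = ν k} := by
      ext x; simp [hD]
    rw [this]
    refine isOpen_biUnion fun m _ => isOpen_iInter_of_finite fun k => ?_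
    exact IsOpen.preimage (by continuity) (isOpen_discrete {b : Bool | b = ν k})
  have hdense : ∀ N, Dense (D N) := by
    intro N
    rw [dense_iff_closure_eq, Set.eq_univ_iff_forall]
    intro x
    refine mem_closure_of_tendsto (f := fun j : ℕ => fun k m => if m = j then ν k else x k m)
      (b := (atTop : Filter ℕ)) ?_ ?_
    · rw [tendsto_pi_nhds]
      intro k
      rw [tendsto_pi_nhds]
      intro m
      refine tendsto_nhds_of_eventually_eq ?_
      filter_upwards [eventually_gt_atTop m] with j hj
      simp [Nat.ne_of_lt hj]
    · filter_upwards [eventually_ge_atTop N] with j hj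
      exact ⟨j, hj, fun k => by simp⟩
  have hmeagre : ∀ N, IsMeagre (D N)ᶜ := by
    intro N
    rw [IsMeagre, compl_compl]
    exact residual_of_dense_open (hopen N) (hdense N)
  have hsub : {x : Fin n → (ℕ → Bool) | {m : ℕ | ∀ k : Fin n, x k m = ν k}.Finite}
      ⊆ ⋃ N, (D N)ᶜ := by
    intro x hx
    obtain ⟨N, hN⟩ := hx.bddAbove
    refine mem_iUnion.mpr ⟨N + 1, ?_⟩
    rintro ⟨m, hm, hmk⟩
    exact absurd (hN hmk) (by omega)
  exact (isMeagre_iUnion hmeagre).mono hsub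
end

section
/- Let X be a crowded Polish space, 𝓡 a non-empty collection of symmetric meager F_σ relations on X with |𝓡| < 𝔡, and suppose F ⊆ X with |F| < 𝔡 and Q ⊆ F is a countable crowded subset, such that the freeness condition ⊛(F, 𝓡) holds. Then there exists z ∈ cl(Q) ∖ Q such that ⊛(F ∪ {z}, 𝓡) holds; in particular F ∪ {z} is 𝓡-free. -/
/-- A relation `S ⊆ X^m` is symmetric if it is invariant under coordinate permutations. -/
def PermSymmetric {X : Type*} {m : ℕ} (S : Set (Fin m → X)) : Prop :=
  ∀ (π : Equiv.Perm (Fin m)) (x : Fin m → X), x ∈ S → x ∘ π ∈ S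

/-- A set is `F_σ` if it is a countable union of closed sets. -/
def IsFsigma {X : Type*} [TopologicalSpace X] (s : Set X) : Prop :=
  ∃ f : ℕ → Set X, (∀ k, IsClosed (f k)) ∧ s = ⋃ k, f k

open Filter Set

lemma dNumber_mem : dNumber ∈ { c | ∃ D : Set (ℕ → ℕ), Cardinal.mk D = c ∧
    ∀ g : ℕ → ℕ, ∃ f ∈ D, ∀ᶠ m in Filter.atTop, g m ≤ f m } := by
  apply csInf_mem
  exact ⟨Cardinal.mk (Set.univ : Set (ℕ → ℕ)), Set.univ, rfl,
    fun g => ⟨g, mem_univ g, Eventually.of_forall fun m => le_rfl⟩⟩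

lemma aleph0_lt_dNumber : Cardinal.aleph0 < dNumber := by
  obtain ⟨D, hD, hdom⟩ := dNumber_mem
  rw [← hD]
  by_contra hle
  push_neg at hle
  have hc : D.Countable := by
    rwa [← Set.countable_coe_iff, ← Cardinal.mk_le_aleph0_iff]
  rcases D.eq_empty_or_nonempty with rfl | hne
  · obtain ⟨f, hf, -⟩ := hdom 0
    exact hf
  · obtain ⟨u, hu⟩ := hc.exists_eq_range hne
    set g : ℕ → ℕ := fun m => (Finset.range (m+1)).sup (fun k => u k m) + 1 with hg
    obtain ⟨f, hf, hev⟩ := hdom g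
    rw [hu] at hf
    obtain ⟨k, rfl⟩ := hf
    obtain ⟨M, hM⟩ := hev.exists_forall_of_atTop
    have h1 : g (max M k) ≤ u k (max M k) := hM _ (le_max_left _ _)
    have h2 : u k (max M k) < g (max M k) := by
      have h3 : u k (max M k) ≤ (Finset.range (max M k + 1)).sup (fun j => u j (max M k)) :=
        Finset.le_sup (f := fun j => u j (max M k))
          (Finset.mem_range.2 (Nat.lt_succ_of_le (le_max_right M k)))
      simpa [hg] using Nat.lt_succ_of_le h3
    omega

lemma escape_lemma {J : Type} (hJ : Cardinal.mk J < dNumber) (B : J → ℕ → ℕ) :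
    ∃ g : ℕ → ℕ, ∀ j, ∃ m, B j m < g m := by
  by_contra h
  push_neg at h
  have : dNumber ≤ Cardinal.mk (Set.range B) := by
    apply csInf_le'
    refine ⟨Set.range B, rfl, fun g => ?_⟩
    obtain ⟨j, hj⟩ := h g
    exact ⟨B j, mem_range_self j, Eventually.of_forall hj⟩
  exact absurd this (not_le.mpr (Cardinal.mk_range_le.trans_lt hJ))


lemma pair_mono {a a' b b' : ℕ} (ha : a ≤ a') (hb : b ≤ b') :
    Nat.pair a b ≤ Nat.pair a' b' := by
  unfold Nat.pair
  split_ifs with h1 h2 h2 <;> nlinarith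

def psi : ℕ → ℕ → ℕ
  | 0, _ => 0
  | (k+1), M => Nat.pair (psi k M) M + 1

def lvl : ℕ → ℕ
  | 0 => 0
  | (m+1) => lvl (Nat.unpair m).1 + 1
decreasing_by exact Nat.lt_succ_of_le (Nat.unpair_left_le m)

noncomputable def rad : ℕ → ℝ
  | 0 => 1
  | (m+1) => rad (Nat.unpair m).1 * (2⁻¹) ^ ((Nat.unpair m).2 + 2)
decreasing_by exact Nat.lt_succ_of_le (Nat.unpair_left_le m)

lemma rad_pos : ∀ n, 0 < rad n := by
  intro n
  induction n using Nat.strong_induction_on with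
  | _ n ih =>
    match n with
    | 0 => rw [rad]; norm_num
    | (m+1) =>
      rw [rad]
      exact mul_pos (ih _ (Nat.lt_succ_of_le (Nat.unpair_left_le m))) (by positivity)

lemma pow_half_le (b : ℕ) : ((2:ℝ)⁻¹) ^ (b + 2) ≤ 4⁻¹ := by
  have h1 : ((2:ℝ)⁻¹) ^ b ≤ 1 := pow_le_one₀ (by norm_num) (by norm_num)
  have : ((2:ℝ)⁻¹) ^ (b + 2) = ((2:ℝ)⁻¹) ^ b * 4⁻¹ := by ring
  rw [this]; nlinarith

section Tree
variable {X : Type} [MetricSpace X]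

lemma pick_exists {Q : Set X} (hQ : Preperfect Q) {x : X} (hx : x ∈ Q) {ε : ℝ} (hε : 0 < ε)
    {A : Set X} (hA : A.Finite) : ∃ y, y ∈ Q ∧ dist y x < ε ∧ y ∉ A := by
  have hacc := hQ x hx
  rw [accPt_iff_nhds] at hacc
  have hU : (Metric.ball x ε \ (A \ {x})) ∈ nhds x := by
    apply IsOpen.mem_nhds (Metric.isOpen_ball.sdiff (hA.subset diff_subset).isClosed)
    exact ⟨Metric.mem_ball_self hε, fun h => h.2 rfl⟩
  obtain ⟨y, ⟨⟨hyb, hyA⟩, hyQ⟩, hyx⟩ := hacc _ hU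
  exact ⟨y, hyQ, by simpa [Metric.mem_ball] using hyb, fun hy => hyA ⟨hy, hyx⟩⟩

noncomputable def pickFn {Q : Set X} (hQ : Preperfect Q) (x : {y // y ∈ Q}) (ε : ℝ)
    (hε : 0 < ε) (A : Set X) (hA : A.Finite) : {y // y ∈ Q} :=
  ⟨(pick_exists hQ x.2 hε hA).choose, (pick_exists hQ x.2 hε hA).choose_spec.1⟩

lemma pickFn_dist {Q : Set X} (hQ : Preperfect Q) (x : {y // y ∈ Q}) (ε : ℝ)
    (hε : 0 < ε) (A : Set X) (hA : A.Finite) :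
    dist (pickFn hQ x ε hε A hA : X) (x : X) < ε :=
  (pick_exists hQ x.2 hε hA).choose_spec.2.1

lemma pickFn_notmem {Q : Set X} (hQ : Preperfect Q) (x : {y // y ∈ Q}) (ε : ℝ)
    (hε : 0 < ε) (A : Set X) (hA : A.Finite) :
    (pickFn hQ x ε hε A hA : X) ∉ A :=
  (pick_exists hQ x.2 hε hA).choose_spec.2.2

noncomputable def lab {Q : Set X} (hQne : Q.Nonempty) (hQ : Preperfect Q) : ℕ → {y // y ∈ Q}
  | 0 => ⟨hQne.choose, hQne.choose_spec⟩
  | (m+1) => pickFn hQ (lab hQne hQ (Nat.unpair m).1) (rad (m+1)) (rad_pos (m+1))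
      (Set.range (fun k : Fin (m+1) => (lab hQne hQ k.1 : X))) (Set.finite_range _)
decreasing_by
  all_goals first
    | exact Nat.lt_succ_of_le (Nat.unpair_left_le m)
    | exact k.isLt

variable {Q : Set X} (hQne : Q.Nonempty) (hQ : Preperfect Q)

lemma lab_dist (m : ℕ) :
    dist (lab hQne hQ (m+1) : X) (lab hQne hQ (Nat.unpair m).1 : X) < rad (m+1) := by
  rw [lab]
  exact pickFn_dist ..

lemma lab_ne (m k : ℕ) (hk : k < m + 1) : (lab hQne hQ (m+1) : X) ≠ (lab hQne hQ k : X) := by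
  intro h
  have := pickFn_notmem hQ (lab hQne hQ (Nat.unpair m).1) (rad (m+1)) (rad_pos (m+1))
      (Set.range (fun j : Fin (m+1) => (lab hQne hQ j.1 : X))) (Set.finite_range _)
  rw [← lab] at this
  exact this ⟨⟨k, hk⟩, h.symm⟩

lemma lab_inj : Function.Injective (fun n => (lab hQne hQ n : X)) := by
  have key : ∀ a b : ℕ, a < b → (lab hQne hQ b : X) ≠ (lab hQne hQ a : X) := by
    intro a b hab
    obtain ⟨m, rfl⟩ := Nat.exists_eq_add_of_lt hab
    exact lab_ne hQne hQ (a + m) a (by omega)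
  intro a b hab
  rcases lt_trichotomy a b with h | h | h
  · exact absurd hab.symm (key a b h)
  · exact h
  · exact absurd hab (key b a h)

def brc (g : ℕ → ℕ) : ℕ → ℕ
  | 0 => 0
  | (k+1) => Nat.pair (brc g k) (g k) + 1

lemma rad_brc (g : ℕ → ℕ) (k : ℕ) :
    rad (brc g (k+1)) = rad (brc g k) * (2⁻¹) ^ (g k + 2) := by
  show rad (Nat.pair (brc g k) (g k) + 1) = _
  rw [rad, Nat.unpair_pair]

lemma rad_brc_le (g : ℕ → ℕ) (k : ℕ) : rad (brc g k) ≤ (4⁻¹ : ℝ) ^ k := by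
  induction k with
  | zero => rw [show brc g 0 = 0 from rfl, rad]; norm_num
  | succ k ih =>
    rw [rad_brc]
    have h4 : (4:ℝ)⁻¹ ^ (k+1) = 4⁻¹ ^ k * 4⁻¹ := pow_succ _ _
    have h1 := pow_half_le (g k)
    have h2 := rad_pos (brc g k)
    have h3 : (0:ℝ) ≤ 4⁻¹ ^ k := by positivity
    nlinarith [pow_pos (show (0:ℝ) < 2⁻¹ by norm_num) (g k + 2)]

lemma rad_brc_quarter (g : ℕ → ℕ) (k : ℕ) :
    rad (brc g (k+1)) ≤ rad (brc g k) * 4⁻¹ := by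
  rw [rad_brc]
  exact mul_le_mul_of_nonneg_left (pow_half_le _) (rad_pos _).le

lemma dist_brc (g : ℕ → ℕ) (k : ℕ) :
    dist (lab hQne hQ (brc g (k+1)) : X) (lab hQne hQ (brc g k) : X) < rad (brc g (k+1)) := by
  have := lab_dist hQne hQ (Nat.pair (brc g k) (g k))
  rw [Nat.unpair_pair] at this
  exact this

lemma chain_bound (g : ℕ → ℕ) : ∀ d k,
    dist (lab hQne hQ (brc g (k+d)) : X) (lab hQne hQ (brc g k) : X) ≤ rad (brc g k) / 2 := by
  intro d
  induction d with
  | zero => intro k; simp only [Nat.add_zero, dist_self]; linarith [rad_pos (brc g k)]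
  | succ d ih =>
    intro k
    have h1 : dist (lab hQne hQ (brc g (k+(d+1))) : X) (lab hQne hQ (brc g (k+1)) : X)
        ≤ rad (brc g (k+1)) / 2 := by
      have := ih (k+1)
      rwa [show k + 1 + d = k + (d+1) by omega] at this
    have h2 := dist_brc hQne hQ g k
    have h3 := rad_brc_quarter g k
    have h4 := (rad_pos (brc g k)).le
    calc dist (lab hQne hQ (brc g (k+(d+1))) : X) (lab hQne hQ (brc g k) : X)
        ≤ dist (lab hQne hQ (brc g (k+(d+1))) : X) (lab hQne hQ (brc g (k+1)) : X)
          + dist (lab hQne hQ (brc g (k+1)) : X) (lab hQne hQ (brc g k) : X) := dist_triangle _ _ _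
      _ ≤ rad (brc g (k+1)) / 2 + rad (brc g (k+1)) := by linarith
      _ ≤ rad (brc g k) / 2 := by nlinarith

variable [CompleteSpace X]

lemma exists_lim (g : ℕ → ℕ) :
    ∃ z : X, Tendsto (fun k => (lab hQne hQ (brc g k) : X)) atTop (nhds z) := by
  apply cauchySeq_tendsto_of_complete
  apply cauchySeq_of_le_geometric (4⁻¹ : ℝ) 1 (by norm_num)
  intro k
  rw [dist_comm]
  calc dist (lab hQne hQ (brc g (k+1)) : X) (lab hQne hQ (brc g k) : X)
      ≤ rad (brc g (k+1)) := (dist_brc hQne hQ g k).le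
    _ ≤ (4⁻¹ : ℝ) ^ (k+1) := rad_brc_le g (k+1)
    _ ≤ 1 * (4⁻¹ : ℝ) ^ k := by rw [pow_succ]; nlinarith [pow_pos (show (0:ℝ) < 4⁻¹ by norm_num) k]

lemma dist_lim (g : ℕ → ℕ) {z : X}
    (hz : Tendsto (fun k => (lab hQne hQ (brc g k) : X)) atTop (nhds z)) (k : ℕ) :
    dist z (lab hQne hQ (brc g k) : X) ≤ rad (brc g k) / 2 := by
  have h1 : Tendsto (fun d => dist ((lab hQne hQ (brc g (d+k)) : X)) (lab hQne hQ (brc g k) : X))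
      atTop (nhds (dist z (lab hQne hQ (brc g k) : X))) :=
    ((hz.comp (tendsto_add_atTop_nat k)).dist tendsto_const_nhds)
  apply le_of_tendsto h1
  filter_upwards with d
  rw [Nat.add_comm d k]
  exact chain_bound hQne hQ g d k

end Tree

lemma lvl_brc (g : ℕ → ℕ) (k : ℕ) : lvl (brc g k) = k := by
  induction k with
  | zero => show lvl 0 = 0; simp [lvl]
  | succ k ih =>
    show lvl (Nat.pair (brc g k) (g k) + 1) = k + 1
    rw [lvl, Nat.unpair_pair, ih]

lemma brc_le_psi (g : ℕ → ℕ) (M k : ℕ) (h : ∀ j, j < k → g j ≤ M) : brc g k ≤ psi k M := by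
  induction k with
  | zero => exact le_refl 0
  | succ k ih =>
    show Nat.pair (brc g k) (g k) + 1 ≤ Nat.pair (psi k M) M + 1
    have := ih (fun j hj => h j (by omega))
    exact Nat.succ_le_succ (pair_mono this (h k (by omega)))

lemma exM {r δ : ℝ} (hr : 0 < r) (hδ : 0 < δ) :
    ∃ M : ℕ, (3/2) * r * ((2:ℝ)⁻¹) ^ (M + 2) < δ := by
  obtain ⟨M, hM⟩ := exists_pow_lt_of_lt_one
    (show 0 < δ / ((3/2) * r) by positivity) (show ((2:ℝ)⁻¹) < 1 by norm_num)
  refine ⟨M, ?_⟩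
  rw [lt_div_iff₀ (by positivity)] at hM
  have h2 : ((2:ℝ)⁻¹) ^ (M + 2) ≤ ((2:ℝ)⁻¹) ^ M :=
    pow_le_pow_of_le_one (by norm_num) (by norm_num) (by omega)
  nlinarith [pow_pos (show (0:ℝ) < 2⁻¹ by norm_num) M]

lemma avoid {X : Type} [MetricSpace X] [CompleteSpace X]
    {Q : Set X} (hQne : Q.Nonempty) (hQ : Preperfect Q)
    {J : Type} (hJ : Cardinal.mk (J × ℕ) < dNumber)
    (C : J → Set X) (hCcl : ∀ j, IsClosed (C j)) (hCQ : ∀ j, (C j ∩ Q).Finite) :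
    ∃ z ∈ closure Q, ∀ j, z ∉ C j := by
  classical
  -- the threshold functions
  have hfC : ∀ (j : J) (m : ℕ), ∃ Mv : ℕ, ∀ (_ : (C j).Nonempty),
      (lab hQne hQ m : X) ∉ C j →
      (3/2) * rad m * ((2:ℝ)⁻¹) ^ (Mv + 2) < Metric.infDist ((lab hQne hQ m : X)) (C j) := by
    intro j m
    by_cases h : 0 < Metric.infDist ((lab hQne hQ m : X)) (C j)
    · obtain ⟨M, hM⟩ := exM (rad_pos m) h
      exact ⟨M, fun _ _ => hM⟩
    · refine ⟨0, fun hn hnm => absurd ?_ h⟩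
      exact ((hCcl j).notMem_iff_infDist_pos hn).1 hnm
  choose fC hfC using hfC
  -- level bounds
  have hLex : ∀ j : J, ∃ L, ∀ m, (lab hQne hQ m : X) ∈ C j → lvl m ≤ L := by
    intro j
    have hSfin : {m : ℕ | (lab hQne hQ m : X) ∈ C j}.Finite := by
      have heq : {m : ℕ | (lab hQne hQ m : X) ∈ C j}
          = (fun m => (lab hQne hQ m : X)) ⁻¹' (C j ∩ Q) := by
        ext m; simp only [mem_setOf_eq, mem_preimage, mem_inter_iff]
        exact ⟨fun h => ⟨h, (lab hQne hQ m).2⟩, fun h => h.1⟩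
      rw [heq]
      exact (hCQ j).preimage ((lab_inj hQne hQ).injOn)
    obtain ⟨L, hL⟩ := (hSfin.image lvl).bddAbove
    exact ⟨L, fun m hm => hL (Set.mem_image_of_mem _ hm)⟩
  choose Lf hLf using hLex
  -- the recursive bound functions
  set Bf : J → ℕ → ℕ → ℕ := fun j v => Nat.rec v
    (fun k B => max B ((Finset.range (psi (k+1) B + 1)).sup (fC j))) with hBf
  have hBmono : ∀ j v, Monotone (Bf j v) :=
    fun j v => monotone_nat_of_le_succ (fun k => le_max_left _ _)
  obtain ⟨g, hg⟩ := escape_lemma hJ (fun p => Bf p.1 p.2)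
  obtain ⟨z, hz⟩ := exists_lim hQne hQ g
  refine ⟨z, mem_closure_of_tendsto hz (Eventually.of_forall fun k => (lab hQne hQ _).2), ?_⟩
  intro j hzC
  have hCne : (C j).Nonempty := ⟨z, hzC⟩
  -- the trap
  have trap : ∀ k, (lab hQne hQ (brc g k) : X) ∉ C j → g k < fC j (brc g k) := by
    intro k hnm
    by_contra hge
    push_neg at hge
    have hδ := hfC j (brc g k) hCne hnm
    have hd1 : Metric.infDist ((lab hQne hQ (brc g k) : X)) (C j)
        ≤ dist ((lab hQne hQ (brc g k) : X)) z := Metric.infDist_le_dist_of_mem hzC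
    have hd2 : dist ((lab hQne hQ (brc g k) : X)) z
        ≤ dist ((lab hQne hQ (brc g (k+1)) : X)) ((lab hQne hQ (brc g k) : X))
          + dist z ((lab hQne hQ (brc g (k+1)) : X)) := by
      calc dist ((lab hQne hQ (brc g k) : X)) z
          ≤ dist ((lab hQne hQ (brc g k) : X)) ((lab hQne hQ (brc g (k+1)) : X))
            + dist ((lab hQne hQ (brc g (k+1)) : X)) z := dist_triangle _ _ _
        _ = dist ((lab hQne hQ (brc g (k+1)) : X)) ((lab hQne hQ (brc g k) : X))
            + dist z ((lab hQne hQ (brc g (k+1)) : X)) := by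
            rw [dist_comm ((lab hQne hQ (brc g k) : X)), dist_comm z]
    have hd3 := (dist_brc hQne hQ g k).le
    have hd4 := dist_lim hQne hQ g hz (k+1)
    have hr1 : rad (brc g (k+1)) = rad (brc g k) * ((2:ℝ)⁻¹) ^ (g k + 2) := rad_brc g k
    have hpow : ((2:ℝ)⁻¹) ^ (g k + 2) ≤ ((2:ℝ)⁻¹) ^ (fC j (brc g k) + 2) :=
      pow_le_pow_of_le_one (by norm_num) (by norm_num) (by omega)
    have hrp := rad_pos (brc g k)
    nlinarith
  -- the bound
  set v := (Finset.range (Lf j + 1)).sup g with hv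
  have hbound : ∀ k, g k ≤ Bf j v k := by
    intro k
    induction k using Nat.strong_induction_on with
    | _ k ih =>
      match k with
      | 0 => exact Finset.le_sup (f := g) (Finset.mem_range.2 (by omega))
      | (k+1) =>
        by_cases hk : k + 1 ≤ Lf j
        · calc g (k+1) ≤ v := Finset.le_sup (f := g) (Finset.mem_range.2 (Nat.lt_succ_of_le hk))
            _ = Bf j v 0 := rfl
            _ ≤ Bf j v (k+1) := hBmono j v (Nat.zero_le (k+1))
        · have hnm : (lab hQne hQ (brc g (k+1)) : X) ∉ C j := by
            intro hmem
            have := hLf j _ hmem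
            rw [lvl_brc] at this
            omega
          have h1 := trap (k+1) hnm
          have h2 : brc g (k+1) ≤ psi (k+1) (Bf j v k) := by
            apply brc_le_psi
            intro jj hjj
            exact (ih jj (by omega)).trans (hBmono j v (by omega))
          have h3 : fC j (brc g (k+1)) ≤ (Finset.range (psi (k+1) (Bf j v k) + 1)).sup (fC j) :=
            Finset.le_sup (Finset.mem_range.2 (by omega))
          have h4 : (Finset.range (psi (k+1) (Bf j v k) + 1)).sup (fC j) ≤ Bf j v (k+1) :=
            le_max_right _ _
          omega
  obtain ⟨m, hm⟩ := hg (j, v)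
  exact absurd (hbound m) (by simpa using Nat.not_le.2 hm)

lemma gdelta_compl_pieces {X : Type} [TopologicalSpace X] {D : Set X} (hD : IsGδ D) :
    ∃ f : ℕ → Set X, (∀ k, IsClosed (f k)) ∧ Dᶜ = ⋃ k, f k := by
  obtain ⟨f, hfo, rfl⟩ := hD.eq_iInter_nat
  exact ⟨fun k => (f k)ᶜ, fun k => (hfo k).isClosed_compl, by rw [Set.compl_iInter]⟩

lemma snoc_injective {X : Type} {ℓ : ℕ} {y : Fin ℓ → X} {w : X}
    (hy : Function.Injective y) (hw : w ∉ Set.range y) :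
    Function.Injective (Fin.snoc y w : Fin (ℓ+1) → X) := by
  intro a b hab
  rcases eq_or_ne a (Fin.last ℓ) with rfl | ha
  · rcases eq_or_ne b (Fin.last ℓ) with rfl | hb
    · rfl
    · obtain ⟨b', rfl⟩ := Fin.exists_castSucc_eq.2 hb
      rw [Fin.snoc_last, Fin.snoc_castSucc] at hab
      exact (hw ⟨b', hab.symm⟩).elim
  · obtain ⟨a', rfl⟩ := Fin.exists_castSucc_eq.2 ha
    rcases eq_or_ne b (Fin.last ℓ) with rfl | hb
    · rw [Fin.snoc_last, Fin.snoc_castSucc] at hab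
      exact (hw ⟨a', hab⟩).elim
    · obtain ⟨b', rfl⟩ := Fin.exists_castSucc_eq.2 hb
      rw [Fin.snoc_castSucc, Fin.snoc_castSucc] at hab
      rw [hy hab]

open Filter Set in
theorem key_extension_lemma {X : Type} [TopologicalSpace X] [PolishSpace X] [Nonempty X]
    (hX : Perfect (Set.univ : Set X))
    -- A non-empty collection of symmetric meager `F_σ` relations `R i ⊆ X^{n i + 1}`,
    -- of size `< 𝔡`:
    {ι : Type} [Nonempty ι] (hι : Cardinal.mk ι < dNumber)
    (n : ι → ℕ) (R : ∀ i, Set (Fin (n i + 1) → X))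
    (hsym : ∀ i, PermSymmetric (R i)) (hmeager : ∀ i, IsMeagre (R i))
    (hFsigma : ∀ i, IsFsigma (R i))
    -- The fixed system of sets `G^{ℓ+1}_{R i}` for `0 ≤ ℓ ≤ n i`:
    (G : ∀ i, ∀ ℓ : ℕ, ℓ ≤ n i → Set (Fin (ℓ + 1) → X))
    (hGtop : ∀ i, G i (n i) le_rfl = (R i)ᶜ)
    (hGsym : ∀ i ℓ (h : ℓ ≤ n i), PermSymmetric (G i ℓ h))
    (hGdense : ∀ i ℓ (h : ℓ ≤ n i), Dense (G i ℓ h) ∧ IsGδ (G i ℓ h))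
    (hGsec : ∀ i ℓ (h : ℓ < n i), ∀ x ∈ G i ℓ h.le,
      Dense {z : X | Fin.snoc x z ∈ G i (ℓ + 1) h} ∧
        IsGδ {z : X | Fin.snoc x z ∈ G i (ℓ + 1) h})
    -- `F` of size `< 𝔡`, `Q ⊆ F` countable and crowded, satisfying `⊛(F, 𝓡)`:
    (F : Set X) (hFcard : Cardinal.mk F < dNumber)
    (Q : Set X) (hQF : Q ⊆ F) (hQcount : Q.Countable)
    (hQcrowded : Q.Nonempty ∧ Preperfect Q)
    (hstar : ∀ i ℓ (h : ℓ ≤ n i), ∀ x : Fin (ℓ + 1) → X,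
      Function.Injective x → (∀ k, x k ∈ F) → x ∈ G i ℓ h) :
    ∃ z ∈ closure Q \ Q,
      (∀ i ℓ (h : ℓ ≤ n i), ∀ x : Fin (ℓ + 1) → X,
        Function.Injective x → (∀ k, x k ∈ F ∪ {z}) → x ∈ G i ℓ h) ∧
      ∀ i (x : Fin (n i + 1) → X), Function.Injective x →
        (∀ k, x k ∈ F ∪ {z}) → x ∉ R i := by
  classical
  obtain ⟨hQne, hQpre⟩ := hQcrowded
  letI := TopologicalSpace.upgradeIsCompletelyMetrizable X
  -- level-0 pieces
  have h0 : ∀ i : ι, ∃ f : ℕ → Set X, (∀ k, IsClosed (f k)) ∧ (∀ k, (f k ∩ Q).Finite) ∧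
      (∀ w : X, (∀ k, w ∉ f k) → (fun _ : Fin 1 => w) ∈ G i 0 (Nat.zero_le _)) := by
    intro i
    have hGδ : IsGδ {w : X | (fun _ : Fin 1 => w) ∈ G i 0 (Nat.zero_le _)} := by
      have hcont : Continuous (fun (w : X) (_ : Fin 1) => w) :=
        continuous_pi (fun _ => continuous_id)
      obtain ⟨f, hfo, hfe⟩ := (hGdense i 0 (Nat.zero_le _)).2.eq_iInter_nat
      have : {w : X | (fun _ : Fin 1 => w) ∈ G i 0 (Nat.zero_le _)}
          = ⋂ k, (fun (w : X) (_ : Fin 1) => w) ⁻¹' (f k) := by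
        rw [show {w : X | (fun _ : Fin 1 => w) ∈ G i 0 (Nat.zero_le _)}
            = (fun (w : X) (_ : Fin 1) => w) ⁻¹' (G i 0 (Nat.zero_le _)) from rfl, hfe,
          Set.preimage_iInter]
      rw [this]
      exact IsGδ.iInter (fun k => ((hfo k).preimage hcont).isGδ)
    obtain ⟨f, hfc, hfe⟩ := gdelta_compl_pieces hGδ
    refine ⟨f, hfc, ?_, ?_⟩
    · intro k
      apply Set.Finite.subset Set.finite_empty
      rintro x ⟨hx1, hx2⟩
      haveI hss : Subsingleton (Fin (0+1)) := ⟨fun a b => Fin.ext (by omega)⟩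
      have hxD : (fun _ : Fin 1 => x) ∈ G i 0 (Nat.zero_le _) :=
        hstar i 0 _ _ (Function.injective_of_subsingleton _) (fun _ => hQF hx2)
      have hxc : x ∈ {w : X | (fun _ : Fin 1 => w) ∈ G i 0 (Nat.zero_le _)}ᶜ := by
        rw [hfe]; exact Set.mem_iUnion.2 ⟨k, hx1⟩
      exact (hxc hxD).elim
    · intro w hw
      by_contra hnD
      have : w ∈ ⋃ k, f k := by rw [← hfe]; exact hnD
      obtain ⟨k, hk⟩ := Set.mem_iUnion.1 this
      exact hw k hk
  -- positive-level pieces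
  have hpos : ∀ (i : ι) (ℓ' : ℕ) (y : Fin (ℓ'+1) → F),
      ∃ f : ℕ → Set X, (∀ k, IsClosed (f k)) ∧ (∀ k, (f k ∩ Q).Finite) ∧
      (∀ (h : ℓ' + 1 ≤ n i), Function.Injective (fun j => (y j : X)) →
        ∀ w : X, (∀ k, w ∉ f k) → Fin.snoc (fun j => (y j : X)) w ∈ G i (ℓ'+1) h) := by
    intro i ℓ' y
    by_cases hval : ℓ' + 1 ≤ n i ∧ Function.Injective (fun j => (y j : X))
    · obtain ⟨hle, hinj⟩ := hval
      have hlt : ℓ' < n i := hle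
      have hy : (fun j => (y j : X)) ∈ G i ℓ' hlt.le :=
        hstar i ℓ' _ _ hinj (fun k => (y k).2)
      obtain ⟨f, hfc, hfe⟩ := gdelta_compl_pieces (hGsec i ℓ' hlt _ hy).2
      refine ⟨f, hfc, ?_, ?_⟩
      · intro k
        apply Set.Finite.subset (Set.finite_range (fun j => (y j : X)))
        rintro x ⟨hx1, hx2⟩
        by_contra hxr
        have hxin : Fin.snoc (fun j => (y j : X)) x ∈ G i (ℓ'+1) hlt := by
          apply hstar i (ℓ'+1) hle
          · exact snoc_injective hinj hxr
          · intro k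
            refine Fin.lastCases ?_ ?_ k
            · rw [Fin.snoc_last]; exact hQF hx2
            · intro j; rw [Fin.snoc_castSucc]; exact (y j).2
        have hxc : x ∈ {w : X | Fin.snoc (fun j => (y j : X)) w ∈ G i (ℓ'+1) hlt}ᶜ := by
          rw [hfe]; exact Set.mem_iUnion.2 ⟨k, hx1⟩
        exact (hxc hxin).elim
      · intro h hinj' w hw
        by_contra hnD
        have : w ∈ ⋃ k, f k := by rw [← hfe]; exact hnD
        obtain ⟨k, hk⟩ := Set.mem_iUnion.1 this
        exact hw k hk
    · exact ⟨fun _ => ∅, fun _ => isClosed_empty, fun _ => by simp,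
        fun h hinj => absurd ⟨h, hinj⟩ hval⟩
  choose P0 hP0c hP0Q hP0G using h0
  choose P1 hP1c hP1Q hP1G using hpos
  -- index cardinality
  have hdpos : Cardinal.aleph0 < dNumber := aleph0_lt_dNumber
  set c₀ : Cardinal := max Cardinal.aleph0 (Cardinal.mk F) with hc₀def
  have hc₀lt : c₀ < dNumber := max_lt hdpos hFcard
  have hc₀inf : Cardinal.aleph0 ≤ c₀ := le_max_left _ _
  have hT : Cardinal.mk (Σ i : ι, Σ ℓ' : ℕ, (Fin (ℓ'+1) → F)) < dNumber := by
    have h1 : ∀ ℓ' : ℕ, Cardinal.mk (Fin (ℓ'+1) → F) ≤ c₀ := by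
      intro ℓ'
      have e1 : Cardinal.mk (Fin (ℓ'+1) → F) = (Cardinal.mk F) ^ (ℓ'+1 : ℕ) := by
        rw [← Cardinal.power_def, Cardinal.mk_fin, Cardinal.power_natCast]
      rw [e1]
      calc (Cardinal.mk F) ^ (ℓ'+1 : ℕ) ≤ c₀ ^ (ℓ'+1 : ℕ) :=
            pow_le_pow_left₀ zero_le (le_max_right _ _) _
        _ = c₀ := Cardinal.power_nat_eq hc₀inf (by omega)
    have h2 : ∀ i : ι, Cardinal.mk (Σ ℓ' : ℕ, (Fin (ℓ'+1) → F)) ≤ Cardinal.aleph0 * c₀ := by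
      intro i
      rw [Cardinal.mk_sigma]
      calc Cardinal.sum (fun ℓ' => Cardinal.mk (Fin (ℓ'+1) → F))
          ≤ Cardinal.sum (fun _ : ℕ => c₀) := Cardinal.sum_le_sum _ _ (fun ℓ' => h1 ℓ')
        _ = Cardinal.mk ℕ * c₀ := Cardinal.sum_const' _ _
        _ = Cardinal.aleph0 * c₀ := by rw [Cardinal.mk_nat]
    calc Cardinal.mk (Σ i : ι, Σ ℓ' : ℕ, (Fin (ℓ'+1) → F))
        = Cardinal.sum (fun i : ι => Cardinal.mk (Σ ℓ' : ℕ, (Fin (ℓ'+1) → F))) :=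
          Cardinal.mk_sigma _
      _ ≤ Cardinal.sum (fun _ : ι => Cardinal.aleph0 * c₀) :=
          Cardinal.sum_le_sum _ _ h2
      _ = Cardinal.mk ι * (Cardinal.aleph0 * c₀) := Cardinal.sum_const' _ _
      _ < dNumber := Cardinal.mul_lt_of_lt hdpos.le hι
          (Cardinal.mul_lt_of_lt hdpos.le hdpos hc₀lt)
  have hJcard : Cardinal.mk ((((Q : Set X) : Type) ⊕ (ι × ℕ)) ⊕
      ((Σ i : ι, Σ ℓ' : ℕ, (Fin (ℓ'+1) → F)) × ℕ) × ℕ) < dNumber := by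
    have hQcard : Cardinal.mk Q < dNumber :=
      lt_of_le_of_lt (Cardinal.mk_le_aleph0_iff.2 hQcount.to_subtype) hdpos
    have hιℕ : Cardinal.mk (ι × ℕ) < dNumber := by
      rw [Cardinal.mk_prod, Cardinal.lift_id, Cardinal.lift_id, Cardinal.mk_nat]
      exact Cardinal.mul_lt_of_lt hdpos.le hι hdpos
    have hTℕ : Cardinal.mk ((Σ i : ι, Σ ℓ' : ℕ, (Fin (ℓ'+1) → F)) × ℕ) < dNumber := by
      rw [Cardinal.mk_prod, Cardinal.lift_id, Cardinal.lift_id, Cardinal.mk_nat]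
      exact Cardinal.mul_lt_of_lt hdpos.le hT hdpos
    have hTℕℕ : Cardinal.mk (((Σ i : ι, Σ ℓ' : ℕ, (Fin (ℓ'+1) → F)) × ℕ) × ℕ) < dNumber := by
      rw [Cardinal.mk_prod, Cardinal.lift_id, Cardinal.lift_id, Cardinal.mk_nat]
      exact Cardinal.mul_lt_of_lt hdpos.le hTℕ hdpos
    rw [Cardinal.mk_sum, Cardinal.lift_id, Cardinal.lift_id]
    apply Cardinal.add_lt_of_lt hdpos.le _ hTℕℕ
    rw [Cardinal.mk_sum, Cardinal.lift_id, Cardinal.lift_id]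
    exact Cardinal.add_lt_of_lt hdpos.le hQcard hιℕ
  -- apply the avoidance machinery
  have hJcard' : Cardinal.mk (((((Q : Set X) : Type) ⊕ (ι × ℕ)) ⊕
      ((Σ i : ι, Σ ℓ' : ℕ, (Fin (ℓ'+1) → F)) × ℕ)) × ℕ) < dNumber := by
    rw [Cardinal.mk_prod, Cardinal.lift_id, Cardinal.lift_id, Cardinal.mk_nat]
    refine Cardinal.mul_lt_of_lt hdpos.le ?_ hdpos
    rw [Cardinal.mk_sum, Cardinal.lift_id, Cardinal.lift_id]
    apply Cardinal.add_lt_of_lt hdpos.le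
    · rw [Cardinal.mk_sum, Cardinal.lift_id, Cardinal.lift_id]
      apply Cardinal.add_lt_of_lt hdpos.le
      · exact lt_of_le_of_lt (Cardinal.mk_le_aleph0_iff.2 hQcount.to_subtype) hdpos
      · rw [Cardinal.mk_prod, Cardinal.lift_id, Cardinal.lift_id, Cardinal.mk_nat]
        exact Cardinal.mul_lt_of_lt hdpos.le hι hdpos
    · rw [Cardinal.mk_prod, Cardinal.lift_id, Cardinal.lift_id, Cardinal.mk_nat]
      exact Cardinal.mul_lt_of_lt hdpos.le hT hdpos
  obtain ⟨z, hzcl, hzav⟩ := avoid hQne hQpre hJcard'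
    (C := fun j => Sum.elim
      (Sum.elim (fun q : Q => ({(q : X)} : Set X)) (fun p : ι × ℕ => P0 p.1 p.2))
      (fun p : (Σ i : ι, Σ ℓ' : ℕ, (Fin (ℓ'+1) → F)) × ℕ => P1 p.1.1 p.1.2.1 p.1.2.2 p.2) j)
    (by
      rintro ((q | ⟨i, k⟩) | ⟨t, k⟩)
      · exact isClosed_singleton
      · exact hP0c i k
      · exact hP1c t.1 t.2.1 t.2.2 k)
    (by
      rintro ((q | ⟨i, k⟩) | ⟨t, k⟩)
      · exact (Set.finite_singleton _).subset Set.inter_subset_left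
      · exact hP0Q i k
      · exact hP1Q t.1 t.2.1 t.2.2 k)
  have hzQ : z ∉ Q := fun hzQ => hzav (Sum.inl (Sum.inl ⟨z, hzQ⟩)) rfl
  -- the extended star property
  have star' : ∀ i ℓ (h : ℓ ≤ n i), ∀ x : Fin (ℓ + 1) → X,
      Function.Injective x → (∀ k, x k ∈ F ∪ {z}) → x ∈ G i ℓ h := by
    intro i ℓ h x hinj hval
    haveI hss : Subsingleton (Fin (0+1)) := ⟨fun a b => Fin.ext (by omega)⟩
    by_cases hall : ∀ k, x k ∈ F
    · exact hstar i ℓ h x hinj hall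
    · push_neg at hall
      obtain ⟨k₀, hk₀⟩ := hall
      have hxk₀ : x k₀ = z := by
        rcases hval k₀ with h' | h'
        · exact absurd h' hk₀
        · exact h'
      have hothers : ∀ k, k ≠ k₀ → x k ∈ F := by
        intro k hk
        rcases hval k with h' | h'
        · exact h'
        · exact absurd (hinj ((Set.mem_singleton_iff.1 h').trans hxk₀.symm)) hk
      set π := Equiv.swap k₀ (Fin.last ℓ) with hπ
      set x' := x ∘ π with hx'def
      have hx'last : x' (Fin.last ℓ) = z := by
        simp only [hx'def, Function.comp_apply, hπ, Equiv.swap_apply_right]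
        exact hxk₀
      have hx'inj : Function.Injective x' := hinj.comp π.injective
      have hx'F : ∀ k, k ≠ Fin.last ℓ → x' k ∈ F := by
        intro k hk
        apply hothers
        intro heq
        apply hk
        have : π k = π (Fin.last ℓ) := by rw [heq, hπ]; simp [Equiv.swap_apply_right]
        exact π.injective this
      have hx'G : x' ∈ G i ℓ h := by
        cases ℓ with
        | zero =>
          have hz0 : (fun _ : Fin 1 => z) ∈ G i 0 (Nat.zero_le _) := by
            apply hP0G i
            intro k
            exact hzav (Sum.inl (Sum.inr (i, k)))
          have hxz : x' = fun _ : Fin 1 => z := by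
            funext k
            rw [Subsingleton.elim k (Fin.last 0)]
            exact hx'last
          rw [hxz]
          exact hz0
        | succ ℓ' =>
          set y : Fin (ℓ'+1) → X := Fin.init x' with hydef
          have hyF : ∀ j, y j ∈ F := fun j => hx'F _ (Fin.castSucc_lt_last j).ne
          have hyinj : Function.Injective y := by
            intro a b hab
            exact Fin.castSucc_injective _ (hx'inj hab)
          set yE : Fin (ℓ'+1) → F := fun j => ⟨y j, hyF j⟩ with hyEdef
          have hz1 : Fin.snoc (fun j => ((yE j : X))) z ∈ G i (ℓ'+1) h := by
            apply hP1G i ℓ' yE h hyinj z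
            intro k
            exact hzav (Sum.inr (⟨i, ℓ', yE⟩, k))
          have hxs : Fin.snoc y z = x' := by
            rw [← hx'last, hydef]
            exact Fin.snoc_init_self x'
          rw [← hxs]
          exact hz1
      have hback := hGsym i ℓ h π x' hx'G
      have hxx : x' ∘ π = x := by
        funext k
        simp only [hx'def, Function.comp_apply, hπ]
        rw [Equiv.swap_apply_self]
      rwa [hxx] at hback
  refine ⟨z, ⟨hzcl, hzQ⟩, star', ?_⟩
  intro i x hinj hval hR
  have := star' i (n i) le_rfl x hinj hval
  rw [hGtop i] at this
  exact this hR
end
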